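/- arXiv:1303.4238 — 10 statements merged into one kernel-verified Lean document; each statement's English description precedes it below -/
import Mathlib

section
/- Let X = 𝕋 be the circle group and let α_{ij} (i,j = 1,2,3) be topological automorphisms of 𝕋. Let ξ_1, ξ_2, ξ_3 be independent 𝕋-valued random variables with distributions μ_1, μ_2, μ_3 whose characteristic functions μ̂_i(n) = ∫_𝕋 (x,n) dμ_i(x), n ∈ ℤ, do not vanish anywhere. If the linear forms L_j = Σ_{i=1}^3 α_{ij}ξ_i (j = 1,2,3) are mutually independent, then each μ_i is a degenerate distribution: μ_i = E_{x_i} for some x_i ∈ 𝕋. -/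
open MeasureTheory ProbabilityTheory Complex AddCircle

local instance : Fact ((0:ℝ) < 1) := ⟨one_pos⟩

/-- Expectation of a product of functions of two independent random variables. -/
lemma aux_indep_integral_mul {Ω : Type} [MeasurableSpace Ω] {P : Measure Ω}
    [IsProbabilityMeasure P] {A B : Type*} [MeasurableSpace A] [MeasurableSpace B]
    {X : Ω → A} {Y : Ω → B} (hX : Measurable X) (hY : Measurable Y)
    (h : IndepFun X Y P) {f : A → ℂ} {g : B → ℂ}
    (hf : Measurable f) (hg : Measurable g) :
    ∫ ω, f (X ω) * g (Y ω) ∂P = (∫ ω, f (X ω) ∂P) * ∫ ω, g (Y ω) ∂P := by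
  have hmap : P.map (fun ω => (X ω, Y ω)) = (P.map X).prod (P.map Y) :=
    (indepFun_iff_map_prod_eq_prod_map_map hX.aemeasurable hY.aemeasurable).mp h
  have h1 : ∫ ω, f (X ω) * g (Y ω) ∂P
      = ∫ z : A × B, f z.1 * g z.2 ∂(P.map (fun ω => (X ω, Y ω))) := by
    rw [integral_map (hX.prodMk hY).aemeasurable]
    exact ((hf.comp measurable_fst).mul (hg.comp measurable_snd)).aestronglyMeasurable
  rw [h1, hmap, integral_prod_mul, integral_map hX.aemeasurable hf.aestronglyMeasurable,
    integral_map hY.aemeasurable hg.aestronglyMeasurable]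

/-- Expectation of a product of functions of three independent random variables. -/
lemma aux_indep_integral_mul3 {Ω : Type} [MeasurableSpace Ω] {P : Measure Ω}
    [IsProbabilityMeasure P] {A : Type*} [MeasurableSpace A]
    {ξ : Fin 3 → Ω → A} (hξ : ∀ i, Measurable (ξ i))
    (hindep : iIndepFun ξ P) {f g h : A → ℂ}
    (hf : Measurable f) (hg : Measurable g) (hh : Measurable h) :
    ∫ ω, f (ξ 0 ω) * g (ξ 1 ω) * h (ξ 2 ω) ∂P
      = (∫ ω, f (ξ 0 ω) ∂P) * (∫ ω, g (ξ 1 ω) ∂P) * ∫ ω, h (ξ 2 ω) ∂P := by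
  have hpair : IndepFun (fun ω => (ξ 0 ω, ξ 1 ω)) (ξ 2) P :=
    hindep.indepFun_prodMk hξ 0 1 2 (by decide) (by decide)
  have h01 : IndepFun (ξ 0) (ξ 1) P := hindep.indepFun (by decide)
  have step1 : ∫ ω, f (ξ 0 ω) * g (ξ 1 ω) * h (ξ 2 ω) ∂P
      = (∫ ω, f (ξ 0 ω) * g (ξ 1 ω) ∂P) * ∫ ω, h (ξ 2 ω) ∂P := by
    have := aux_indep_integral_mul (P := P) ((hξ 0).prodMk (hξ 1)) (hξ 2) hpair
      (f := fun z : A × A => f z.1 * g z.2) (g := h)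
      ((hf.comp measurable_fst).mul (hg.comp measurable_snd)) hh
    simpa using this
  rw [step1, aux_indep_integral_mul (hξ 0) (hξ 1) h01 hf hg]

/-- A continuous unimodular character of the circle is a Fourier monomial. -/
lemma aux_char_eq_fourier (g : C(AddCircle (1:ℝ), ℂ))
    (hmul : ∀ x y, g (x + y) = g x * g y) (hnorm : ∀ x, ‖g x‖ = 1) :
    ∃ m : ℤ, ∀ x, g x = fourier m x := by
  have hne : ∃ m : ℤ, fourierCoeff (⇑g) m ≠ 0 := by
    by_contra hc
    push_neg at hc
    have hpars := tsum_sq_fourierCoeff (ContinuousMap.toLp (E := ℂ) 2 haarAddCircle ℂ g)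
    have h0 : ∀ i : ℤ, ‖fourierCoeff (ContinuousMap.toLp (E := ℂ) 2 haarAddCircle ℂ g : AddCircle (1:ℝ) → ℂ) i‖ ^ 2 = 0 := by
      intro i
      rw [fourierCoeff_toLp, hc i, norm_zero]
      ring
    rw [tsum_congr h0, tsum_zero] at hpars
    have hae : (ContinuousMap.toLp (E := ℂ) 2 haarAddCircle ℂ g : AddCircle (1:ℝ) → ℂ) =ᵐ[haarAddCircle] ⇑g :=
      ContinuousMap.coeFn_toLp haarAddCircle g
    have : ∫ t : AddCircle (1:ℝ), ‖(ContinuousMap.toLp (E := ℂ) 2 haarAddCircle ℂ g : AddCircle (1:ℝ) → ℂ) t‖ ^ 2 ∂haarAddCircle = 1 := by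
      have : ∫ t : AddCircle (1:ℝ), ‖(ContinuousMap.toLp (E := ℂ) 2 haarAddCircle ℂ g : AddCircle (1:ℝ) → ℂ) t‖ ^ 2 ∂haarAddCircle = ∫ _t : AddCircle (1:ℝ), (1:ℝ) ∂haarAddCircle := by
        apply integral_congr_ae
        filter_upwards [hae] with t ht
        rw [ht, hnorm t]
        norm_num
      rw [this]
      simp
    rw [this] at hpars
    norm_num at hpars
  obtain ⟨m, hm⟩ := hne
  refine ⟨m, fun y => ?_⟩
  have key : fourierCoeff (⇑g) m = (fourier (-m) y * g y) * fourierCoeff (⇑g) m := by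
    unfold fourierCoeff
    nth_rewrite 1 [← integral_add_left_eq_self (μ := haarAddCircle) (fun t => fourier (-m) t • g t) y]
    rw [← integral_const_mul]
    apply integral_congr_ae
    apply Filter.Eventually.of_forall
    intro x
    have hg' : g (y + x) = g y * g x := hmul y x
    have hf' : (fourier (-m)) ((y : AddCircle (1:ℝ)) + x) = fourier (-m) y * fourier (-m) x := by
      simp only [fourier_apply, smul_add, AddCircle.toCircle_add]
      push_cast
      ring
    simp only [hg', hf', smul_eq_mul]
    ring
  have h1 : fourier (-m) y * g y = 1 := by
    have h2 : (1 - fourier (-m) y * g y) * fourierCoeff (⇑g) m = 0 := by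
      rw [sub_mul, one_mul, ← key, sub_self]
    rcases mul_eq_zero.mp h2 with h | h
    · linear_combination -h
    · exact absurd h hm
  have hinv : fourier (-m) y * fourier m y = 1 := by
    rw [← fourier_add]
    simp
  linear_combination (fourier m y) * h1 - g y * hinv

/-- A topological automorphism of the circle is `x ↦ x` or `x ↦ -x`. -/
lemma aux_auto_classify (e : AddCircle (1:ℝ) ≃+ AddCircle (1:ℝ))
    (he : Continuous e) (he' : Continuous e.symm) :
    ∃ s : ℤ, (s = 1 ∨ s = -1) ∧ ∀ x, e x = s • x := by
  have hchar : ∀ (f : AddCircle (1:ℝ) ≃+ AddCircle (1:ℝ)), Continuous f →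
      ∃ m : ℤ, ∀ x, f x = m • x := by
    intro f hf
    obtain ⟨m, hm⟩ := aux_char_eq_fourier
      ⟨fun x => (toCircle (f x) : ℂ), by
        exact continuous_induced_dom.comp (continuous_toCircle.comp hf)⟩
      (fun x y => by
        simp only [ContinuousMap.coe_mk, map_add, toCircle_add]
        push_cast; ring)
      (fun x => Circle.norm_coe _)
    refine ⟨m, fun x => ?_⟩
    have : (toCircle (f x) : ℂ) = (toCircle (m • x) : ℂ) := by
      simpa only [fourier_apply, ContinuousMap.coe_mk] using hm x
    exact injective_toCircle one_ne_zero (Subtype.ext this)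
  obtain ⟨m, hm⟩ := hchar e he
  obtain ⟨m', hm'⟩ := hchar e.symm he'
  have hmm : ∀ x : AddCircle (1:ℝ), (m' * m) • x = x := by
    intro x
    have := hm' (e x)
    rw [e.symm_apply_apply, hm x, smul_smul] at this
    exact this.symm
  have hone : m' * m = 1 := by
    by_contra hne
    set d : ℤ := m' * m - 1 with hd
    have hd0 : d ≠ 0 := fun h => hne (by omega)
    have hx : ∀ x : AddCircle (1:ℝ), d • x = 0 := by
      intro x
      have := hmm x
      rw [hd, sub_smul, one_smul, this, sub_self]
    have hhalf : d • (((1:ℝ) / (2 * d) : ℝ) : AddCircle (1:ℝ)) = (((1:ℝ)/2 : ℝ) : AddCircle (1:ℝ)) := by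
      rw [← AddCircle.coe_zsmul]
      congr 1
      field_simp
      rw [zsmul_eq_mul]; field_simp [(Int.cast_ne_zero.mpr hd0 : (d:ℝ) ≠ 0)]
    have : (((1:ℝ)/2 : ℝ) : AddCircle (1:ℝ)) = 0 := by rw [← hhalf, hx]
    rw [AddCircle.coe_eq_zero_iff] at this
    obtain ⟨n, hn⟩ := this
    have hnr : (n : ℝ) = 1/2 := by simpa using hn
    have h3 : ((2 * n : ℤ) : ℝ) = ((1 : ℤ) : ℝ) := by push_cast; linarith
    have := Int.cast_injective (α := ℝ) h3
    omega
  exact ⟨m, Int.eq_one_or_neg_one_of_mul_eq_one (by rw [mul_comm]; exact hone), hm⟩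

set_option maxHeartbeats 3000000 in
/-- The combinatorial core: a Skitovich–Darmois type functional equation for three
nonnegative even functions on `ℤ` with `±1` coefficient vectors forces vanishing at `1`. -/
lemma aux_key (p q r : ℤ → ℝ)
    (hp0 : p 0 = 0) (hq0 : q 0 = 0) (hr0 : r 0 = 0)
    (hpn : ∀ n, 0 ≤ p n) (hqn : ∀ n, 0 ≤ q n) (hrn : ∀ n, 0 ≤ r n)
    (hpe : ∀ n, p (-n) = p n) (hqe : ∀ n, q (-n) = q n) (hre : ∀ n, r (-n) = r n)
    (a b c d e f : ℤ)
    (ha : a = 1 ∨ a = -1) (hb : b = 1 ∨ b = -1) (hc : c = 1 ∨ c = -1)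
    (hd : d = 1 ∨ d = -1) (he : e = 1 ∨ e = -1) (hf : f = 1 ∨ f = -1)
    (hu : ∀ n m : ℤ, p (n + a * m) + q (n + b * m) + r (n + c * m)
      = (p n + q n + r n) + (p m + q m + r m))
    (hv : ∀ n m : ℤ, p (n + d * m) + q (n + e * m) + r (n + f * m)
      = (p n + q n + r n) + (p m + q m + r m))
    (hw : ∀ n m : ℤ, p (n + (a * d) * m) + q (n + (b * e) * m) + r (n + (c * f) * m)
      = (p n + q n + r n) + (p m + q m + r m)) :
    p 1 = 0 ∧ q 1 = 0 ∧ r 1 = 0 := by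
  have U1 := hu 1 1; have U2 := hu 1 (-1)
  have V1 := hv 1 1; have V2 := hv 1 (-1)
  have W1 := hw 1 1; have W2 := hw 1 (-1)
  have Ep := hpe 1; have Eq := hqe 1; have Er := hre 1
  rcases ha with ha | ha <;> rcases hb with hb | hb <;> rcases hc with hc | hc <;>
    rcases hd with hd | hd <;> rcases he with he | he <;> rcases hf with hf | hf <;>
    subst ha hb hc hd he hf <;>
    norm_num at U1 U2 V1 V2 W1 W2 <;>
    refine ⟨le_antisymm ?_ (hpn 1), le_antisymm ?_ (hqn 1), le_antisymm ?_ (hrn 1)⟩ <;>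
    linarith [hpn 1, hqn 1, hrn 1, hpn 2, hqn 2, hrn 2, hp0, hq0, hr0, Ep, Eq, Er]

/-- A probability measure on the circle whose first Fourier coefficient has modulus one
is a Dirac measure. -/
lemma aux_dirac_of_norm_one (μ : Measure (AddCircle (1:ℝ))) [IsProbabilityMeasure μ]
    (h : ‖∫ x, fourier 1 x ∂μ‖ = 1) :
    ∃ x₀ : AddCircle (1:ℝ), μ = Measure.dirac x₀ := by
  set c : ℂ := ∫ x, fourier 1 x ∂μ with hc
  have hfmeas : Measurable (fun x : AddCircle (1:ℝ) => (fourier 1 x : ℂ)) :=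
    (fourier 1).continuous.measurable
  have hf1 : ∀ x : AddCircle (1:ℝ), ‖(fourier 1 x : ℂ)‖ = 1 := fun x => by
    rw [fourier_apply]; exact Circle.norm_coe _
  have hfint : Integrable (fun x : AddCircle (1:ℝ) => (fourier 1 x : ℂ)) μ := by
    refine Integrable.mono' (integrable_const 1) hfmeas.aestronglyMeasurable ?_
    filter_upwards with x
    rw [hf1 x]
  have hgint : Integrable (fun x : AddCircle (1:ℝ) => ((starRingEnd ℂ) c * fourier 1 x).re) μ :=
    (Complex.reCLM : ℂ →L[ℝ] ℝ).integrable_comp (hfint.const_mul _)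
  have hint : ∫ x, (1 - ((starRingEnd ℂ) c * fourier 1 x).re) ∂μ = 0 := by
    rw [integral_sub (integrable_const 1) hgint]
    have h1 : ∫ x, ((starRingEnd ℂ) c * fourier 1 x).re ∂μ
        = ((starRingEnd ℂ) c * c).re := by
      rw [← integral_const_mul]
      exact (Complex.reCLM : ℂ →L[ℝ] ℝ).integral_comp_comm (hfint.const_mul _)
    rw [h1]
    have : ((starRingEnd ℂ) c * c).re = 1 := by
      rw [mul_comm, Complex.mul_conj, Complex.ofReal_re, Complex.normSq_eq_norm_sq, h]
      norm_num
    rw [this]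
    simp
  have hae : ∀ᵐ x ∂μ, (1 - ((starRingEnd ℂ) c * fourier 1 x).re) = 0 := by
    have hnn : 0 ≤ᵐ[μ] fun x => (1 - ((starRingEnd ℂ) c * fourier 1 x).re) := by
      filter_upwards with x
      have hb : ((starRingEnd ℂ) c * fourier 1 x).re ≤ 1 := by
        calc ((starRingEnd ℂ) c * fourier 1 x).re ≤ ‖(starRingEnd ℂ) c * fourier 1 x‖ :=
              Complex.re_le_norm _
        _ = ‖c‖ * 1 := by
              rw [norm_mul, Complex.norm_conj, hf1 x]
        _ = 1 := by rw [mul_one, h]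
      simp only [Pi.zero_apply]
      linarith
    exact (integral_eq_zero_iff_of_nonneg_ae hnn ((integrable_const 1).sub hgint)).mp hint
  have haec : ∀ᵐ x ∂μ, (fourier 1 x : ℂ) = c := by
    filter_upwards [hae] with x hx
    have hre : ((starRingEnd ℂ) c * fourier 1 x).re = 1 := by linarith
    have habs : ‖(starRingEnd ℂ) c * fourier 1 x‖ = 1 := by
      rw [norm_mul, Complex.norm_conj, hf1 x, mul_one, h]
    have him : ((starRingEnd ℂ) c * fourier 1 x).im = 0 := by
      have h2 : ((starRingEnd ℂ) c * fourier 1 x).re ^ 2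
          + ((starRingEnd ℂ) c * fourier 1 x).im ^ 2 = 1 := by
        have := Complex.sq_norm ((starRingEnd ℂ) c * fourier 1 x)
        rw [habs] at this
        simpa [Complex.normSq_apply, sq] using this.symm
      nlinarith
    have hone : (starRingEnd ℂ) c * fourier 1 x = 1 := by
      apply Complex.ext
      · rw [hre, Complex.one_re]
      · rw [him, Complex.one_im]
    have hcc : c * (starRingEnd ℂ) c = 1 := by
      rw [Complex.mul_conj]
      norm_cast
      rw [Complex.normSq_eq_norm_sq, h]
      norm_num
    linear_combination c * hone - (fourier 1 x : ℂ) * hcc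
  have hmz : μ {x | ¬ ((fourier 1 x : ℂ) = c)} = 0 := ae_iff.mp haec
  have hne : {x : AddCircle (1:ℝ) | (fourier 1 x : ℂ) = c}.Nonempty := by
    by_contra hemp
    rw [Set.not_nonempty_iff_eq_empty] at hemp
    have : {x : AddCircle (1:ℝ) | ¬ ((fourier 1 x : ℂ) = c)} = Set.univ := by
      ext x; simp only [Set.mem_setOf_eq, Set.mem_univ, iff_true]
      intro hx; exact Set.notMem_empty x (hemp ▸ hx)
    rw [this] at hmz
    simpa [hmz] using (measure_univ (μ := μ))
  obtain ⟨x₀, hx₀⟩ := hne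
  have hsub : {x : AddCircle (1:ℝ) | (fourier 1 x : ℂ) = c} ⊆ {x₀} := by
    intro x hx
    have : (toCircle x : ℂ) = (toCircle x₀ : ℂ) := by
      rw [← fourier_one, ← fourier_one, hx, hx₀]
    exact injective_toCircle one_ne_zero (Subtype.ext this)
  have hnull : μ {x₀}ᶜ = 0 := by
    apply measure_mono_null _ hmz
    intro x hx
    simp only [Set.mem_compl_iff, Set.mem_singleton_iff] at hx
    simp only [Set.mem_setOf_eq]
    intro hcx
    exact hx (hsub hcx)
  have hsingle : μ {x₀} = 1 := by
    have := measure_add_measure_compl (μ := μ) (measurableSet_singleton x₀)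
    rw [hnull, add_zero] at this
    simpa using this
  refine ⟨x₀, ?_⟩
  ext s hs
  rw [Measure.dirac_apply' _ hs]
  by_cases hx : x₀ ∈ s
  · rw [Set.indicator_of_mem hx]
    have h1 : μ (s ∩ {x₀}) + μ (s \ {x₀}) = μ s :=
      measure_inter_add_diff s (measurableSet_singleton x₀)
    have h2 : μ (s \ {x₀}) = 0 := measure_mono_null (fun x hxx => hxx.2) hnull
    have h3 : s ∩ {x₀} = {x₀} := by
      ext y; simp only [Set.mem_inter_iff, Set.mem_singleton_iff]
      exact ⟨fun hy => hy.2, fun hy => ⟨hy ▸ hx, hy⟩⟩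
    rw [h2, add_zero, h3, hsingle] at h1
    simp [← h1]
  · rw [Set.indicator_of_notMem hx]
    apply measure_mono_null _ hnull
    intro y hy
    simp only [Set.mem_compl_iff, Set.mem_singleton_iff]
    intro hyx
    exact hx (hyx ▸ hy)

lemma aux_fourier_arg_add (n : ℤ) (x y : AddCircle (1:ℝ)) :
    fourier n (x + y) = fourier n x * fourier n y := by
  simp only [fourier_apply, smul_add, toCircle_add]
  push_cast; ring

lemma aux_fourier_smul (n k : ℤ) (x : AddCircle (1:ℝ)) :
    fourier n (k • x) = fourier (n * k) x := by
  simp only [fourier_apply, smul_smul]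

/-- Skitovich–Darmois type theorem on the circle group `𝕋 = ℝ/ℤ` for three
linear forms of three independent random variables: if `ξ_1, ξ_2, ξ_3` are
independent `𝕋`-valued random variables whose characteristic functions
`μ̂_i(n) = ∫ (x, n) dμ_i(x)`, `n ∈ ℤ`, do not vanish, and the linear forms
`L j = ∑ i, α i j (ξ i)` (with `α i j` topological automorphisms of `𝕋`) are
mutually independent, then every distribution `μ i = map (ξ i) P` is degenerate:
`μ i = E_{x i}` for some `x i ∈ 𝕋`. -/
theorem skitovich_darmois_circle_three_forms
    {Ω : Type} [MeasurableSpace Ω] (P : Measure Ω) [IsProbabilityMeasure P]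
    (ξ : Fin 3 → Ω → AddCircle (1 : ℝ)) (hξ : ∀ i, Measurable (ξ i))
    (hindep : iIndepFun ξ P)
    (α : Fin 3 → Fin 3 → (AddCircle (1 : ℝ) ≃+ AddCircle (1 : ℝ)))
    (hα : ∀ i j, Continuous (α i j) ∧ Continuous (α i j).symm)
    (hnv : ∀ i (m : ℤ), ∫ x, fourier m x ∂(Measure.map (ξ i) P) ≠ 0)
    (hLindep : iIndepFun (fun j ω => ∑ i, α i j (ξ i ω)) P) :
    ∀ i, ∃ x : AddCircle (1 : ℝ), Measure.map (ξ i) P = Measure.dirac x := by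
  classical
  have mf : ∀ n : ℤ, Measurable (fun x : AddCircle (1:ℝ) => (fourier n x : ℂ)) :=
    fun n => (fourier n).continuous.measurable
  -- classify the automorphisms
  have hcl : ∀ i j, ∃ s : ℤ, (s = 1 ∨ s = -1) ∧ ∀ x, α i j x = s • x :=
    fun i j => aux_auto_classify (α i j) (hα i j).1 (hα i j).2
  choose s hs1 hs2 using hcl
  have hsq : ∀ i j, s i j * s i j = 1 := by
    intro i j; rcases hs1 i j with h | h <;> rw [h] <;> norm_num
  -- measurability of the linear forms
  have hLmeas : ∀ j, Measurable (fun ω => ∑ i, α i j (ξ i ω)) := by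
    intro j
    apply Finset.measurable_sum
    intro i _
    exact ((hα i j).1.measurable).comp (hξ i)
  -- characteristic functions
  set F : Fin 3 → ℤ → ℂ := fun i n => ∫ ω, fourier n (ξ i ω) ∂P with hF
  have hFmap : ∀ i n, (∫ x, fourier n x ∂(Measure.map (ξ i) P)) = F i n := by
    intro i n
    rw [integral_map (hξ i).aemeasurable (mf n).aestronglyMeasurable]
  have hFne : ∀ i n, F i n ≠ 0 := by
    intro i n
    rw [← hFmap i n]
    exact hnv i n
  have hf1 : ∀ (n : ℤ) (x : AddCircle (1:ℝ)), ‖(fourier n x : ℂ)‖ = 1 := fun n x => by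
    rw [fourier_apply]; exact Circle.norm_coe _
  have hFle : ∀ i n, ‖F i n‖ ≤ 1 := by
    intro i n
    have := norm_integral_le_of_norm_le_const (μ := P)
      (f := fun ω => (fourier n (ξ i ω) : ℂ)) (C := 1)
      (Filter.Eventually.of_forall (fun ω => le_of_eq (hf1 n (ξ i ω))))
    simpa [hF] using this
  have hFpos : ∀ i n, 0 < ‖F i n‖ := fun i n => norm_pos_iff.mpr (hFne i n)
  have hFconj : ∀ i n, F i (-n) = (starRingEnd ℂ) (F i n) := by
    intro i n
    rw [hF]
    simp only
    rw [← integral_conj]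
    apply integral_congr_ae
    filter_upwards with ω
    rw [fourier_neg]
  -- the log-characteristic functions
  set ψ : Fin 3 → ℤ → ℝ := fun i n => -Real.log ‖F i n‖ with hψ
  have hψ0 : ∀ i, ψ i 0 = 0 := by
    intro i
    have : F i 0 = 1 := by
      rw [hF]; simp only
      have : ∀ ω, (fourier 0 (ξ i ω) : ℂ) = 1 := fun ω => fourier_zero
      rw [integral_congr_ae (Filter.Eventually.of_forall this)]
      simp
    rw [hψ]; simp only [this]
    simp
  have hψnn : ∀ i n, 0 ≤ ψ i n := by
    intro i n
    rw [hψ]; simp only [neg_nonneg]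
    exact Real.log_nonpos (norm_nonneg _) (hFle i n)
  have hψe : ∀ i n, ψ i (-n) = ψ i n := by
    intro i n
    rw [hψ]; simp only [hFconj i n]
    rw [RCLike.norm_conj]
  have hψs : ∀ i (σ t : ℤ), (σ = 1 ∨ σ = -1) → ψ i (σ * t) = ψ i t := by
    intro i σ t hσ
    rcases hσ with h | h
    · rw [h, one_mul]
    · rw [h, neg_one_mul, hψe]
  -- the functional equation
  have hEQ : ∀ (j k : Fin 3), j ≠ k → ∀ n m : ℤ,
      F 0 (n * s 0 j + m * s 0 k) * F 1 (n * s 1 j + m * s 1 k) * F 2 (n * s 2 j + m * s 2 k)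
      = (F 0 (n * s 0 j) * F 1 (n * s 1 j) * F 2 (n * s 2 j))
        * (F 0 (m * s 0 k) * F 1 (m * s 1 k) * F 2 (m * s 2 k)) := by
    intro j k hjk n m
    have hLψ : ∀ (j : Fin 3) (n : ℤ) (ω : Ω), (fourier n (∑ i, α i j (ξ i ω)) : ℂ)
        = fourier (n * s 0 j) (ξ 0 ω) * fourier (n * s 1 j) (ξ 1 ω)
          * fourier (n * s 2 j) (ξ 2 ω) := by
      intro j n ω
      rw [Fin.sum_univ_three, aux_fourier_arg_add, aux_fourier_arg_add]
      rw [hs2 0 j, hs2 1 j, hs2 2 j, aux_fourier_smul, aux_fourier_smul, aux_fourier_smul]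
    have hIJ : ∀ (j : Fin 3) (n : ℤ), (∫ ω, (fourier n (∑ i, α i j (ξ i ω)) : ℂ) ∂P)
        = F 0 (n * s 0 j) * F 1 (n * s 1 j) * F 2 (n * s 2 j) := by
      intro j n
      rw [integral_congr_ae (Filter.Eventually.of_forall (hLψ j n))]
      exact aux_indep_integral_mul3 hξ hindep (mf _) (mf _) (mf _)
    have step1 : ∫ ω, (fourier n (∑ i, α i j (ξ i ω)) : ℂ) * fourier m (∑ i, α i k (ξ i ω)) ∂P
        = (∫ ω, (fourier n (∑ i, α i j (ξ i ω)) : ℂ) ∂P)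
          * ∫ ω, (fourier m (∑ i, α i k (ξ i ω)) : ℂ) ∂P :=
      aux_indep_integral_mul (hLmeas j) (hLmeas k) (hLindep.indepFun hjk) (mf n) (mf m)
    have step2 : ∫ ω, (fourier n (∑ i, α i j (ξ i ω)) : ℂ) * fourier m (∑ i, α i k (ξ i ω)) ∂P
        = F 0 (n * s 0 j + m * s 0 k) * F 1 (n * s 1 j + m * s 1 k)
          * F 2 (n * s 2 j + m * s 2 k) := by
      have hpt : ∀ ω : Ω, (fourier n (∑ i, α i j (ξ i ω)) : ℂ) * fourier m (∑ i, α i k (ξ i ω))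
          = fourier (n * s 0 j + m * s 0 k) (ξ 0 ω) * fourier (n * s 1 j + m * s 1 k) (ξ 1 ω)
            * fourier (n * s 2 j + m * s 2 k) (ξ 2 ω) := by
        intro ω
        rw [hLψ j n ω, hLψ k m ω, fourier_add, fourier_add, fourier_add]
        ring
      rw [integral_congr_ae (Filter.Eventually.of_forall hpt)]
      exact aux_indep_integral_mul3 hξ hindep (mf _) (mf _) (mf _)
    rw [← step2, step1, hIJ j n, hIJ k m]
  -- pass to logarithms
  have hlogmul : ∀ x y : ℂ, x ≠ 0 → y ≠ 0 → Real.log ‖x * y‖ = Real.log ‖x‖ + Real.log ‖y‖ := by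
    intro x y hx hy
    rw [norm_mul, Real.log_mul (norm_ne_zero_iff.mpr hx) (norm_ne_zero_iff.mpr hy)]
  have hEQψ : ∀ (j k : Fin 3), j ≠ k → ∀ n m : ℤ,
      ψ 0 (n * s 0 j + m * s 0 k) + ψ 1 (n * s 1 j + m * s 1 k) + ψ 2 (n * s 2 j + m * s 2 k)
      = (ψ 0 (n * s 0 j) + ψ 1 (n * s 1 j) + ψ 2 (n * s 2 j))
        + (ψ 0 (m * s 0 k) + ψ 1 (m * s 1 k) + ψ 2 (m * s 2 k)) := by
    intro j k hjk n m
    have h := congrArg (fun z : ℂ => Real.log ‖z‖) (hEQ j k hjk n m)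
    rw [hlogmul _ _ (mul_ne_zero (hFne 0 _) (hFne 1 _)) (hFne 2 _),
      hlogmul _ _ (hFne 0 _) (hFne 1 _),
      hlogmul _ _ (mul_ne_zero (mul_ne_zero (hFne 0 _) (hFne 1 _)) (hFne 2 _))
        (mul_ne_zero (mul_ne_zero (hFne 0 _) (hFne 1 _)) (hFne 2 _)),
      hlogmul _ _ (mul_ne_zero (hFne 0 _) (hFne 1 _)) (hFne 2 _),
      hlogmul _ _ (hFne 0 _) (hFne 1 _),
      hlogmul _ _ (mul_ne_zero (hFne 0 _) (hFne 1 _)) (hFne 2 _),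
      hlogmul _ _ (hFne 0 _) (hFne 1 _)] at h
    rw [hψ]
    simp only
    linarith [h]
  -- clean up the arguments
  have harg : ∀ (i : Fin 3) (j k : Fin 3) (n m : ℤ),
      ψ i (n * s i j + m * s i k) = ψ i (n + (s i j * s i k) * m) := by
    intro i j k n m
    have h1 : n * s i j + m * s i k = s i j * (n + (s i j * s i k) * m) := by
      linear_combination (-(m * s i k)) * hsq i j
    rw [h1, hψs i (s i j) _ (hs1 i j)]
  have hargn : ∀ (i : Fin 3) (j : Fin 3) (n : ℤ), ψ i (n * s i j) = ψ i n := by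
    intro i j n
    rw [mul_comm, hψs i (s i j) n (hs1 i j)]
  have hclean : ∀ (j k : Fin 3), j ≠ k → ∀ n m : ℤ,
      ψ 0 (n + (s 0 j * s 0 k) * m) + ψ 1 (n + (s 1 j * s 1 k) * m)
        + ψ 2 (n + (s 2 j * s 2 k) * m)
      = (ψ 0 n + ψ 1 n + ψ 2 n) + (ψ 0 m + ψ 1 m + ψ 2 m) := by
    intro j k hjk n m
    have h := hEQψ j k hjk n m
    rw [harg 0 j k, harg 1 j k, harg 2 j k, hargn 0 j, hargn 1 j, hargn 2 j,
      hargn 0 k, hargn 1 k, hargn 2 k] at h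
    exact h
  -- apply the key combinatorial lemma
  have hsgn : ∀ x y : ℤ, (x = 1 ∨ x = -1) → (y = 1 ∨ y = -1) → (x * y = 1 ∨ x * y = -1) := by
    rintro x y (rfl | rfl) (rfl | rfl) <;> norm_num
  have hw_eq : ∀ i : Fin 3, (s i 0 * s i 1) * (s i 0 * s i 2) = s i 1 * s i 2 := by
    intro i
    linear_combination (s i 1 * s i 2) * hsq i 0
  have hw' : ∀ n m : ℤ,
      ψ 0 (n + ((s 0 0 * s 0 1) * (s 0 0 * s 0 2)) * m)
        + ψ 1 (n + ((s 1 0 * s 1 1) * (s 1 0 * s 1 2)) * m)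
        + ψ 2 (n + ((s 2 0 * s 2 1) * (s 2 0 * s 2 2)) * m)
      = (ψ 0 n + ψ 1 n + ψ 2 n) + (ψ 0 m + ψ 1 m + ψ 2 m) := by
    intro n m
    rw [hw_eq 0, hw_eq 1, hw_eq 2]
    exact hclean 1 2 (by decide) n m
  obtain ⟨hψ1, hψ2, hψ3⟩ := aux_key (ψ 0) (ψ 1) (ψ 2) (hψ0 0) (hψ0 1) (hψ0 2)
    (hψnn 0) (hψnn 1) (hψnn 2) (hψe 0) (hψe 1) (hψe 2)
    (s 0 0 * s 0 1) (s 1 0 * s 1 1) (s 2 0 * s 2 1)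
    (s 0 0 * s 0 2) (s 1 0 * s 1 2) (s 2 0 * s 2 2)
    (hsgn _ _ (hs1 0 0) (hs1 0 1)) (hsgn _ _ (hs1 1 0) (hs1 1 1))
    (hsgn _ _ (hs1 2 0) (hs1 2 1)) (hsgn _ _ (hs1 0 0) (hs1 0 2))
    (hsgn _ _ (hs1 1 0) (hs1 1 2)) (hsgn _ _ (hs1 2 0) (hs1 2 2))
    (hclean 0 1 (by decide)) (hclean 0 2 (by decide)) hw'
  -- conclude
  have hnorm1 : ∀ i : Fin 3, ψ i 1 = 0 → ‖F i 1‖ = 1 := by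
    intro i hzero
    rw [hψ] at hzero
    simp only [neg_eq_zero] at hzero
    rcases Real.log_eq_zero.mp hzero with h | h | h
    · exact absurd h (ne_of_gt (hFpos i 1))
    · exact h
    · linarith [hFpos i 1]
  intro i
  haveI : IsProbabilityMeasure (Measure.map (ξ i) P) :=
    Measure.isProbabilityMeasure_map (hξ i).aemeasurable
  apply aux_dirac_of_norm_one
  rw [hFmap i 1]
  fin_cases i
  · exact hnorm1 0 hψ1
  · exact hnorm1 1 hψ2
  · exact hnorm1 2 hψ3
end

section
/- Let f_1, f_2, f_3 be normalized positive definite functions on ℤ that vanish nowhere, and suppose they satisfy equation (S-D T): f_1(u_1+u_2+u_3)·f_2(u_1−u_2−u_3)·f_3(u_1+u_2−u_3) = f_1(u_1)f_1(u_2)f_1(u_3)·f_2(u_1)f_2(−u_2)f_2(−u_3)·f_3(u_1)f_3(u_2)f_3(−u_3) for all u_1, u_2, u_3 ∈ ℤ. Then each f_i is a character of ℤ: there exist complex numbers z_1, z_2, z_3 with |z_i| = 1 such that f_i(n) = z_i^n for all n ∈ ℤ. -/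
/-- `f : Y → ℂ` is a positive definite function on the abelian group `Y`. -/
def IsPosDefFn {Y : Type*} [AddCommGroup Y] (f : Y → ℂ) : Prop :=
  ∀ (n : ℕ) (y : Fin n → Y) (c : Fin n → ℂ),
    0 ≤ (∑ i, ∑ j, f (y i - y j) * c i * (starRingEnd ℂ) (c j)).re ∧
    (∑ i, ∑ j, f (y i - y j) * c i * (starRingEnd ℂ) (c j)).im = 0

lemma pdconj {f : ℤ → ℂ} (h : IsPosDefFn f) (h0 : f 0 = 1) (t : ℤ) :
    f (-t) = (starRingEnd ℂ) (f t) := by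
  have h1 := h 2 ![0, t] ![1, 1]
  have h2 := h 2 ![0, t] ![1, Complex.I]
  simp [h0, Fin.sum_univ_two, zero_sub, Complex.ext_iff, Complex.add_im, Complex.mul_im] at h1 h2 ⊢
  exact ⟨by linarith [h2.2], by linarith [h1.2]⟩

lemma pdbound {f : ℤ → ℂ} (h : IsPosDefFn f) (h0 : f 0 = 1) (t : ℤ) :
    Complex.normSq (f t) ≤ 1 := by
  have h1 := (h 2 ![0, t] ![1, -(starRingEnd ℂ) (f t)]).1
  simp only [Fin.sum_univ_two, Matrix.cons_val_zero, Matrix.cons_val_one, Matrix.head_cons,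
    sub_self, zero_sub, sub_zero, h0, pdconj h h0 t, map_one, map_neg, map_mul,
    Complex.conj_conj, one_mul, mul_one] at h1
  have e : (1 + (starRingEnd ℂ) (f t) * -f t + (f t * -(starRingEnd ℂ) (f t)
      + -(starRingEnd ℂ) (f t) * -f t)) = 1 - (Complex.normSq (f t) : ℂ) := by
    linear_combination -(Complex.mul_conj (f t))
  rw [e] at h1
  simp at h1
  linarith

lemma charOfRec (g : ℤ → ℂ) (hne : ∀ n, g n ≠ 0) (h0 : g 0 = 1)
    (hrec : ∀ n : ℤ, g (n - 1) * g (n + 1) = g n ^ 2) : ∀ n : ℤ, g n = g 1 ^ n := by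
  have hz : g 1 ≠ 0 := hne 1
  suffices h : ∀ n : ℤ, g n = g 1 ^ n ∧ g (n + 1) = g 1 ^ (n + 1) from fun n => (h n).1
  intro n
  induction n using Int.induction_on with
  | zero => simp [h0]
  | succ k ih =>
    refine ⟨ih.2, ?_⟩
    have r := hrec ((k : ℤ) + 1)
    rw [add_sub_cancel_right, ih.1, ih.2] at r
    apply mul_left_cancel₀ (zpow_ne_zero (k : ℤ) hz)
    rw [r, sq, ← zpow_add₀ hz, ← zpow_add₀ hz]
    congr 1; ring
  | pred k ih =>
    have e1 : (-(k : ℤ) - 1 + 1) = -k := by ring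
    refine ⟨?_, by rw [e1]; exact ih.1⟩
    have r := hrec (-(k : ℤ))
    rw [ih.1, ih.2] at r
    apply mul_right_cancel₀ (zpow_ne_zero (-(k : ℤ) + 1) hz)
    rw [r, sq, ← zpow_add₀ hz, ← zpow_add₀ hz]
    congr 1; ring

lemma charOfRec' (g : ℤ → ℂ) (hne : ∀ n, g n ≠ 0) (h0 : g 0 = 1)
    (hrec : ∀ n : ℤ, g (n + 1) = g (n - 1) * (g 1 * g 1)) : ∀ n : ℤ, g n = g 1 ^ n := by
  have hz : g 1 ≠ 0 := hne 1
  suffices h : ∀ n : ℤ, g n = g 1 ^ n ∧ g (n + 1) = g 1 ^ (n + 1) from fun n => (h n).1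
  intro n
  induction n using Int.induction_on with
  | zero => simp [h0]
  | succ k ih =>
    refine ⟨ih.2, ?_⟩
    have r := hrec ((k : ℤ) + 1)
    rw [add_sub_cancel_right, ih.1] at r
    rw [r, zpow_add_one₀ hz, zpow_add_one₀ hz]
    ring
  | pred k ih =>
    have e1 : (-(k : ℤ) - 1 + 1) = -k := by ring
    refine ⟨?_, by rw [e1]; exact ih.1⟩
    have r := hrec (-(k : ℤ))
    rw [ih.2] at r
    apply mul_right_cancel₀ (mul_ne_zero hz hz)
    rw [← r, zpow_add_one₀ hz, zpow_sub_one₀ hz]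
    field_simp

lemma charOfAdd (g : ℤ → ℂ) (hne : ∀ n, g n ≠ 0) (h0 : g 0 = 1)
    (hadd : ∀ u v : ℤ, g (u + v) = g u * g v) : ∀ n : ℤ, g n = g 1 ^ n := by
  have hz : g 1 ≠ 0 := hne 1
  intro n
  induction n using Int.induction_on with
  | zero => simp [h0]
  | succ k ih =>
    rw [hadd, ih]
    exact (zpow_add_one₀ hz _).symm
  | pred k ih =>
    have r := hadd (-(k : ℤ) - 1) 1
    rw [sub_add_cancel, ih] at r
    apply mul_right_cancel₀ hz
    rw [← r, zpow_sub_one₀ hz]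
    field_simp

/-- If `f₁, f₂, f₃` are normalized positive definite functions on `ℤ` that vanish
nowhere and satisfy equation (S-D T), then each `f_i` is a character of `ℤ`:
`f_i n = z_i ^ n` for some complex number `z_i` of modulus `1`. -/
theorem skitovich_darmois_equation_on_int
    (f₁ f₂ f₃ : ℤ → ℂ)
    (hpd₁ : IsPosDefFn f₁) (hpd₂ : IsPosDefFn f₂) (hpd₃ : IsPosDefFn f₃)
    (hn₁ : f₁ 0 = 1) (hn₂ : f₂ 0 = 1) (hn₃ : f₃ 0 = 1)
    (hnv₁ : ∀ n, f₁ n ≠ 0) (hnv₂ : ∀ n, f₂ n ≠ 0) (hnv₃ : ∀ n, f₃ n ≠ 0)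
    (heq : ∀ u₁ u₂ u₃ : ℤ,
      f₁ (u₁ + u₂ + u₃) * f₂ (u₁ - u₂ - u₃) * f₃ (u₁ + u₂ - u₃) =
        f₁ u₁ * f₁ u₂ * f₁ u₃ * (f₂ u₁ * f₂ (-u₂) * f₂ (-u₃)) *
          (f₃ u₁ * f₃ u₂ * f₃ (-u₃))) :
    (∃ z₁ : ℂ, ‖z₁‖ = 1 ∧ ∀ n : ℤ, f₁ n = z₁ ^ n) ∧
    (∃ z₂ : ℂ, ‖z₂‖ = 1 ∧ ∀ n : ℤ, f₂ n = z₂ ^ n) ∧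
    (∃ z₃ : ℂ, ‖z₃‖ = 1 ∧ ∀ n : ℤ, f₃ n = z₃ ^ n) := by
  have hc₁ := pdconj hpd₁ hn₁
  have hc₂ := pdconj hpd₂ hn₂
  have hc₃ := pdconj hpd₃ hn₃
  have hb₁ := pdbound hpd₁ hn₁
  have hb₂ := pdbound hpd₂ hn₂
  have hb₃ := pdbound hpd₃ hn₃
  -- all values have modulus one
  have key : ∀ u : ℤ, Complex.normSq (f₁ u) = 1 ∧ Complex.normSq (f₂ u) = 1 ∧
      Complex.normSq (f₃ u) = 1 := by
    intro u
    have e := heq u (-u) u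
    rw [show u + -u + u = u by ring, show u - -u - u = u by ring,
      show u + -u - u = -u by ring, show -(-u) = u by ring] at e
    have hA : f₁ u * f₂ u * f₃ (-u) ≠ 0 :=
      mul_ne_zero (mul_ne_zero (hnv₁ u) (hnv₂ u)) (hnv₃ (-u))
    have hB : f₁ u * f₁ (-u) * (f₂ u * f₂ (-u)) * (f₃ u * f₃ (-u)) = 1 := by
      have := mul_left_cancel₀ hA (show f₁ u * f₂ u * f₃ (-u) *
          (f₁ u * f₁ (-u) * (f₂ u * f₂ (-u)) * (f₃ u * f₃ (-u))) =
          f₁ u * f₂ u * f₃ (-u) * 1 by linear_combination -e)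
      exact this
    rw [hc₁ u, hc₂ u, hc₃ u, Complex.mul_conj, Complex.mul_conj, Complex.mul_conj] at hB
    have hB' : Complex.normSq (f₁ u) * Complex.normSq (f₂ u) * Complex.normSq (f₃ u) = 1 := by
      exact_mod_cast hB
    have q1 := Complex.normSq_nonneg (f₁ u)
    have q2 := Complex.normSq_nonneg (f₂ u)
    have q3 := Complex.normSq_nonneg (f₃ u)
    constructor
    · nlinarith [hb₁ u, hb₂ u, hb₃ u, mul_nonneg q1 q2, mul_nonneg q2 q3, mul_nonneg q1 q3]
    constructor
    · nlinarith [hb₁ u, hb₂ u, hb₃ u, mul_nonneg q1 q2, mul_nonneg q2 q3, mul_nonneg q1 q3]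
    · nlinarith [hb₁ u, hb₂ u, hb₃ u, mul_nonneg q1 q2, mul_nonneg q2 q3, mul_nonneg q1 q3]
  have hp₁ : ∀ t : ℤ, f₁ t * f₁ (-t) = 1 := by
    intro t; rw [hc₁ t, Complex.mul_conj, (key t).1]; norm_num
  have hp₂ : ∀ t : ℤ, f₂ t * f₂ (-t) = 1 := by
    intro t; rw [hc₂ t, Complex.mul_conj, (key t).2.1]; norm_num
  have hp₃ : ∀ t : ℤ, f₃ t * f₃ (-t) = 1 := by
    intro t; rw [hc₃ t, Complex.mul_conj, (key t).2.2]; norm_num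
  have habs : ∀ u : ℤ, ‖f₁ u‖ = 1 ∧ ‖f₂ u‖ = 1 ∧
      ‖f₃ u‖ = 1 := by
    intro u
    refine ⟨?_, ?_, ?_⟩ <;> rw [Complex.norm_def]
    · rw [(key u).1, Real.sqrt_one]
    · rw [(key u).2.1, Real.sqrt_one]
    · rw [(key u).2.2, Real.sqrt_one]
  -- the recurrence for f₂
  have rec2 : ∀ u w : ℤ, f₂ (u - w) * f₂ (u + w) = f₂ u ^ 2 := by
    intro u w
    have e1 := heq u 0 w
    have e2 := heq 0 u w
    simp only [add_zero, zero_add, sub_zero, zero_sub, neg_zero, hn₁, hn₂, hn₃,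
      mul_one, one_mul] at e1 e2
    have h12 : f₁ (u + w) * f₃ (u - w) * (f₂ (u - w) * f₂ (-u)) =
        f₁ (u + w) * f₃ (u - w) * (f₂ (-u - w) * f₂ u) := by
      linear_combination f₂ (-u) * e1 - f₂ u * e2
    have h13 := mul_left_cancel₀ (mul_ne_zero (hnv₁ _) (hnv₃ _)) h12
    rw [show (-u - w : ℤ) = -(u + w) by ring] at h13
    linear_combination (f₂ (u + w) * f₂ u) * h13 - (f₂ (u - w) * f₂ (u + w)) * hp₂ u
      + (f₂ u ^ 2) * hp₂ (u + w)
  set z₂ := f₂ 1 with hz₂def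
  have hch₂ : ∀ n : ℤ, f₂ n = z₂ ^ n :=
    charOfRec f₂ hnv₂ hn₂ (fun n => rec2 n 1)
  -- the recurrence for f₃
  have rec3 : ∀ n : ℤ, f₃ (n + 1) = f₃ (n - 1) * (f₃ 1 * f₃ 1) := by
    intro n
    have e1 := heq n 1 0
    have e2 := heq n 0 1
    simp only [add_zero, zero_add, sub_zero, zero_sub, neg_zero, hn₁, hn₂, hn₃,
      mul_one, one_mul] at e1 e2
    have h12 : f₁ (n + 1) * f₂ (n - 1) * (f₃ (n + 1) * f₃ (-1)) =
        f₁ (n + 1) * f₂ (n - 1) * (f₃ (n - 1) * f₃ 1) := by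
      linear_combination f₃ (-1) * e1 - f₃ 1 * e2
    have h13 := mul_left_cancel₀ (mul_ne_zero (hnv₁ _) (hnv₂ _)) h12
    linear_combination f₃ 1 * h13 - (f₃ (n + 1)) * hp₃ 1
  set z₃ := f₃ 1 with hz₃def
  have hch₃ : ∀ n : ℤ, f₃ n = z₃ ^ n :=
    charOfRec' f₃ hnv₃ hn₃ rec3
  -- additivity of f₁
  have hz2ne : z₂ ≠ 0 := hnv₂ 1
  have hz3ne : z₃ ≠ 0 := hnv₃ 1
  have hadd1 : ∀ u v : ℤ, f₁ (u + v) = f₁ u * f₁ v := by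
    intro u v
    have e := heq u v 0
    simp only [add_zero, zero_add, sub_zero, zero_sub, neg_zero, hn₁, hn₂, hn₃,
      mul_one, one_mul] at e
    have h2' : f₂ (u - v) = f₂ u * f₂ (-v) := by
      rw [hch₂ (u - v), hch₂ u, hch₂ (-v), ← zpow_add₀ hz2ne, sub_eq_add_neg]
    have h3' : f₃ (u + v) = f₃ u * f₃ v := by
      rw [hch₃ (u + v), hch₃ u, hch₃ v, ← zpow_add₀ hz3ne]
    apply mul_right_cancel₀ (mul_ne_zero (hnv₂ (u - v)) (hnv₃ (u + v)))
    linear_combination e - (f₁ u * f₁ v * f₃ (u + v)) * h2'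
      - (f₁ u * f₁ v * (f₂ u * f₂ (-v))) * h3'
  have hch₁ : ∀ n : ℤ, f₁ n = f₁ 1 ^ n := charOfAdd f₁ hnv₁ hn₁ hadd1
  exact ⟨⟨f₁ 1, (habs 1).1, hch₁⟩, ⟨z₂, (habs 1).2.1, hch₂⟩, ⟨z₃, (habs 1).2.2, hch₃⟩⟩
end

section
/- Let Y be a nonzero subgroup of ℚ such that pY ≠ Y for every prime p (this holds exactly when Y is the character group of an a-adic solenoid Σ_a on which no map x ↦ px is a topological automorphism). Let f_1, f_2, f_3 be normalized positive definite functions on Y, and let ε_{ij} ∈ {1, −1} (i,j = 1,2,3) be signs such that Π_{i=1}^3 f_i(Σ_{j=1}^3 ε_{ij}u_j) = Π_{i=1}^3 Π_{j=1}^3 f_i(ε_{ij}u_j) for all u_1, u_2, u_3 ∈ Y. Then at least one of the functions f_i is of idempotent form: there exist a subgroup H of Y and a character χ of Y (a homomorphism from Y to the unit circle in ℂ) such that f_i(y) = χ(y) for y ∈ H and f_i(y) = 0 for y ∉ H. -/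
set_option maxHeartbeats 1600000

/-- `χ : Y → ℂ` is a character of the abelian group `Y`: a homomorphism of `Y`
into the unit circle in `ℂ`. -/
def IsCharFn {Y : Type*} [AddCommGroup Y] (χ : Y → ℂ) : Prop :=
  (∀ a b : Y, χ (a + b) = χ a * χ b) ∧ ∀ a : Y, ‖χ a‖ = 1


open Complex ComplexConjugate

section PosDef
variable {G : Type*} [AddCommGroup G] {f : G → ℂ}

lemma pd2 (hpd : IsPosDefFn f) (x : G) (c₁ c₂ : ℂ) :
    0 ≤ (f 0 * c₁ * conj c₁ + f x * c₁ * conj c₂ +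
        (f (-x) * c₂ * conj c₁ + f 0 * c₂ * conj c₂)).re ∧
    (f 0 * c₁ * conj c₁ + f x * c₁ * conj c₂ +
        (f (-x) * c₂ * conj c₁ + f 0 * c₂ * conj c₂)).im = 0 := by
  have h := hpd 2 ![x, 0] ![c₁, c₂]
  simpa [Fin.sum_univ_two, sub_zero, zero_sub] using h

lemma pdconj_s8 (hpd : IsPosDefFn f) (hn : f 0 = 1) (x : G) : f (-x) = conj (f x) := by
  have h1 := (pd2 hpd x 1 1).2
  have h2 := (pd2 hpd x I 1).2
  simp [hn, Complex.ext_iff, Complex.add_im, Complex.mul_im] at h1 h2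
  apply Complex.ext <;> simp [Complex.conj_re, Complex.conj_im] <;> linarith

lemma pdbound_s8 (hpd : IsPosDefFn f) (hn : f 0 = 1) (x : G) : normSq (f x) ≤ 1 := by
  have h := (pd2 hpd x (conj (f x)) (-1)).1
  rw [pdconj_s8 hpd hn] at h
  have e : f 0 * conj (f x) * conj (conj (f x)) + f x * conj (f x) * conj (-1) +
      (conj (f x) * (-1) * conj (conj (f x)) + f 0 * (-1) * conj (-1))
      = ((1 : ℝ) - normSq (f x) : ℝ) := by
    rw [hn]
    simp only [map_neg, map_one, conj_conj, ofReal_sub, ofReal_one]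
    rw [← Complex.mul_conj]
    ring
  rw [e] at h
  simp at h
  linarith

end PosDef

section Krein
variable {G : Type*} [AddCommGroup G] {f : G → ℂ}

lemma pd3 (hpd : IsPosDefFn f) (x y : G) (c₁ c₂ c₃ : ℂ) :
    0 ≤ (f 0 * c₁ * conj c₁ + f x * c₁ * conj c₂ + f (x + y) * c₁ * conj c₃ +
        (f (-x) * c₂ * conj c₁ + f 0 * c₂ * conj c₂ + f y * c₂ * conj c₃) +
        (f (-(x + y)) * c₃ * conj c₁ + f (-y) * c₃ * conj c₂ + f 0 * c₃ * conj c₃)).re := by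
  have h := (hpd 3 ![x, 0, -y] ![c₁, c₂, c₃]).1
  have e1 : x - -y = x + y := by abel
  have e2 : (0 : G) - -y = y := by abel
  have e3 : -y - x = -(x + y) := by abel
  have e4 : -y - 0 = -y := by abel
  simpa [Fin.sum_univ_three, sub_zero, zero_sub, e1, e2, e3, e4] using h

lemma krein (hpd : IsPosDefFn f) (hn : f 0 = 1) (x y : G) :
    normSq (f (x + y) - f x * f y) ≤ (1 - normSq (f x)) * (1 - normSq (f y)) := by
  set A := f x with hA
  set C := f y with hC
  set B := f (x + y) with hB
  set u := B - A * C with hu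
  -- the key inequality for each real t
  have key : ∀ t : ℝ, 0 ≤ ((1 - normSq A) * normSq u) * (t * t) + (-2 * normSq u) * t
      + (1 - normSq C) := by
    intro t
    have h := pd3 hpd x y ((t : ℂ) * conj u) (-(A * ((t : ℂ) * conj u) + conj C * (-1))) (-1)
    rw [pdconj_s8 hpd hn, pdconj_s8 hpd hn, pdconj_s8 hpd hn, hn] at h
    set c₁ : ℂ := (t : ℂ) * conj u with hc₁
    have e : (1 : ℂ) * c₁ * conj c₁ + A * c₁ * conj (-(A * c₁ + conj C * (-1))) +
        B * c₁ * conj (-1 : ℂ) +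
        (conj A * (-(A * c₁ + conj C * (-1))) * conj c₁ +
          1 * (-(A * c₁ + conj C * (-1))) * conj (-(A * c₁ + conj C * (-1))) +
          C * (-(A * c₁ + conj C * (-1))) * conj (-1 : ℂ)) +
        (conj B * (-1) * conj c₁ + conj C * (-1) * conj (-(A * c₁ + conj C * (-1))) +
          1 * (-1) * conj (-1 : ℂ))
        = (((1 - normSq A) * normSq u) * (t * t) + (-2 * normSq u) * t + (1 - normSq C) : ℝ) := by
      simp only [map_neg, map_add, map_mul, map_one, map_ofNat, conj_conj, hc₁, hu,
        Complex.conj_ofReal, ofReal_add, ofReal_mul, ofReal_sub, ofReal_one, ofReal_pow, Complex.mul_conj,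
        ofReal_neg, ofReal_ofNat, map_sub]
      rw [show ((normSq A : ℂ)) = A * conj A from (Complex.mul_conj A).symm,
        show ((normSq C : ℂ)) = C * conj C from (Complex.mul_conj C).symm,
        show ((normSq u : ℂ)) = u * conj u from (Complex.mul_conj u).symm, hu]
      simp only [map_sub, map_mul]
      ring
    rw [e] at h
    simpa [mul_comm, mul_assoc, mul_left_comm] using h
  have disc := discrim_le_zero key
  have hA1 : normSq A ≤ 1 := pdbound_s8 hpd hn x
  have hC1 : normSq C ≤ 1 := pdbound_s8 hpd hn y
  have hU0 : 0 ≤ normSq u := normSq_nonneg u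
  rw [discrim] at disc
  rcases eq_or_lt_of_le hU0 with h0 | hpos
  · rw [← h0]; nlinarith
  · nlinarith [sq_nonneg (normSq u)]

lemma mul_of_normSq_one (hpd : IsPosDefFn f) (hn : f 0 = 1) {x : G}
    (h1 : normSq (f x) = 1) (y : G) : f (x + y) = f x * f y := by
  have h := krein hpd hn x y
  rw [h1] at h
  simp at h
  have := normSq_nonneg (f (x + y) - f x * f y)
  have : normSq (f (x + y) - f x * f y) = 0 := le_antisymm h this
  have := Complex.normSq_eq_zero.mp this
  linear_combination this

end Krein


noncomputable def rootCU : RootableBy ℂˣ ℕ :=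
  rootableByOfPowLeftSurj _ _ (fun {n} hn x => by
    obtain ⟨z, hz⟩ := IsAlgClosed.exists_pow_nat_eq (x : ℂ) (Nat.pos_of_ne_zero hn)
    have hz0 : z ≠ 0 := by
      intro h
      rw [h, zero_pow hn] at hz
      exact x.ne_zero hz.symm
    exact ⟨Units.mk0 z hz0, by ext; simpa using hz⟩)

noncomputable def divACU : DivisibleBy (Additive ℂˣ) ℤ := by
  haveI : RootableBy ℂˣ ℕ := rootCU
  haveI R : RootableBy ℂˣ ℤ := Group.rootableByIntOfRootableByNat ℂˣ
  exact
  { div := fun a n => Additive.ofMul (RootableBy.root (Additive.toMul a) n)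
    div_zero := fun a => congrArg Additive.ofMul (RootableBy.root_zero _)
    div_cancel := fun {n} a hn => by
      rw [← ofMul_zpow, RootableBy.root_cancel _ hn]
      rfl }

lemma exists_char_extension {G : Type} [AddCommGroup G] (H : AddSubgroup G) (f : G → ℂ)
    (habs : ∀ x ∈ H, Complex.normSq (f x) = 1)
    (hmul : ∀ x ∈ H, ∀ y ∈ H, f (x + y) = f x * f y) :
    ∃ χ : G → ℂ, ((∀ a b, χ (a + b) = χ a * χ b) ∧ ∀ a, ‖χ a‖ = 1) ∧
      ∀ x ∈ H, χ x = f x := by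
  haveI : DivisibleBy (Additive ℂˣ) ℤ := divACU
  haveI inj : Module.Injective ℤ (Additive ℂˣ) := (Module.Baer.of_divisible _).injective
  have hne : ∀ x ∈ H, f x ≠ 0 := fun x hx h0 => by
    have := habs x hx; rw [h0] at this; simp at this
  set φ : ↥H →+ Additive ℂˣ := AddMonoidHom.mk'
    (fun x => Additive.ofMul (Units.mk0 (f x) (hne x x.2)))
    (fun a b => by
      rw [← ofMul_mul]
      congr 1
      exact Units.ext (hmul a a.2 b b.2)) with hφ
  obtain ⟨h, hh⟩ := inj.out (H.subtype.toIntLinearMap)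
    (fun a b hab => Subtype.coe_injective (by simpa using hab)) (φ.toIntLinearMap)
  refine ⟨fun x => ((Additive.toMul (h x) : ℂˣ) : ℂ) / (‖((Additive.toMul (h x) : ℂˣ) : ℂ)‖ : ℂ),
    ⟨fun a b => ?_, fun a => ?_⟩, fun x hx => ?_⟩
  · show (((Additive.toMul (h (a+b)) : ℂˣ) : ℂ) / (‖((Additive.toMul (h (a+b)) : ℂˣ) : ℂ)‖ : ℂ)) = _
    have e : h (a + b) = h a + h b := map_add h a b
    rw [e]
    have : Additive.toMul (h a + h b) = Additive.toMul (h a) * Additive.toMul (h b) := rfl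
    rw [this]
    push_cast [Units.val_mul, map_mul, norm_mul]
    field_simp
  · have hne0 : ((Additive.toMul (h a) : ℂˣ) : ℂ) ≠ 0 := Units.ne_zero _
    rw [norm_div, Complex.norm_real, norm_norm]
    rw [div_self]
    simpa using hne0
  · show (((Additive.toMul (h x) : ℂˣ) : ℂ) / (‖((Additive.toMul (h x) : ℂˣ) : ℂ)‖ : ℂ)) = _
    have e2 := hh ⟨x, hx⟩
    have e4 : h x = Additive.ofMul (Units.mk0 (f x) (hne x hx)) := e2
    rw [e4]
    have e5 : (Additive.toMul (Additive.ofMul (Units.mk0 (f x) (hne x hx))) : ℂˣ)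
        = Units.mk0 (f x) (hne x hx) := rfl
    rw [e5]
    have habs1 : ‖f x‖ = 1 := by
      have := habs x hx
      have h2 : ‖f x‖ ^ 2 = 1 := by rw [Complex.sq_norm, this]
      nlinarith [norm_nonneg (f x)]
    simp [habs1]


lemma coset2 (Y : AddSubgroup ℚ) (x y : ↥Y) (hx : ¬∃ t : ↥Y, t + t = x)
    (hy : ¬∃ t : ↥Y, t + t = y) : ∃ t : ↥Y, t + t = x + y := by
  classical
  set q : ℚ := (x : ℚ) with hqdef
  set r : ℚ := (y : ℚ) with hrdef
  have hq0 : q ≠ 0 := fun h => hx ⟨0, by apply Subtype.ext; simp [← hqdef, h]⟩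
  have hr0 : r ≠ 0 := fun h => hy ⟨0, by apply Subtype.ext; simp [← hrdef, h]⟩
  set N : ℤ := (q.den : ℤ) * r.den with hN
  have hN0 : (N : ℚ) ≠ 0 := by
    simp [hN]
  set A : ℤ := q.num * r.den with hA
  set C : ℤ := r.num * q.den with hC
  have hqden : q * (q.den : ℚ) = (q.num : ℚ) := by
    have h := Rat.num_div_den q
    field_simp [Rat.den_nz] at h ⊢
    exact h.symm
  have hrden : r * (r.den : ℚ) = (r.num : ℚ) := by
    have h := Rat.num_div_den r
    field_simp [Rat.den_nz] at h ⊢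
    exact h.symm
  have hqA : (A : ℚ) = q * N := by
    push_cast [hA, hN]
    rw [← hqden]; ring
  have hrC : (C : ℚ) = r * N := by
    push_cast [hC, hN]
    rw [← hrden]; ring
  have hA0 : A ≠ 0 := by
    simp only [hA, mul_ne_zero_iff]
    exact ⟨Rat.num_ne_zero.mpr hq0, Int.natCast_ne_zero.mpr r.den_nz⟩
  set g : ℤ := (Int.gcd A C : ℤ) with hg
  have hg0 : g ≠ 0 := by
    simp only [hg, ne_eq, Int.natCast_eq_zero, Int.gcd_eq_zero_iff, not_and_or]
    left; exact hA0
  set w : ↥Y := Int.gcdA A C • x + Int.gcdB A C • y with hw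
  have hwcoe : (w : ℚ) = (Int.gcdA A C : ℚ) * q + (Int.gcdB A C : ℚ) * r := by
    have : (w : ℚ) = Int.gcdA A C • q + Int.gcdB A C • r := rfl
    rw [this, zsmul_eq_mul, zsmul_eq_mul]
  have hwN : (w : ℚ) * N = (g : ℚ) := by
    have hb : (Int.gcd A C : ℤ) = A * Int.gcdA A C + C * Int.gcdB A C := Int.gcd_eq_gcd_ab A C
    rw [hwcoe, hg, add_mul, mul_assoc, mul_assoc, ← hqA, ← hrC]
    have hb2 : Int.gcdA A C * A + Int.gcdB A C * C = (Int.gcd A C : ℤ) := by linarith [hb]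
    exact_mod_cast hb2
  have hdvdA : g ∣ A := Int.gcd_dvd_left A C
  have hdvdC : g ∣ C := Int.gcd_dvd_right A C
  set a' : ℤ := A / g with ha'
  set c' : ℤ := C / g with hc'
  have hAg : A = g * a' := (Int.mul_ediv_cancel' hdvdA).symm
  have hCg : C = g * c' := (Int.mul_ediv_cancel' hdvdC).symm
  have hxw : x = a' • w := by
    apply Subtype.ext
    have hcoe : ((a' • w : ↥Y) : ℚ) = (a' : ℚ) * (w : ℚ) := by
      have : ((a' • w : ↥Y) : ℚ) = a' • (w : ℚ) := rfl
      rw [this, zsmul_eq_mul]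
    rw [hcoe]
    have h1 : q * N = (a' : ℚ) * ((w : ℚ) * N) := by
      rw [hwN, ← hqA, hAg]; push_cast; ring
    have h2 : (q - (a' : ℚ) * (w : ℚ)) * N = 0 := by rw [sub_mul]; linarith [h1]
    rcases mul_eq_zero.mp h2 with h | h
    · have := sub_eq_zero.mp h
      exact this
    · exact absurd h hN0
  have hyw : y = c' • w := by
    apply Subtype.ext
    have hcoe : ((c' • w : ↥Y) : ℚ) = (c' : ℚ) * (w : ℚ) := by
      have : ((c' • w : ↥Y) : ℚ) = c' • (w : ℚ) := rfl
      rw [this, zsmul_eq_mul]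
    rw [hcoe]
    have h1 : r * N = (c' : ℚ) * ((w : ℚ) * N) := by
      rw [hwN, ← hrC, hCg]; push_cast; ring
    have h2 : (r - (c' : ℚ) * (w : ℚ)) * N = 0 := by rw [sub_mul]; linarith [h1]
    rcases mul_eq_zero.mp h2 with h | h
    · exact sub_eq_zero.mp h
    · exact absurd h hN0
  have hodda : ¬Even a' := by
    rintro ⟨m, hm⟩
    exact hx ⟨m • w, by rw [hxw, hm, add_smul]⟩
  have hoddc : ¬Even c' := by
    rintro ⟨m, hm⟩
    exact hy ⟨m • w, by rw [hyw, hm, add_smul]⟩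
  have heven : Even (a' + c') := by
    rw [Int.even_add]
    simp [hodda, hoddc]
  obtain ⟨k, hk⟩ := heven
  exact ⟨k • w, by rw [hxw, hyw, ← add_smul, ← hk, add_smul]⟩


section Core
variable {G : Type*} [AddCommGroup G]

lemma killLemma (p q r : G → ℝ)
    (hpev : ∀ x, p (-x) = p x)
    (hptr : ∀ x, p x = 1 → ∀ y, p (x + y) = p y)
    (hD01 : ∀ t : G, p (t + t) = 0 ∨ p (t + t) = 1)
    (hallone : ∀ z : G, (∃ t, t + t = z) → p z * q z * r z ≠ 0 →
      p z = 1 ∧ q z = 1 ∧ r z = 1)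
    (pair : ∀ u v, p (u + v) * (q (u - v) * r (u - v)) =
      (p u * q u * r u) * (p v * q v * r v))
    (hcoset : ∀ x y : G, (¬∃ t, t + t = x) → (¬∃ t, t + t = y) → ∃ t, t + t = x + y)
    (W : G) (hWD : ¬∃ t, t + t = W) (hpW : p W = 0) (hqW : q W ≠ 0) (hrW : r W ≠ 0) :
    ∀ x, p x = 0 ∨ p x = 1 := by
  have key : ∀ v : G, p (W + v + v) = 0 := by
    intro v
    by_contra hne
    have hpair := pair (W + v) v
    have e1 : W + v + v = W + v + v := rfl
    have e2 : W + v - v = W := by abel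
    rw [e2] at hpair
    have hL : p (W + v + v) * (q W * r W) ≠ 0 :=
      mul_ne_zero hne (mul_ne_zero hqW hrW)
    rw [hpair] at hL
    have hPi1 : p (W + v) * q (W + v) * r (W + v) ≠ 0 := fun h => hL (by rw [h]; ring)
    have hPi2 : p v * q v * r v ≠ 0 := fun h => hL (by rw [h]; ring)
    by_cases hv : ∃ t, t + t = v
    · obtain ⟨hp1, _, _⟩ := hallone v hv hPi2
      have := hptr v hp1 W
      rw [add_comm v W] at this
      rw [this] at hPi1
      rw [hpW] at hPi1
      simp at hPi1
    · have hWv : ∃ t, t + t = W + v := hcoset W v hWD hv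
      obtain ⟨hp1, _, _⟩ := hallone (W + v) hWv hPi1
      have := hptr (W + v) hp1 (-v)
      have e3 : W + v + -v = W := by abel
      rw [e3, hpW, hpev] at this
      exact hPi2 (by rw [show p v * q v * r v = 0 from by rw [← this]; ring]; )
  intro x
  by_cases hx : ∃ t, t + t = x
  · obtain ⟨t, rfl⟩ := hx
    exact hD01 t
  · left
    have hmW : ¬∃ t, t + t = -W := by
      rintro ⟨t, ht⟩
      exact hWD ⟨-t, by rw [← neg_add, ht, neg_neg]⟩
    obtain ⟨t, ht⟩ := hcoset x (-W) hx hmW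
    have hxe : W + t + t = x := by
      have h2 : t + t = x + -W := ht
      rw [add_assoc, h2]
      abel
    rw [← hxe]
    exact key t
end Core

section Core2
variable {G : Type*} [AddCommGroup G]

lemma trich {s : ℝ} (h0 : 0 ≤ s) (h1 : s ≤ 1) :
    s = 0 ∨ s = 1 ∨ (0 < s ∧ s < 1) := by
  rcases eq_or_lt_of_le h0 with h | h
  · exact Or.inl h.symm
  rcases eq_or_lt_of_le h1 with h' | h'
  · exact Or.inr (Or.inl h')
  · exact Or.inr (Or.inr ⟨h, h'⟩)

lemma coreLemma (p q r : G → ℝ)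
    (hp0 : p 0 = 1) (hq0 : q 0 = 1) (hr0 : r 0 = 1)
    (hpnn : ∀ x, 0 ≤ p x) (hqnn : ∀ x, 0 ≤ q x) (hrnn : ∀ x, 0 ≤ r x)
    (hple : ∀ x, p x ≤ 1) (hqle : ∀ x, q x ≤ 1) (hrle : ∀ x, r x ≤ 1)
    (hpev : ∀ x, p (-x) = p x) (hqev : ∀ x, q (-x) = q x) (hrev : ∀ x, r (-x) = r x)
    (hptr : ∀ x, p x = 1 → ∀ y, p (x + y) = p y)
    (hqtr : ∀ x, q x = 1 → ∀ y, q (x + y) = q y)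
    (hrtr : ∀ x, r x = 1 → ∀ y, r (x + y) = r y)
    (pairp : ∀ u v, p (u + v) * (q (u - v) * r (u - v)) =
      (p u * q u * r u) * (p v * q v * r v))
    (pairq : ∀ u v, q (u + v) * (p (u - v) * r (u - v)) =
      (p u * q u * r u) * (p v * q v * r v))
    (pairr : ∀ u v, r (u + v) * (p (u - v) * q (u - v)) =
      (p u * q u * r u) * (p v * q v * r v))
    (triple : ∀ x v w, p (x + v - w) * q (x - v + w) * r (x - v - w) =
      (p x * q x * r x) * ((p v * q v * r v) * (p w * q w * r w)))
    (hcoset : ∀ x y : G, (¬∃ t, t + t = x) → (¬∃ t, t + t = y) → ∃ t, t + t = x + y) :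
    (∀ x, p x = 0 ∨ p x = 1) ∨ (∀ x, q x = 0 ∨ q x = 1) ∨ (∀ x, r x = 0 ∨ r x = 1) := by
  set Pi : G → ℝ := fun x => p x * q x * r x with hPi
  have hPi' : ∀ z, Pi z = p z * q z * r z := fun z => rfl
  have hsub : ∀ u : G, u - u = 0 := fun u => sub_self u
  have hsub2 : ∀ u : G, u - -u = u + u := fun u => by abel
  have hadd2 : ∀ u : G, u + -u = 0 := fun u => by abel
  -- squares of Pi
  have hP2p : ∀ u, p (u + u) = Pi u ^ 2 := by
    intro u
    have h := pairp u u
    rw [hsub, hq0, hr0] at h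
    simpa [hPi, sq] using h
  have hP2q : ∀ u, q (u + u) = Pi u ^ 2 := by
    intro u
    have h := pairq u u
    rw [hsub, hp0, hr0] at h
    simpa [hPi, sq] using h
  have hP2r : ∀ u, r (u + u) = Pi u ^ 2 := by
    intro u
    have h := pairr u u
    rw [hsub, hp0, hq0] at h
    simpa [hPi, sq] using h
  have hPiev : ∀ u, Pi (-u) = Pi u := by
    intro u; simp only [hPi, hpev, hqev, hrev]
  have hProj : ∀ u, Pi u ^ 2 = 0 ∨ Pi u ^ 2 = 1 := by
    intro u
    have h := pairp u (-u)
    rw [hadd2, hsub2, hp0, hpev, hqev, hrev, hP2q, hP2r, one_mul] at h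
    have hh : Pi u ^ 2 * Pi u ^ 2 = Pi u ^ 2 := by
      rw [h]; simp only [hPi]; ring
    have hz : Pi u ^ 2 * (Pi u ^ 2 - 1) = 0 := by rw [mul_sub, hh]; ring
    rcases mul_eq_zero.mp hz with h' | h'
    · exact Or.inl h'
    · exact Or.inr (by linarith [sub_eq_zero.mp h'])
  have hD01p : ∀ t : G, p (t + t) = 0 ∨ p (t + t) = 1 := fun t => by
    rw [hP2p]; exact hProj t
  have hD01q : ∀ t : G, q (t + t) = 0 ∨ q (t + t) = 1 := fun t => by
    rw [hP2q]; exact hProj t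
  have hD01r : ∀ t : G, r (t + t) = 0 ∨ r (t + t) = 1 := fun t => by
    rw [hP2r]; exact hProj t
  -- everything 1 on doubled points with nonzero product
  have hallone : ∀ z : G, (∃ t, t + t = z) → Pi z ≠ 0 →
      p z = 1 ∧ q z = 1 ∧ r z = 1 := by
    rintro z ⟨t, rfl⟩ hne
    have hv : p (t + t) = q (t + t) ∧ q (t + t) = r (t + t) := by
      rw [hP2p, hP2q, hP2r]; exact ⟨rfl, rfl⟩
    rcases hD01p t with h | h
    · exfalso; apply hne; simp only [hPi]; rw [h]; ring
    · exact ⟨h, by rw [← hv.1, h], by rw [← hv.2, ← hv.1, h]⟩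
  -- small step : a value strictly between 0 and 1 kills the others
  have hsmallp : ∀ W, 0 < p W → p W < 1 → q W * r W = 0 := by
    intro W h0 h1
    have hb : Pi W < 1 := by
      have : Pi W ≤ p W := by
        rw [hPi']
        nlinarith [hqnn W, hrnn W, hqle W, hrle W, hpnn W,
          mul_le_mul_of_nonneg_left (mul_le_mul (hqle W) (hrle W) (hrnn W) zero_le_one) (hpnn W)]
      linarith
    have hbn : 0 ≤ Pi W := by
      rw [hPi']
      exact mul_nonneg (mul_nonneg (hpnn W) (hqnn W)) (hrnn W)
    have : Pi W ^ 2 = 0 := by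
      rcases hProj W with h | h
      · exact h
      · nlinarith
    have hPiz : Pi W = 0 := by nlinarith
    rw [hPi'] at hPiz
    rcases mul_eq_zero.mp hPiz with h | h
    · rcases mul_eq_zero.mp h with h' | h'
      · linarith
      · rw [h']; ring
    · rw [h]; ring
  have hsmallq : ∀ W, 0 < q W → q W < 1 → p W * r W = 0 := by
    intro W h0 h1
    have hb : Pi W < 1 := by
      have : Pi W ≤ q W := by
        rw [hPi']
        nlinarith [hpnn W, hrnn W, hple W, hrle W, hqnn W,
          mul_le_mul_of_nonneg_left (mul_le_mul (hple W) (hrle W) (hrnn W) zero_le_one) (hqnn W)]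
      linarith
    have hbn : 0 ≤ Pi W := by
      rw [hPi']
      exact mul_nonneg (mul_nonneg (hpnn W) (hqnn W)) (hrnn W)
    have : Pi W ^ 2 = 0 := by
      rcases hProj W with h | h
      · exact h
      · nlinarith
    have hPiz : Pi W = 0 := by nlinarith
    rw [hPi'] at hPiz
    rcases mul_eq_zero.mp hPiz with h | h
    · rcases mul_eq_zero.mp h with h' | h'
      · rw [h']; ring
      · linarith
    · rw [h]; ring
  have hsmallr : ∀ W, 0 < r W → r W < 1 → p W * q W = 0 := by
    intro W h0 h1
    have hb : Pi W < 1 := by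
      have : Pi W ≤ r W := by
        rw [hPi']
        nlinarith [hpnn W, hqnn W, hple W, hqle W, hrnn W,
          mul_le_mul_of_nonneg_left (mul_le_mul (hple W) (hqle W) (hqnn W) zero_le_one) (hrnn W)]
      linarith
    have hbn : 0 ≤ Pi W := by
      rw [hPi']
      exact mul_nonneg (mul_nonneg (hpnn W) (hqnn W)) (hrnn W)
    have : Pi W ^ 2 = 0 := by
      rcases hProj W with h | h
      · exact h
      · nlinarith
    have hPiz : Pi W = 0 := by nlinarith
    rw [hPi'] at hPiz
    rcases mul_eq_zero.mp hPiz with h | h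
    · exact h
    · linarith
  by_contra hcon
  push_neg at hcon
  obtain ⟨hc1, hc2, hc3⟩ := hcon
  obtain ⟨wp, hwp0⟩ := hc1
  obtain ⟨wq, hwq0⟩ := hc2
  obtain ⟨wr, hwr0⟩ := hc3
  have hwp : ¬(p wp = 0 ∨ p wp = 1) := by rintro (h | h); exacts [hwp0.1 h, hwp0.2 h]
  have hwq : ¬(q wq = 0 ∨ q wq = 1) := by rintro (h | h); exacts [hwq0.1 h, hwq0.2 h]
  have hwr : ¬(r wr = 0 ∨ r wr = 1) := by rintro (h | h); exacts [hwr0.1 h, hwr0.2 h]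
  have hwpv : 0 < p wp ∧ p wp < 1 := by
    rcases trich (hpnn wp) (hple wp) with h | h | h
    · exact absurd (Or.inl h) hwp
    · exact absurd (Or.inr h) hwp
    · exact h
  have hwqv : 0 < q wq ∧ q wq < 1 := by
    rcases trich (hqnn wq) (hqle wq) with h | h | h
    · exact absurd (Or.inl h) hwq
    · exact absurd (Or.inr h) hwq
    · exact h
  have hwrv : 0 < r wr ∧ r wr < 1 := by
    rcases trich (hrnn wr) (hrle wr) with h | h | h
    · exact absurd (Or.inl h) hwr
    · exact absurd (Or.inr h) hwr
    · exact h
  have hwpD : ¬∃ t, t + t = wp := by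
    rintro ⟨t, rfl⟩
    exact hwp (hD01p t)
  have hwqD : ¬∃ t, t + t = wq := by
    rintro ⟨t, rfl⟩
    exact hwq (hD01q t)
  have hwrD : ¬∃ t, t + t = wr := by
    rintro ⟨t, rfl⟩
    exact hwr (hD01r t)
  -- full support lemma
  have hfull : ∀ z : G, Pi z ≠ 0 → p z = 1 ∧ q z = 1 ∧ r z = 1 := by
    intro z hz
    by_cases hD : ∃ t, t + t = z
    · exact hallone z hD hz
    · have hpz : p z ≠ 0 := fun h => hz (by simp only [hPi]; rw [h]; ring)
      have hqz : q z ≠ 0 := fun h => hz (by simp only [hPi]; rw [h]; ring)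
      have hrz : r z ≠ 0 := fun h => hz (by simp only [hPi]; rw [h]; ring)
      have hp1 : p z = 1 := by
        rcases trich (hpnn z) (hple z) with h | h | h
        · exact absurd h hpz
        · exact h
        · have := hsmallp z h.1 h.2
          rcases mul_eq_zero.mp this with h' | h'
          · exact absurd h' hqz
          · exact absurd h' hrz
      have hq1 : q z = 1 := by
        rcases trich (hqnn z) (hqle z) with h | h | h
        · exact absurd h hqz
        · exact h
        · have := hsmallq z h.1 h.2
          rcases mul_eq_zero.mp this with h' | h'
          · exact absurd h' hpz
          · exact absurd h' hrz
      have hr1 : r z = 1 := by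
        rcases trich (hrnn z) (hrle z) with h | h | h
        · exact absurd h hrz
        · exact h
        · have := hsmallr z h.1 h.2
          rcases mul_eq_zero.mp this with h' | h'
          · exact absurd h' hpz
          · exact absurd h' hqz
      exact ⟨hp1, hq1, hr1⟩
  -- the others vanish at each bad point
  have hqwp0 : q wp = 0 ∧ r wp = 0 := by
    have h := hsmallp wp hwpv.1 hwpv.2
    rcases mul_eq_zero.mp h with h' | h'
    · refine ⟨h', ?_⟩
      by_contra hr'
      have := killLemma q p r hqev hqtr hD01q
        (fun z hz hne => by
          have hPz : Pi z ≠ 0 := by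
            rw [hPi']
            intro hh
            exact hne (by linear_combination hh)
          obtain ⟨a, b, c⟩ := hallone z hz hPz
          exact ⟨b, a, c⟩)
        (fun u v => by rw [pairq u v]; ring)
        hcoset wp hwpD h' (ne_of_gt hwpv.1) hr'
      exact hwq (this wq)
    · refine ⟨?_, h'⟩
      by_contra hq'
      have := killLemma r p q hrev hrtr hD01r
        (fun z hz hne => by
          have hPz : Pi z ≠ 0 := by
            rw [hPi']
            intro hh
            exact hne (by linear_combination hh)
          obtain ⟨a, b, c⟩ := hallone z hz hPz
          exact ⟨c, a, b⟩)
        (fun u v => by rw [pairr u v]; ring)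
        hcoset wp hwpD h' (ne_of_gt hwpv.1) hq'
      exact hwr (this wr)
  have hpwq0 : p wq = 0 ∧ r wq = 0 := by
    have h := hsmallq wq hwqv.1 hwqv.2
    rcases mul_eq_zero.mp h with h' | h'
    · refine ⟨h', ?_⟩
      by_contra hr'
      have := killLemma p q r hpev hptr hD01p
        (fun z hz hne => hallone z hz (by rw [hPi']; exact hne))
        (fun u v => by rw [pairp u v])
        hcoset wq hwqD h' (ne_of_gt hwqv.1) hr'
      exact hwp (this wp)
    · refine ⟨?_, h'⟩
      by_contra hp'
      have := killLemma r p q hrev hrtr hD01r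
        (fun z hz hne => by
          have hPz : Pi z ≠ 0 := by
            rw [hPi']
            intro hh
            exact hne (by linear_combination hh)
          obtain ⟨a, b, c⟩ := hallone z hz hPz
          exact ⟨c, a, b⟩)
        (fun u v => by rw [pairr u v]; ring)
        hcoset wq hwqD h' hp' (ne_of_gt hwqv.1)
      exact hwr (this wr)
  -- final triple argument
  obtain ⟨x₀, hx₀⟩ := hcoset wp wq hwpD hwqD
  have hmain : ∀ w : G, p wp * q wq * r (wq - w - w) =
      Pi x₀ * (Pi (x₀ + w - wq) * Pi w) := by
    intro w
    have h := triple x₀ (x₀ + w - wq) w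
    have e1 : x₀ + (x₀ + w - wq) - w = wp := by
      have : x₀ + (x₀ + w - wq) - w = (x₀ + x₀) - wq := by abel
      rw [this, hx₀]
      abel
    have e2 : x₀ - (x₀ + w - wq) + w = wq := by abel
    have e3 : x₀ - (x₀ + w - wq) - w = wq - w - w := by abel
    rw [e1, e2, e3] at h
    exact h
  by_cases hex : ∃ w : G, Pi x₀ * (Pi (x₀ + w - wq) * Pi w) ≠ 0
  · obtain ⟨w, hw⟩ := hex
    have h1 : Pi x₀ ≠ 0 := fun h => hw (by rw [h]; ring)
    have h2 : Pi (x₀ + w - wq) ≠ 0 := fun h => hw (by rw [h]; ring)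
    have h3 : Pi w ≠ 0 := fun h => hw (by rw [h]; ring)
    have q1 := (hfull _ h1).2.1
    have q2 := (hfull _ h2).2.1
    have q3 := (hfull _ h3).2.1
    have step1 : q (x₀ + w) = q w := hqtr x₀ q1 w
    have step2 : q ((x₀ + w - wq) + wq) = q wq := hqtr _ q2 wq
    have e4 : (x₀ + w - wq) + wq = x₀ + w := by abel
    rw [e4] at step2
    rw [step1, q3] at step2
    linarith [hwqv.2, step2.symm]
  · push_neg at hex
    have hzero : ∀ w : G, r (wq - w - w) = 0 := by
      intro w
      have h := hmain w
      rw [hex w] at h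
      rcases mul_eq_zero.mp h with h' | h'
      · rcases mul_eq_zero.mp h' with h'' | h''
        · exact absurd h'' (ne_of_gt hwpv.1)
        · exact absurd h'' (ne_of_gt hwqv.1)
      · exact h'
    have hmwr : ¬∃ t, t + t = -wr := by
      rintro ⟨t, ht⟩
      exact hwrD ⟨-t, by rw [← neg_add, ht, neg_neg]⟩
    obtain ⟨t, ht⟩ := hcoset wq (-wr) hwqD hmwr
    have : wq - t - t = wr := by
      have h2 : t + t = wq + -wr := ht
      have : wq - (t + t) = wr := by rw [h2]; abel
      rw [← this]
      abel
    rw [← this] at hwrv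
    rw [hzero t] at hwrv
    exact absurd hwrv.1 (lt_irrefl 0)
end Core2


lemma prod3R (a b c : Fin 3) (hab : a ≠ b) (hac : a ≠ c) (hbc : b ≠ c) (F : Fin 3 → ℝ) :
    (∏ i, F i) = F a * (F b * F c) := by
  fin_cases a <;> fin_cases b <;> fin_cases c <;>
    first
      | exact absurd rfl hab
      | exact absurd rfl hac
      | exact absurd rfl hbc
      | (simp [Fin.prod_univ_three]; ring)

lemma minority3 (d : Fin 3 → ℤ) (h : ∀ i, d i = 1 ∨ d i = -1)
    (hnc : ¬(d 0 = d 1 ∧ d 1 = d 2)) :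
    ∃ a b c : Fin 3, (∀ i, i = a ∨ i = b ∨ i = c) ∧ a ≠ b ∧ a ≠ c ∧ b ≠ c ∧
      d b = d c ∧ d a = -d b := by
  rcases h 0 with h0 | h0 <;> rcases h 1 with h1 | h1 <;> rcases h 2 with h2 | h2
  · exact absurd ⟨by rw [h0, h1], by rw [h1, h2]⟩ hnc
  · exact ⟨2, 0, 1, by decide, by decide, by decide, by decide,
      by simp [h0, h1], by simp [h2, h0]⟩
  · exact ⟨1, 0, 2, by decide, by decide, by decide, by decide,
      by simp [h0, h2], by simp [h1, h0]⟩
  · exact ⟨0, 1, 2, by decide, by decide, by decide, by decide,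
      by simp [h1, h2], by simp [h0, h1]⟩
  · exact ⟨0, 1, 2, by decide, by decide, by decide, by decide,
      by simp [h1, h2], by simp [h0, h1]⟩
  · exact ⟨1, 0, 2, by decide, by decide, by decide, by decide,
      by simp [h0, h2], by simp [h1, h0]⟩
  · exact ⟨2, 0, 1, by decide, by decide, by decide, by decide,
      by simp [h0, h1], by simp [h2, h0]⟩
  · exact absurd ⟨by rw [h0, h1], by rw [h1, h2]⟩ hnc

lemma prodsq_one {a b c : ℝ} (ha0 : 0 ≤ a) (ha1 : a ≤ 1) (hb0 : 0 ≤ b) (hb1 : b ≤ 1)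
    (hc0 : 0 ≤ c) (hc1 : c ≤ 1) (h : a * a * (b * b * (c * c)) = 1) :
    a = 1 ∧ b = 1 ∧ c = 1 := by
  have hbb : b * b ≤ 1 := by nlinarith
  have hcc : c * c ≤ 1 := by nlinarith
  have haa : a * a ≤ 1 := by nlinarith
  have hbbcc : b * b * (c * c) ≤ 1 := by nlinarith [mul_nonneg hb0 hb0, mul_nonneg hc0 hc0]
  have haacc : a * a * (c * c) ≤ 1 := by nlinarith [mul_nonneg ha0 ha0, mul_nonneg hc0 hc0]
  have haabb : a * a * (b * b) ≤ 1 := by nlinarith [mul_nonneg ha0 ha0, mul_nonneg hb0 hb0]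
  have ha2 : 1 ≤ a * a := by nlinarith [mul_nonneg ha0 ha0, mul_nonneg hb0 hb0, mul_nonneg hc0 hc0]
  have hb2 : 1 ≤ b * b := by nlinarith [mul_nonneg ha0 ha0, mul_nonneg hb0 hb0, mul_nonneg hc0 hc0]
  have hc2 : 1 ≤ c * c := by nlinarith [mul_nonneg ha0 ha0, mul_nonneg hb0 hb0, mul_nonneg hc0 hc0]
  refine ⟨by nlinarith, by nlinarith, by nlinarith⟩


lemma third3 (a b : Fin 3) (h : a ≠ b) :
    ∃ c, a ≠ c ∧ b ≠ c ∧ ∀ i : Fin 3, i = a ∨ i = b ∨ i = c := by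
  fin_cases a <;> fin_cases b <;>
    first
      | exact absurd rfl h
      | exact ⟨2, by decide, by decide, by decide⟩
      | exact ⟨1, by decide, by decide, by decide⟩
      | exact ⟨0, by decide, by decide, by decide⟩

/-- Let `Y` be a nonzero subgroup of `ℚ` with `pY ≠ Y` for every prime `p`
(`Y` is the character group of an `a`-adic solenoid on which no `x ↦ px` is a
topological automorphism). If normalized positive definite functions `f_1, f_2, f_3`
on `Y` satisfy the Skitovich–Darmois equation with coefficients
`ε i j ∈ {1, −1}`, then at least one `f i` has idempotent form: there are a
subgroup `H` of `Y` and a character `χ` of `Y` with `f i = χ` on `H` and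
`f i = 0` off `H`. -/
theorem skitovich_darmois_solenoid_dual_three_forms
    (Y : AddSubgroup ℚ) (hY : Y ≠ ⊥)
    (hprime : ∀ p : ℕ, p.Prime → Y.map (AddMonoidHom.mulLeft (p : ℚ)) ≠ Y)
    (f : Fin 3 → ↥Y → ℂ)
    (hpd : ∀ i, IsPosDefFn (f i)) (hnorm : ∀ i, f i 0 = 1)
    (ε : Fin 3 → Fin 3 → ℤ) (hε : ∀ i j, ε i j = 1 ∨ ε i j = -1)
    (heq : ∀ u : Fin 3 → ↥Y,
      ∏ i, f i (∑ j, ε i j • u j) = ∏ i, ∏ j, f i (ε i j • u j)) :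
    ∃ i : Fin 3, ∃ H : AddSubgroup ↥Y, ∃ χ : ↥Y → ℂ, IsCharFn χ ∧
      (∀ y ∈ H, f i y = χ y) ∧ (∀ y ∉ H, f i y = 0) := by
  classical
  set ψ : Fin 3 → ↥Y → ℝ := fun i x => Complex.normSq (f i x) with hψd
  have hψ' : ∀ i x, ψ i x = Complex.normSq (f i x) := fun _ _ => rfl
  have hψ0 : ∀ i, ψ i (0 : ↥Y) = 1 := fun i => by
    rw [hψ', hnorm i, Complex.normSq_one]
  have hψnn : ∀ i x, 0 ≤ ψ i x := fun i x => Complex.normSq_nonneg _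
  have hψle : ∀ i x, ψ i x ≤ 1 := fun i x => pdbound_s8 (hpd i) (hnorm i) x
  have hψev : ∀ (i : Fin 3) (x : ↥Y), ψ i (-x) = ψ i x := fun i x => by
    rw [hψ', hψ', pdconj_s8 (hpd i) (hnorm i), Complex.normSq_conj]
  have hψtr : ∀ i x, ψ i x = 1 → ∀ y, ψ i (x + y) = ψ i y := by
    intro i x h1 y
    rw [hψ', hψ', mul_of_normSq_one (hpd i) (hnorm i) h1 y, Complex.normSq_mul]
    rw [hψ' i x] at h1
    rw [h1, one_mul]
  have hpm : ∀ (i : Fin 3) (s : ℤ), (s = 1 ∨ s = -1) → ∀ x : ↥Y, ψ i (s • x) = ψ i x := by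
    intro i s hs x
    rcases hs with h | h
    · rw [h, one_zsmul]
    · rw [h, neg_one_zsmul, hψev]
  -- the common ending
  have charEnd : ∀ i : Fin 3, (∀ x : ↥Y, ψ i x = 0 ∨ ψ i x = 1) →
      ∃ j : Fin 3, ∃ H : AddSubgroup ↥Y, ∃ χ : ↥Y → ℂ, IsCharFn χ ∧
        (∀ y ∈ H, f j y = χ y) ∧ (∀ y ∉ H, f j y = 0) := by
    intro i h01
    set H : AddSubgroup ↥Y :=
      { carrier := {x | ψ i x = 1}
        zero_mem' := hψ0 i
        add_mem' := fun {x y} hx hy => by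
          have h := hψtr i x hx y
          show ψ i (x + y) = 1
          rw [h]; exact hy
        neg_mem' := fun {x} hx => by
          show ψ i (-x) = 1
          rw [hψev]; exact hx } with hH
    have hmem : ∀ x, x ∈ H ↔ ψ i x = 1 := fun x => Iff.rfl
    obtain ⟨χ, hχ, hext⟩ := exists_char_extension H (f i)
      (fun x hx => (hmem x).mp hx)
      (fun x hx y _ => mul_of_normSq_one (hpd i) (hnorm i) ((hmem x).mp hx) y)
    refine ⟨i, H, χ, hχ, fun y hy => (hext y hy).symm, fun y hy => ?_⟩
    rcases h01 y with h | h
    · exact Complex.normSq_eq_zero.mp h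
    · exact absurd ((hmem y).mpr h) hy
  set δ : Fin 3 → ℤ := fun i => ε i 0 * ε i 1 with hδd
  set γ : Fin 3 → ℤ := fun i => ε i 0 * ε i 2 with hγd
  have hδv : ∀ i, δ i = ε i 0 * ε i 1 := fun _ => rfl
  have hγv : ∀ i, γ i = ε i 0 * ε i 2 := fun _ => rfl
  have hsq : ∀ s : ℤ, (s = 1 ∨ s = -1) → s * s = 1 := fun s hs => by
    rcases hs with h | h <;> rw [h] <;> norm_num
  have hδ : ∀ i, δ i = 1 ∨ δ i = -1 := fun i => by
    rw [hδv i]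
    rcases hε i 0 with h | h <;> rcases hε i 1 with h' | h' <;> rw [h, h'] <;> norm_num
  have hγ : ∀ i, γ i = 1 ∨ γ i = -1 := fun i => by
    rw [hγv i]
    rcases hε i 0 with h | h <;> rcases hε i 2 with h' | h' <;> rw [h, h'] <;> norm_num
  -- master identity
  have hbase : ∀ u v w : ↥Y,
      (∏ i, ψ i (u + δ i • v + γ i • w)) = ∏ i, ψ i u * (ψ i v * ψ i w) := by
    intro u v w
    have h0 := congrArg (fun z : ℂ => Complex.normSq z) (heq ![u, v, w])
    simp only [map_prod] at h0
    have hL : (∏ i, Complex.normSq (f i (∑ j, ε i j • ![u, v, w] j)))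
        = ∏ i, ψ i (u + δ i • v + γ i • w) := by
      refine Finset.prod_congr rfl fun i _ => ?_
      have e0 : (∑ j, ε i j • ![u, v, w] j) = ε i 0 • u + ε i 1 • v + ε i 2 • w := by
        simp [Fin.sum_univ_three]
      have e1 : ε i 0 • (u + δ i • v + γ i • w) = ε i 0 • u + ε i 1 • v + ε i 2 • w := by
        rw [smul_add, smul_add, smul_smul, smul_smul, hδv i, hγv i,
          ← mul_assoc, ← mul_assoc, hsq _ (hε i 0), one_mul, one_mul]
      rw [e0, ← e1, ← hψ', hpm i _ (hε i 0)]
    have hR : (∏ i, ∏ j, Complex.normSq (f i (ε i j • ![u, v, w] j)))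
        = ∏ i, ψ i u * (ψ i v * ψ i w) := by
      refine Finset.prod_congr rfl fun i _ => ?_
      rw [Fin.prod_univ_three]
      simp only [Matrix.cons_val_zero, Matrix.cons_val_one, Matrix.head_cons,
        Matrix.cons_val_two, Matrix.tail_cons]
      rw [← hψ', ← hψ', ← hψ', hpm i _ (hε i 0), hpm i _ (hε i 1), hpm i _ (hε i 2), mul_assoc]
    rw [hL, hR] at h0
    exact h0
  have pair12 : ∀ u v : ↥Y, (∏ i, ψ i (u + δ i • v)) = ∏ i, ψ i u * ψ i v := by
    intro u v
    have h := hbase u v 0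
    simp only [smul_zero, add_zero, hψ0, mul_one] at h
    exact h
  have pair13 : ∀ u w : ↥Y, (∏ i, ψ i (u + γ i • w)) = ∏ i, ψ i u * ψ i w := by
    intro u w
    have h := hbase u 0 w
    simp only [smul_zero, add_zero, hψ0, one_mul] at h
    exact h
  have pair23 : ∀ v w : ↥Y, (∏ i, ψ i (v + (δ i * γ i) • w)) = ∏ i, ψ i v * ψ i w := by
    intro v w
    have h := hbase 0 v w
    have hL : (∏ i, ψ i ((0 : ↥Y) + δ i • v + γ i • w))
        = ∏ i, ψ i (v + (δ i * γ i) • w) := by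
      refine Finset.prod_congr rfl fun i _ => ?_
      have e1 : δ i • (v + (δ i * γ i) • w) = (0 : ↥Y) + δ i • v + γ i • w := by
        rw [smul_add, smul_smul, ← mul_assoc, hsq _ (hδ i), one_mul, zero_add]
      rw [← e1, hpm i _ (hδ i)]
    rw [hL] at h
    simp only [hψ0, one_mul] at h
    exact h
  -- helper to finish the "constant signs" cases
  have allOne : ∀ x : ↥Y, (1 : ℝ) = (∏ i, ψ i x * ψ i x) → ∀ j, ψ j x = 1 := by
    intro x h j
    rw [Fin.prod_univ_three] at h
    have h2 : ψ 0 x * ψ 0 x * (ψ 1 x * ψ 1 x * (ψ 2 x * ψ 2 x)) = 1 := by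
      linear_combination -h
    obtain ⟨q0, q1, q2⟩ := prodsq_one (hψnn 0 x) (hψle 0 x) (hψnn 1 x) (hψle 1 x)
      (hψnn 2 x) (hψle 2 x) h2
    fin_cases j
    exacts [q0, q1, q2]
  by_cases hncδ : δ 0 = δ 1 ∧ δ 1 = δ 2
  · -- δ constant
    have hcd : ∀ i, δ i = δ 0 := by
      intro i; fin_cases i
      · rfl
      · exact hncδ.1.symm
      · exact (hncδ.1.trans hncδ.2).symm
    have hmδ : (-δ 0 : ℤ) = 1 ∨ (-δ 0 : ℤ) = -1 := by
      rcases hδ 0 with h | h <;> rw [h] <;> norm_num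
    refine charEnd 0 fun x => Or.inr ?_
    have h := pair12 x ((-δ 0) • x)
    have hL : (∏ i, ψ i (x + δ i • (-δ 0) • x)) = 1 := by
      calc (∏ i, ψ i (x + δ i • (-δ 0) • x)) = ∏ _i : Fin 3, (1 : ℝ) := by
            refine Finset.prod_congr rfl fun i _ => ?_
            rw [smul_smul, hcd i, mul_neg, hsq _ (hδ 0), neg_one_zsmul,
              add_neg_cancel, hψ0]
        _ = 1 := Finset.prod_const_one
    have hR : (∏ i, ψ i x * ψ i ((-δ 0) • x)) = ∏ i, ψ i x * ψ i x :=
      Finset.prod_congr rfl fun i _ => by rw [hpm i _ hmδ]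
    rw [hL, hR] at h
    exact allOne x h 0
  by_cases hncγ : γ 0 = γ 1 ∧ γ 1 = γ 2
  · -- γ constant
    have hcd : ∀ i, γ i = γ 0 := by
      intro i; fin_cases i
      · rfl
      · exact hncγ.1.symm
      · exact (hncγ.1.trans hncγ.2).symm
    have hmγ : (-γ 0 : ℤ) = 1 ∨ (-γ 0 : ℤ) = -1 := by
      rcases hγ 0 with h | h <;> rw [h] <;> norm_num
    refine charEnd 0 fun x => Or.inr ?_
    have h := pair13 x ((-γ 0) • x)
    have hL : (∏ i, ψ i (x + γ i • (-γ 0) • x)) = 1 := by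
      calc (∏ i, ψ i (x + γ i • (-γ 0) • x)) = ∏ _i : Fin 3, (1 : ℝ) := by
            refine Finset.prod_congr rfl fun i _ => ?_
            rw [smul_smul, hcd i, mul_neg, hsq _ (hγ 0), neg_one_zsmul,
              add_neg_cancel, hψ0]
        _ = 1 := Finset.prod_const_one
    have hR : (∏ i, ψ i x * ψ i ((-γ 0) • x)) = ∏ i, ψ i x * ψ i x :=
      Finset.prod_congr rfl fun i _ => by rw [hpm i _ hmγ]
    rw [hL, hR] at h
    exact allOne x h 0
  by_cases hncτ : δ 0 * γ 0 = δ 1 * γ 1 ∧ δ 1 * γ 1 = δ 2 * γ 2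
  · -- δ*γ constant
    have hτ : ∀ i, δ i * γ i = 1 ∨ δ i * γ i = -1 := fun i => by
      rcases hδ i with h | h <;> rcases hγ i with h' | h' <;> rw [h, h'] <;> norm_num
    have hcd : ∀ i, δ i * γ i = δ 0 * γ 0 := by
      intro i; fin_cases i
      · rfl
      · exact hncτ.1.symm
      · exact (hncτ.1.trans hncτ.2).symm
    have hmτ : (-(δ 0 * γ 0) : ℤ) = 1 ∨ (-(δ 0 * γ 0) : ℤ) = -1 := by
      rcases hτ 0 with h | h <;> rw [h] <;> norm_num
    refine charEnd 0 fun x => Or.inr ?_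
    have h := pair23 x ((-(δ 0 * γ 0)) • x)
    have hL : (∏ i, ψ i (x + (δ i * γ i) • (-(δ 0 * γ 0)) • x)) = 1 := by
      calc (∏ i, ψ i (x + (δ i * γ i) • (-(δ 0 * γ 0)) • x)) = ∏ _i : Fin 3, (1 : ℝ) := by
            refine Finset.prod_congr rfl fun i _ => ?_
            rw [smul_smul, hcd i, mul_neg, hsq _ (hτ 0), neg_one_zsmul,
              add_neg_cancel, hψ0]
        _ = 1 := Finset.prod_const_one
    have hR : (∏ i, ψ i x * ψ i ((-(δ 0 * γ 0)) • x)) = ∏ i, ψ i x * ψ i x :=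
      Finset.prod_congr rfl fun i _ => by rw [hpm i _ hmτ]
    rw [hL, hR] at h
    exact allOne x h 0
  -- genuinely mixed case
  obtain ⟨a, b0, c0, hcov, hab0, hac0, hbc0, hδbc, hδa0⟩ := minority3 δ hδ hncδ
  obtain ⟨a2, b2, c2, hcov2, ha2b2, ha2c2, hb2c2, hγbc, hγa2⟩ := minority3 γ hγ hncγ
  have hδother : ∀ j, j ≠ a → δ j = -δ a := by
    intro j hj
    rcases hcov j with h | h | h
    · exact absurd h hj
    · rw [h]; linarith [hδa0]
    · rw [h]; linarith [hδa0, hδbc]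
  have hγother : ∀ j, j ≠ a2 → γ j = -γ a2 := by
    intro j hj
    rcases hcov2 j with h | h | h
    · exact absurd h hj
    · rw [h]; linarith [hγa2]
    · rw [h]; linarith [hγa2, hγbc]
  have ha2a : a2 ≠ a := by
    intro hEq
    apply hncτ
    have hval : ∀ i, δ i * γ i = δ a * γ a := by
      intro i
      by_cases hia : i = a
      · rw [hia]
      · have h1 : δ i = -δ a := hδother i hia
        have h2 : γ i = -γ a := by
          have h2' := hγother i (by rw [hEq]; exact hia)
          rw [hEq] at h2'
          exact h2'
        rw [h1, h2]; ring
    exact ⟨by rw [hval 0, hval 1], by rw [hval 1, hval 2]⟩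
  have hab : a ≠ a2 := fun h => ha2a h.symm
  obtain ⟨c', hac', hb'c', hcov'⟩ := third3 a a2 hab
  have hδb' : δ a2 = -δ a := hδother a2 ha2a
  have hδc' : δ c' = -δ a := hδother c' (fun h => hac' h.symm)
  have hγa : γ a = -γ a2 := hγother a hab
  have hγc' : γ c' = -γ a2 := hγother c' (fun h => hb'c' h.symm)
  -- smul computations
  have eδaa : ∀ v : ↥Y, δ a • δ a • v = v := fun v => by
    rw [smul_smul, hsq _ (hδ a), one_zsmul]
  have eδb : ∀ v : ↥Y, δ a2 • δ a • v = -v := fun v => by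
    rw [smul_smul, hδb', neg_mul, hsq _ (hδ a), neg_one_zsmul]
  have eδc : ∀ v : ↥Y, δ c' • δ a • v = -v := fun v => by
    rw [smul_smul, hδc', neg_mul, hsq _ (hδ a), neg_one_zsmul]
  have eγbb : ∀ v : ↥Y, γ a2 • γ a2 • v = v := fun v => by
    rw [smul_smul, hsq _ (hγ a2), one_zsmul]
  have eγa : ∀ v : ↥Y, γ a • γ a2 • v = -v := fun v => by
    rw [smul_smul, hγa, neg_mul, hsq _ (hγ a2), neg_one_zsmul]
  have eγc : ∀ v : ↥Y, γ c' • γ a2 • v = -v := fun v => by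
    rw [smul_smul, hγc', neg_mul, hsq _ (hγ a2), neg_one_zsmul]
  have hτpm : δ c' * γ c' = 1 ∨ δ c' * γ c' = -1 := by
    rcases hδ c' with h | h <;> rcases hγ c' with h' | h' <;> rw [h, h'] <;> norm_num
  have hca : (δ a * γ a) * (δ c' * γ c') = -1 := by
    rw [hδc', hγc', hγa]
    rcases hδ a with h | h <;> rcases hγ a2 with h' | h' <;> rw [h, h'] <;> norm_num
  have hcb : (δ a2 * γ a2) * (δ c' * γ c') = -1 := by
    rw [hδb', hδc', hγc']
    rcases hδ a with h | h <;> rcases hγ a2 with h' | h' <;> rw [h, h'] <;> norm_num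
  have hcc : (δ c' * γ c') * (δ c' * γ c') = 1 := hsq _ hτpm
  -- the three pair identities
  have pairP : ∀ u v : ↥Y, ψ a (u + v) * (ψ a2 (u - v) * ψ c' (u - v)) =
      ψ a u * ψ a2 u * ψ c' u * (ψ a v * ψ a2 v * ψ c' v) := by
    intro u v
    have h := pair12 u (δ a • v)
    rw [prod3R a a2 c' hab hac' hb'c' (fun i => ψ i (u + δ i • δ a • v)),
        prod3R a a2 c' hab hac' hb'c' (fun i => ψ i u * ψ i (δ a • v))] at h
    rw [eδaa, eδb, eδc] at h
    rw [hpm a _ (hδ a), hpm a2 _ (hδ a), hpm c' _ (hδ a)] at h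
    simp only [← sub_eq_add_neg] at h
    linear_combination h
  have pairQ : ∀ u v : ↥Y, ψ a2 (u + v) * (ψ a (u - v) * ψ c' (u - v)) =
      ψ a u * ψ a2 u * ψ c' u * (ψ a v * ψ a2 v * ψ c' v) := by
    intro u v
    have h := pair13 u (γ a2 • v)
    rw [prod3R a a2 c' hab hac' hb'c' (fun i => ψ i (u + γ i • γ a2 • v)),
        prod3R a a2 c' hab hac' hb'c' (fun i => ψ i u * ψ i (γ a2 • v))] at h
    rw [eγa, eγbb, eγc] at h
    rw [hpm a _ (hγ a2), hpm a2 _ (hγ a2), hpm c' _ (hγ a2)] at h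
    simp only [← sub_eq_add_neg] at h
    linear_combination h
  have pairR : ∀ u v : ↥Y, ψ c' (u + v) * (ψ a (u - v) * ψ a2 (u - v)) =
      ψ a u * ψ a2 u * ψ c' u * (ψ a v * ψ a2 v * ψ c' v) := by
    intro u v
    have h := pair23 u ((δ c' * γ c') • v)
    rw [prod3R a a2 c' hab hac' hb'c' (fun i => ψ i (u + (δ i * γ i) • (δ c' * γ c') • v)),
        prod3R a a2 c' hab hac' hb'c' (fun i => ψ i u * ψ i ((δ c' * γ c') • v))] at h
    rw [show (δ a * γ a) • (δ c' * γ c') • v = -v from by rw [smul_smul, hca, neg_one_zsmul],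
        show (δ a2 * γ a2) • (δ c' * γ c') • v = -v from by rw [smul_smul, hcb, neg_one_zsmul],
        show (δ c' * γ c') • (δ c' * γ c') • v = v from by rw [smul_smul, hcc, one_zsmul]] at h
    rw [hpm a _ hτpm, hpm a2 _ hτpm, hpm c' _ hτpm] at h
    simp only [← sub_eq_add_neg] at h
    linear_combination h
  have tripleI : ∀ x v w : ↥Y, ψ a (x + v - w) * ψ a2 (x - v + w) * ψ c' (x - v - w) =
      ψ a x * ψ a2 x * ψ c' x *
        (ψ a v * ψ a2 v * ψ c' v * (ψ a w * ψ a2 w * ψ c' w)) := by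
    intro x v w
    have h := hbase x (δ a • v) (γ a2 • w)
    rw [prod3R a a2 c' hab hac' hb'c' (fun i => ψ i (x + δ i • δ a • v + γ i • γ a2 • w)),
        prod3R a a2 c' hab hac' hb'c'
          (fun i => ψ i x * (ψ i (δ a • v) * ψ i (γ a2 • w)))] at h
    rw [eδaa, eδb, eδc, eγa, eγbb, eγc] at h
    rw [hpm a _ (hδ a), hpm a2 _ (hδ a), hpm c' _ (hδ a),
        hpm a _ (hγ a2), hpm a2 _ (hγ a2), hpm c' _ (hγ a2)] at h
    simp only [← sub_eq_add_neg] at h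
    linear_combination h
  have hcore := coreLemma (ψ a) (ψ a2) (ψ c') (hψ0 a) (hψ0 a2) (hψ0 c')
    (hψnn a) (hψnn a2) (hψnn c') (hψle a) (hψle a2) (hψle c')
    (hψev a) (hψev a2) (hψev c') (hψtr a) (hψtr a2) (hψtr c')
    pairP pairQ pairR tripleI (coset2 Y)
  rcases hcore with h | h | h
  exacts [charEnd a h, charEnd a2 h, charEnd c' h]
end

section
/- Let Y be a subgroup of ℚ with 2Y ≠ Y, and let f_1, f_2, f_3 be normalized positive definite functions on Y satisfying equation (S-D T): f_1(u_1+u_2+u_3)·f_2(u_1−u_2−u_3)·f_3(u_1+u_2−u_3) = f_1(u_1)f_1(u_2)f_1(u_3)·f_2(u_1)f_2(−u_2)f_2(−u_3)·f_3(u_1)f_3(u_2)f_3(−u_3) for all u_1, u_2, u_3 ∈ Y. If the set N = {y ∈ Y : f_1(y)·f_2(y)·f_3(y) ≠ 0} is different from {0}, then every f_i (i = 1,2,3) is of idempotent form: there exist a subgroup H of Y and characters χ_1, χ_2, χ_3 of Y such that f_i(y) = χ_i(y) for y ∈ H and f_i(y) = 0 for y ∉ H. -/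
/-- Equation (S-D T) for functions `f₁, f₂, f₃` on an abelian group. -/
def SDTEq {Y : Type*} [AddCommGroup Y] (f₁ f₂ f₃ : Y → ℂ) : Prop :=
  ∀ u₁ u₂ u₃ : Y,
    f₁ (u₁ + u₂ + u₃) * f₂ (u₁ - u₂ - u₃) * f₃ (u₁ + u₂ - u₃) =
      f₁ u₁ * f₁ u₂ * f₁ u₃ * (f₂ u₁ * f₂ (-u₂) * f₂ (-u₃)) *
        (f₃ u₁ * f₃ u₂ * f₃ (-u₃))

section PosDefLemmas

variable {G : Type*} [AddCommGroup G] {f : G → ℂ}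

lemma pd_conj_neg (hpd : IsPosDefFn f) (hn : f 0 = 1) (x : G) :
    f (-x) = (starRingEnd ℂ) (f x) := by
  have h1 := (hpd 2 ![x, 0] ![1, 1]).2
  have h2 := (hpd 2 ![x, 0] ![1, Complex.I]).2
  simp only [Fin.sum_univ_two, Matrix.cons_val_zero, Matrix.cons_val_one, Matrix.head_cons,
    sub_self, sub_zero, zero_sub, hn, map_one, mul_one, one_mul, Complex.conj_I] at h1 h2
  simp only [Complex.add_im, Complex.one_im, Complex.mul_im, Complex.I_re, Complex.I_im,
    Complex.neg_re, Complex.neg_im, Complex.mul_re] at h1 h2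
  apply Complex.ext <;>
    simp only [Complex.conj_re, Complex.conj_im] <;> linarith

lemma pd_abs_le_one (hpd : IsPosDefFn f) (hn : f 0 = 1) (x : G) :
    ‖f x‖ ≤ 1 := by
  have h1 := (hpd 2 ![x, 0] ![1, -(f x)]).1
  simp only [Fin.sum_univ_two, Matrix.cons_val_zero, Matrix.cons_val_one, Matrix.head_cons,
    sub_self, sub_zero, zero_sub, hn, map_one, mul_one, one_mul] at h1
  rw [pd_conj_neg hpd hn] at h1
  have hid : (1 : ℂ) + f x * (starRingEnd ℂ) (-f x) +
      ((starRingEnd ℂ) (f x) * -f x + -f x * (starRingEnd ℂ) (-f x))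
      = 1 - (Complex.normSq (f x) : ℂ) := by
    rw [map_neg, ← Complex.mul_conj]; ring
  rw [hid] at h1
  simp only [Complex.sub_re, Complex.one_re, Complex.ofReal_re] at h1
  have h2 : ‖f x‖ ^ 2 ≤ 1 := by
    rw [← Complex.sq_norm] at h1; linarith
  nlinarith [norm_nonneg (f x)]

lemma pd_add_unit (hpd : IsPosDefFn f) (hn : f 0 = 1) {h : G}
    (hh : ‖f h‖ = 1) (x : G) : f (x + h) = f x * f h := by
  have hcn := pd_conj_neg hpd hn
  have h1 := (hpd 3 ![0, h, x + h]
    ![1, -((starRingEnd ℂ) (f h)), -((starRingEnd ℂ) (f (x+h) - f x * f h))]).1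
  simp only [Fin.sum_univ_three, Matrix.cons_val_zero, Matrix.cons_val_one, Matrix.head_cons,
    Matrix.cons_val_two, Matrix.tail_cons, sub_self, sub_zero, zero_sub, hn, map_one, mul_one,
    one_mul] at h1
  rw [show h - (x + h) = -x by abel, show x + h - h = x by abel, hcn h, hcn (x + h), hcn x] at h1
  set a := f x
  set b := f h
  set d := f (x + h)
  have hb : b * (starRingEnd ℂ) b = 1 := by
    rw [Complex.mul_conj]
    norm_cast
    rw [Complex.normSq_eq_norm_sq, hh]; norm_num
  have hid : (1 + (starRingEnd ℂ) b * (starRingEnd ℂ) (-(starRingEnd ℂ) b) +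
            (starRingEnd ℂ) d * (starRingEnd ℂ) (-(starRingEnd ℂ) (d - a * b)) +
          (b * -(starRingEnd ℂ) b + -(starRingEnd ℂ) b * (starRingEnd ℂ) (-(starRingEnd ℂ) b) +
            (starRingEnd ℂ) a * -(starRingEnd ℂ) b *
              (starRingEnd ℂ) (-(starRingEnd ℂ) (d - a * b))) +
        (d * -(starRingEnd ℂ) (d - a * b) +
            a * -(starRingEnd ℂ) (d - a * b) * (starRingEnd ℂ) (-(starRingEnd ℂ) b) +
          -(starRingEnd ℂ) (d - a * b) * (starRingEnd ℂ) (-(starRingEnd ℂ) (d - a * b))))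
      = (1 - b * (starRingEnd ℂ) b) - (d - a * b) * (starRingEnd ℂ) (d - a * b) := by
    simp only [map_sub, map_mul, map_neg, Complex.conj_conj]
    ring
  rw [hid, hb, Complex.mul_conj] at h1
  simp only [sub_self, zero_sub, Complex.neg_re, Complex.ofReal_re, neg_nonneg] at h1
  have h2 : Complex.normSq (d - a * b) = 0 := le_antisymm h1 (Complex.normSq_nonneg _)
  exact sub_eq_zero.mp (Complex.normSq_eq_zero.mp h2)

end PosDefLemmas

noncomputable instance : RootableBy ℂˣ ℕ :=
  rootableByOfPowLeftSurj _ _ fun {n} hn u => by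
    obtain ⟨z, hz⟩ := IsAlgClosed.exists_pow_nat_eq (u : ℂ) (Nat.pos_of_ne_zero hn)
    have hz0 : z ≠ 0 := by
      intro h
      rw [h, zero_pow hn] at hz
      exact u.ne_zero hz.symm
    exact ⟨Units.mk0 z hz0, Units.ext (by push_cast; exact hz)⟩

noncomputable instance : RootableBy ℂˣ ℤ := Group.rootableByIntOfRootableByNat ℂˣ

noncomputable instance : DivisibleBy (Additive ℂˣ) ℤ where
  div a n := Additive.ofMul (RootableBy.root (α := ℤ) a.toMul n)
  div_zero a := congrArg Additive.ofMul (RootableBy.root_zero _)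
  div_cancel {n} a hn := by
    show Additive.ofMul ((RootableBy.root (α := ℤ) a.toMul n) ^ n) = a
    rw [RootableBy.root_cancel _ hn]; rfl

/-- Extension of homomorphisms into `ℂˣ` from a subgroup to the whole group. -/
lemma ext_hom {G : Type} [AddCommGroup G] (H : AddSubgroup G) (φ : H →+ Additive ℂˣ) :
    ∃ Φ : G →+ Additive ℂˣ, ∀ x : H, Φ x = φ x := by
  have hbaer : Module.Baer ℤ (Additive ℂˣ) := Module.Baer.of_divisible _
  have hinj := hbaer.injective
  obtain ⟨Φ, hΦ⟩ := hinj.out (X := H) (Y := G) (H.subtype.toIntLinearMap)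
    (by exact Subtype.coe_injective) (φ.toIntLinearMap)
  exact ⟨Φ.toAddMonoidHom, fun x => hΦ x⟩

lemma aux_rel (Y : AddSubgroup ℚ) (y z : ↥Y) (hz : (z : ℚ) ≠ 0) :
    ∃ (a : ℤ) (b : ℕ), 0 < b ∧ a.natAbs.Coprime b ∧ (b : ℚ) * (y : ℚ) = (a : ℚ) * (z : ℚ) := by
  set r : ℚ := (y : ℚ) / (z : ℚ) with hr
  refine ⟨r.num, r.den, r.pos, r.reduced, ?_⟩
  have h3 : (y : ℚ) = r * (z : ℚ) := by rw [hr, div_mul_cancel₀ _ hz]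
  have h4 : (r.num : ℚ) = r * (r.den : ℚ) := by
    have hden : ((r.den : ℚ)) ≠ 0 := by exact_mod_cast r.den_nz
    have h := Rat.num_div_den r
    rw [div_eq_iff hden] at h
    exact h
  rw [h3, h4]; ring

lemma aux_parity (Y : AddSubgroup ℚ) (y z : ↥Y) (hy : ¬∃ u : ↥Y, y = u + u)
    (hz : ¬∃ u : ↥Y, z = u + u) : ∃ u : ↥Y, y - z = u + u := by
  have hz0 : (z : ℚ) ≠ 0 := by
    intro h0
    exact hz ⟨0, by apply Subtype.ext; push_cast [h0]; ring⟩
  obtain ⟨a, b, hb, hco, hrel⟩ := aux_rel Y y z hz0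
  rcases Nat.even_or_odd b with ⟨b', hb'⟩ | ⟨b', hb'⟩
  · rcases Int.even_or_odd a with ⟨a', ha'⟩ | ⟨a', ha'⟩
    · exfalso
      have h2b : 2 ∣ b := ⟨b', by omega⟩
      have h2a : 2 ∣ a.natAbs := by
        have : (2:ℤ) ∣ a := ⟨a', by omega⟩
        omega
      exact Nat.Prime.one_lt Nat.prime_two |>.ne' (Nat.eq_one_of_dvd_coprimes hco h2a h2b)
    · exfalso
      apply hz
      refine ⟨(b' : ℤ) • y - a' • z, ?_⟩
      apply Subtype.ext
      push_cast [zsmul_eq_mul]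
      have h5 : ((b:ℕ) : ℚ) * (y:ℚ) = (a:ℚ) * z := hrel
      rw [hb'] at h5
      push_cast [ha'] at h5
      linarith
  · rcases Int.even_or_odd a with ⟨a', ha'⟩ | ⟨a', ha'⟩
    · exfalso
      apply hy
      refine ⟨a' • z - (b' : ℤ) • y, ?_⟩
      apply Subtype.ext
      push_cast [zsmul_eq_mul]
      have h5 : ((b:ℕ) : ℚ) * (y:ℚ) = (a:ℚ) * z := hrel
      rw [hb'] at h5
      push_cast [ha'] at h5
      linarith
    · refine ⟨(a' - b') • z - (b' : ℤ) • (y - z), ?_⟩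
      apply Subtype.ext
      push_cast [zsmul_eq_mul]
      have h5 : ((b:ℕ) : ℚ) * (y:ℚ) = (a:ℚ) * z := hrel
      rw [hb'] at h5
      push_cast [ha'] at h5
      linarith

/-- Let `Y` be a subgroup of `ℚ` with `2Y ≠ Y`, and let `f₁, f₂, f₃` be normalized
positive definite functions on `Y` satisfying equation (S-D T). If
`N = {y : f₁(y)f₂(y)f₃(y) ≠ 0} ≠ {0}`, then every `f i` has idempotent form: there
are a subgroup `H` of `Y` and characters `χ₁, χ₂, χ₃` of `Y` such that `f i = χ i`
on `H` and `f i = 0` off `H`. -/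
theorem skitovich_darmois_SDT_idempotent_of_N_ne_zero
    (Y : AddSubgroup ℚ)
    (h2Y : Y.map (AddMonoidHom.mulLeft (2 : ℚ)) ≠ Y)
    (f₁ f₂ f₃ : ↥Y → ℂ)
    (hpd₁ : IsPosDefFn f₁) (hpd₂ : IsPosDefFn f₂) (hpd₃ : IsPosDefFn f₃)
    (hn₁ : f₁ 0 = 1) (hn₂ : f₂ 0 = 1) (hn₃ : f₃ 0 = 1)
    (heq : SDTEq f₁ f₂ f₃)
    (hN : {y : ↥Y | f₁ y * f₂ y * f₃ y ≠ 0} ≠ {0}) :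
    ∃ H : AddSubgroup ↥Y, ∃ χ₁ χ₂ χ₃ : ↥Y → ℂ,
      IsCharFn χ₁ ∧ IsCharFn χ₂ ∧ IsCharFn χ₃ ∧
      (∀ y ∈ H, f₁ y = χ₁ y ∧ f₂ y = χ₂ y ∧ f₃ y = χ₃ y) ∧
      (∀ y ∉ H, f₁ y = 0 ∧ f₂ y = 0 ∧ f₃ y = 0) := by
  classical
  have hcn₁ := pd_conj_neg hpd₁ hn₁
  have hcn₂ := pd_conj_neg hpd₂ hn₂
  have hcn₃ := pd_conj_neg hpd₃ hn₃
  set P : ↥Y → Prop := fun y => f₁ y ≠ 0 ∧ f₂ y ≠ 0 ∧ f₃ y ≠ 0 with hP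
  have hconj_ne : ∀ (g : ↥Y → ℂ) (y : ↥Y), g y ≠ 0 → (starRingEnd ℂ) (g y) ≠ 0 := by
    intro g y h
    simpa only [starRingEnd_apply, star_ne_zero] using h
  have hconj_ne' : ∀ (g : ↥Y → ℂ) (y : ↥Y), (starRingEnd ℂ) (g y) ≠ 0 → g y ≠ 0 := by
    intro g y h h0
    rw [h0] at h
    exact h (map_zero _)
  -- Step A : it P holds at u, v, w then the three functions are nonzero at the combinations
  have hA' : ∀ u v w a b c : ↥Y, u + v + w = a → u - v - w = b → u + v - w = c →
      P u → P v → P w → f₁ a ≠ 0 ∧ f₂ b ≠ 0 ∧ f₃ c ≠ 0 := by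
    rintro u v w a b c rfl rfl rfl ⟨h1u, h2u, h3u⟩ ⟨h1v, h2v, h3v⟩ ⟨h1w, h2w, h3w⟩
    have h := heq u v w
    have hRHS : f₁ u * f₁ v * f₁ w * (f₂ u * f₂ (-v) * f₂ (-w)) *
        (f₃ u * f₃ v * f₃ (-w)) ≠ 0 := by
      rw [hcn₂ v, hcn₂ w, hcn₃ w]
      exact mul_ne_zero (mul_ne_zero (mul_ne_zero (mul_ne_zero h1u h1v) h1w)
        (mul_ne_zero (mul_ne_zero h2u (hconj_ne _ _ h2v)) (hconj_ne _ _ h2w)))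
        (mul_ne_zero (mul_ne_zero h3u h3v) (hconj_ne _ _ h3w))
    rw [← h] at hRHS
    refine ⟨fun h0 => hRHS ?_, fun h0 => hRHS ?_, fun h0 => hRHS ?_⟩ <;>
      rw [h0] <;> ring
  -- Step B : converse propagation
  have hB' : ∀ u v w a b c : ↥Y, u + v + w = a → u - v - w = b → u + v - w = c →
      f₁ a ≠ 0 → f₂ b ≠ 0 → f₃ c ≠ 0 → P u ∧ P v ∧ P w := by
    rintro u v w a b c rfl rfl rfl h1 h2 h3
    have h := heq u v w
    have hRHS : f₁ u * f₁ v * f₁ w * (f₂ u * f₂ (-v) * f₂ (-w)) *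
        (f₃ u * f₃ v * f₃ (-w)) ≠ 0 := by
      rw [← h]
      exact mul_ne_zero (mul_ne_zero h1 h2) h3
    rcases mul_ne_zero_iff.mp hRHS with ⟨hx, hy3⟩
    rcases mul_ne_zero_iff.mp hx with ⟨hy1, hy2⟩
    rcases mul_ne_zero_iff.mp hy1 with ⟨hz1, h1w⟩
    rcases mul_ne_zero_iff.mp hz1 with ⟨h1u, h1v⟩
    rcases mul_ne_zero_iff.mp hy2 with ⟨hz2, h2w⟩
    rcases mul_ne_zero_iff.mp hz2 with ⟨h2u, h2v⟩
    rcases mul_ne_zero_iff.mp hy3 with ⟨hz3, h3w⟩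
    rcases mul_ne_zero_iff.mp hz3 with ⟨h3u, h3v⟩
    rw [hcn₂ v] at h2v
    rw [hcn₂ w] at h2w
    rw [hcn₃ w] at h3w
    exact ⟨⟨h1u, h2u, h3u⟩, ⟨h1v, hconj_ne' _ _ h2v, h3v⟩,
      ⟨h1w, hconj_ne' _ _ h2w, hconj_ne' _ _ h3w⟩⟩
  have hP0 : P 0 := ⟨hn₁ ▸ one_ne_zero, hn₂ ▸ one_ne_zero, hn₃ ▸ one_ne_zero⟩
  have hPneg : ∀ y, P y → P (-y) := by
    rintro y ⟨h1, h2, h3⟩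
    refine ⟨?_, ?_, ?_⟩
    · rw [hcn₁ y]; exact hconj_ne _ _ h1
    · rw [hcn₂ y]; exact hconj_ne _ _ h2
    · rw [hcn₃ y]; exact hconj_ne _ _ h3
  have hPadd : ∀ u v, P u → P v → P (u + v) := by
    intro u v hu hv
    obtain ⟨ha1, -, ha3⟩ := hA' u v 0 (u + v) (u - v) (u + v) (by abel) (by abel) (by abel)
      hu hv hP0
    obtain ⟨-, hb2, -⟩ := hA' u (-v) 0 (u - v) (u + v) (u - v) (by abel) (by abel) (by abel)
      hu (hPneg v hv) hP0
    exact ⟨ha1, hb2, ha3⟩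
  -- doubling lemmas
  have hD1 : ∀ u : ↥Y, f₁ (u + u) ≠ 0 → P u := by
    intro u h
    exact (hB' u 0 u (u + u) 0 0 (by abel) (by abel) (by abel) h
      (hn₂ ▸ one_ne_zero) (hn₃ ▸ one_ne_zero)).1
  have hD2 : ∀ u : ↥Y, f₂ (u + u) ≠ 0 → P u := by
    intro u h
    exact (hB' u (-u) 0 0 (u + u) 0 (by abel) (by abel) (by abel)
      (hn₁ ▸ one_ne_zero) h (hn₃ ▸ one_ne_zero)).1
  have hD3 : ∀ u : ↥Y, f₃ (u + u) ≠ 0 → P u := by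
    intro u h
    exact (hB' 0 u (-u) 0 0 (u + u) (by abel) (by abel) (by abel)
      (hn₁ ▸ one_ne_zero) (hn₂ ▸ one_ne_zero) h).2.1
  -- modulus one on N
  have hmod : ∀ y, P y → ‖f₁ y‖ = 1 ∧ ‖f₂ y‖ = 1 ∧
      ‖f₃ y‖ = 1 := by
    rintro y ⟨h1, h2, h3⟩
    have h := heq y (-y) y
    rw [show y + -y + y = y by abel, show y - -y - y = y by abel,
      show y + -y - y = -y by abel, neg_neg] at h
    rw [hcn₁ y, hcn₂ y, hcn₃ y] at h
    have habs := congrArg (‖·‖) h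
    simp only [norm_mul, Complex.norm_conj] at habs
    have hA1 : 0 < ‖f₁ y‖ := norm_pos_iff.mpr h1
    have hA2 : 0 < ‖f₂ y‖ := norm_pos_iff.mpr h2
    have hA3 : 0 < ‖f₃ y‖ := norm_pos_iff.mpr h3
    have hL1 := pd_abs_le_one hpd₁ hn₁ y
    have hL2 := pd_abs_le_one hpd₂ hn₂ y
    have hL3 := pd_abs_le_one hpd₃ hn₃ y
    set A := ‖f₁ y‖
    set B := ‖f₂ y‖
    set C := ‖f₃ y‖
    have hm3 : A * B * C = (A * B * C) ^ 3 := by linear_combination habs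
    have hmpos : 0 < A * B * C := by positivity
    have hBC : B * C ≤ 1 := mul_le_one₀ hL2 hA3.le hL3
    have hAC : A * C ≤ 1 := mul_le_one₀ hL1 hA3.le hL3
    have hAB : A * B ≤ 1 := mul_le_one₀ hL1 hA2.le hL2
    have hmle : A * B * C ≤ 1 := mul_le_one₀ hAB hA3.le hL3
    have hm : A * B * C = 1 := by
      have h1m : 1 ≤ A * B * C := by nlinarith [mul_pos hmpos hmpos]
      linarith
    refine ⟨le_antisymm hL1 ?_, le_antisymm hL2 ?_, le_antisymm hL3 ?_⟩
    · nlinarith [hm, hA1, hBC]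
    · nlinarith [hm, hA2, hAC]
    · nlinarith [hm, hA3, hAB]
  -- translate `2Y ≠ Y`
  have hmaple : Y.map (AddMonoidHom.mulLeft (2 : ℚ)) ≤ Y := by
    rintro x ⟨w, hw, rfl⟩
    have h2w : (AddMonoidHom.mulLeft (2 : ℚ)) w = w + w := two_mul w
    rw [h2w]
    exact add_mem hw hw
  obtain ⟨q, hqY, hqn⟩ := SetLike.exists_of_lt (lt_of_le_of_ne hmaple h2Y)
  have ht : ∃ t : ↥Y, ¬∃ u : ↥Y, t = u + u := by
    refine ⟨⟨q, hqY⟩, ?_⟩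
    rintro ⟨u, hu⟩
    apply hqn
    refine ⟨(u : ℚ), u.2, ?_⟩
    have := congrArg (fun v : ↥Y => (v : ℚ)) hu
    push_cast at this
    show (2 : ℚ) * (u : ℚ) = q
    rw [this]; ring
  -- there is a nonzero element of N
  obtain ⟨y₀, hy₀S, hy₀ne⟩ : ∃ y₀ : ↥Y, P y₀ ∧ y₀ ≠ 0 := by
    by_contra hcon
    push_neg at hcon
    apply hN
    apply Set.eq_singleton_iff_unique_mem.mpr
    constructor
    · show f₁ 0 * f₂ 0 * f₃ 0 ≠ 0
      rw [hn₁, hn₂, hn₃]; norm_num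
    · intro y hy
      rcases mul_ne_zero_iff.mp hy with ⟨hy', h3⟩
      rcases mul_ne_zero_iff.mp hy' with ⟨h1, h2⟩
      exact hcon y ⟨h1, h2, h3⟩
  -- existence of an element of N not divisible by 2 in Y
  have hexOdd : ∃ n₀ : ↥Y, P n₀ ∧ ¬∃ u : ↥Y, n₀ = u + u := by
    by_contra hcon
    push_neg at hcon
    have hdiv : ∀ n₀ : ↥Y, P n₀ → ∃ u : ↥Y, n₀ = u + u := by
      intro n₀ h
      rcases hcon n₀ h with ⟨u, hu⟩
      exact ⟨u, hu⟩
    -- chain of halvings of y₀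
    have hchain : ∀ k : ℕ, ∃ w : ↥Y, P w ∧ (y₀ : ℚ) = 2 ^ k * (w : ℚ) := by
      intro k
      induction k with
      | zero => exact ⟨y₀, hy₀S, by norm_num⟩
      | succ k ih =>
        obtain ⟨w, hPw, hw⟩ := ih
        obtain ⟨u, hu⟩ := hdiv w hPw
        have hPu : P u := by
          apply hD1
          rw [← hu]
          exact hPw.1
        refine ⟨u, hPu, ?_⟩
        have hcu := congrArg (fun v : ↥Y => (v : ℚ)) hu
        push_cast at hcu
        rw [hw, hcu]; ring
    obtain ⟨t, hEt⟩ := ht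
    have hy₀Q : (y₀ : ℚ) ≠ 0 := fun h0 => hy₀ne (Subtype.ext h0)
    obtain ⟨a, b, hb, -, hrel⟩ := aux_rel Y t y₀ hy₀Q
    set c := b.factorization 2 with hc
    set b₀ := b / 2 ^ c with hb₀
    have hsplit : 2 ^ c * b₀ = b := Nat.ordProj_mul_ordCompl_eq_self b 2
    have hoddb : ¬ 2 ∣ b₀ := Nat.not_dvd_ordCompl Nat.prime_two hb.ne'
    obtain ⟨k, hk⟩ : ∃ k, b₀ = 2 * k + 1 := ⟨b₀ / 2, by omega⟩
    obtain ⟨w, hPw, hw⟩ := hchain (c + 1)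
    apply hEt
    refine ⟨a • w - (k : ℤ) • t, ?_⟩
    apply Subtype.ext
    push_cast [zsmul_eq_mul]
    have h6 : ((b : ℚ)) * (t : ℚ) = (a : ℚ) * ((2:ℚ) ^ (c+1) * (w : ℚ)) := by
      rw [hrel, hw]
    rw [← hsplit] at h6
    push_cast [hk] at h6
    have h7 : ((2:ℚ) ^ c) * (((2 * (k:ℚ) + 1)) * (t : ℚ)) =
        ((2:ℚ) ^ c) * (2 * ((a : ℚ) * (w : ℚ))) := by
      linear_combination h6
    have h8 := mul_left_cancel₀ (by positivity : ((2:ℚ) ^ c) ≠ 0) h7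
    linarith
  obtain ⟨n₀, hPn₀, hEn₀⟩ := hexOdd
  have hn₀ne : n₀ ≠ 0 := by
    intro h0
    exact hEn₀ ⟨0, by rw [h0]; simp⟩
  have hn₀Q : (n₀ : ℚ) ≠ 0 := fun h0 => hn₀ne (Subtype.ext h0)
  -- support lemma : if any fᵢ is nonzero at y then P y
  have hsupp : ∀ y : ↥Y, (f₁ y ≠ 0 ∨ f₂ y ≠ 0 ∨ f₃ y ≠ 0) → P y := by
    intro y hy
    by_cases hEy : ∃ u : ↥Y, y = u + u
    · obtain ⟨u, rfl⟩ := hEy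
      have hPu : P u := by
        rcases hy with h | h | h
        exacts [hD1 u h, hD2 u h, hD3 u h]
      exact hPadd u u hPu hPu
    · -- y is odd : use n₀
      obtain ⟨w₀, hw₀⟩ := aux_parity Y y n₀ hEy hEn₀
      have hyeq : y = w₀ + w₀ + n₀ := by
        rw [← hw₀]; abel
      rcases hy with h | h | h
      · obtain ⟨hu, hv, hw⟩ := hB' (w₀ + n₀) 0 w₀ y n₀ n₀
          (by rw [hyeq]; abel) (by abel) (by abel) h hPn₀.2.1 hPn₀.2.2
        rw [hyeq]
        exact hPadd _ _ (hPadd _ _ hw hw) hPn₀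
      · obtain ⟨hu, hv, hw⟩ := hB' (w₀ + n₀) (-w₀) 0 n₀ y n₀
          (by abel) (by rw [hyeq]; abel) (by abel)
          hPn₀.1 h hPn₀.2.2
        have hv' : P w₀ := by
          have := hPneg _ hv
          rwa [neg_neg] at this
        rw [hyeq]
        exact hPadd _ _ (hPadd _ _ hv' hv') hPn₀
      · obtain ⟨hu, hv, hw⟩ := hB' n₀ w₀ (-w₀) n₀ n₀ y
          (by abel) (by abel) (by rw [hyeq]; abel)
          hPn₀.1 hPn₀.2.1 h
        rw [hyeq]
        exact hPadd _ _ (hPadd _ _ hv hv) hPn₀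
  -- the subgroup H
  let H : AddSubgroup ↥Y :=
    { carrier := {y | P y}
      zero_mem' := hP0
      add_mem' := fun ha hb => hPadd _ _ ha hb
      neg_mem' := fun ha => hPneg _ ha }
  have hmemH : ∀ y : ↥Y, y ∈ H ↔ P y := fun y => Iff.rfl
  -- character construction
  have build : ∀ f : ↥Y → ℂ, IsPosDefFn f → f 0 = 1 →
      (∀ y, P y → ‖f y‖ = 1) →
      ∃ χ : ↥Y → ℂ, IsCharFn χ ∧ ∀ y, P y → f y = χ y := by
    intro f hpd hn habs
    have hne : ∀ y : ↥Y, P y → f y ≠ 0 := by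
      intro y hy h0
      have := habs y hy
      rw [h0] at this
      simp at this
    let φ : ↥H →+ Additive ℂˣ := AddMonoidHom.mk'
      (fun x => Additive.ofMul (Units.mk0 (f ↑x) (hne _ x.2)))
      (by
        intro x y
        apply congrArg Additive.ofMul
        apply Units.ext
        show f ((x + y : ↥H) : ↥Y) = f ↑x * f ↑y
        have : ((x + y : ↥H) : ↥Y) = (↑x + ↑y : ↥Y) := rfl
        rw [this]
        exact pd_add_unit hpd hn (habs _ y.2) ↑x)
    obtain ⟨Φ, hΦ⟩ := ext_hom H φ
    refine ⟨fun y => ((Additive.toMul (Φ y) : ℂˣ) : ℂ), ⟨?_, ?_⟩, ?_⟩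
    · intro a b
      show ((Additive.toMul (Φ (a + b)) : ℂˣ) : ℂ)
          = ((Additive.toMul (Φ a) : ℂˣ) : ℂ) * ((Additive.toMul (Φ b) : ℂˣ) : ℂ)
      rw [map_add]
      rfl
    · intro y
      show ‖((Additive.toMul (Φ y) : ℂˣ) : ℂ)‖ = 1
      by_cases h0 : (y : ℚ) = 0
      · have hy0 : y = 0 := Subtype.ext h0
        rw [hy0, map_zero]
        show ‖((1 : ℂˣ) : ℂ)‖ = 1
        simp
      · obtain ⟨a, b, hb, -, hrel⟩ := aux_rel Y y n₀ hn₀Q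
        have hsm : (b : ℤ) • y = a • n₀ := by
          apply Subtype.ext
          push_cast [zsmul_eq_mul]
          exact_mod_cast hrel
        have hmem : ((b : ℤ) • y) ∈ H := by
          rw [hsm]
          exact H.zsmul_mem (show n₀ ∈ H from hPn₀) a
        have h1 : Φ ((b : ℤ) • y) = φ ⟨(b : ℤ) • y, hmem⟩ := hΦ ⟨_, hmem⟩
        have h2 : ((Additive.toMul (Φ ((b : ℤ) • y)) : ℂˣ) : ℂ) = f ((b : ℤ) • y) := by
          rw [h1]; rfl
        have h3 : Φ ((b : ℤ) • y) = (b : ℤ) • Φ y := map_zsmul Φ _ _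
        have h4 : ‖f ((b : ℤ) • y)‖ = 1 := habs _ hmem
        have h5 : ((Additive.toMul (Φ ((b : ℤ) • y)) : ℂˣ) : ℂ)
            = ((Additive.toMul (Φ y) : ℂˣ) : ℂ) ^ (b : ℤ) := by
          rw [h3]
          show ((Additive.toMul (Φ y) ^ (b : ℤ) : ℂˣ) : ℂ) = _
          rw [Units.val_zpow_eq_zpow_val]
        have h6 : ‖((Additive.toMul (Φ y) : ℂˣ) : ℂ)‖ ^ b = 1 := by
          have := h4
          rw [← h2, h5, zpow_natCast, norm_pow] at this
          exact this
        set x := ‖((Additive.toMul (Φ y) : ℂˣ) : ℂ)‖ with hx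
        have hx0 : 0 ≤ x := norm_nonneg _
        rcases lt_trichotomy x 1 with hlt | heq | hgt
        · exfalso
          have := pow_lt_one₀ hx0 hlt hb.ne'
          rw [h6] at this
          exact lt_irrefl _ this
        · exact heq
        · exfalso
          have := one_lt_pow₀ hgt hb.ne'
          rw [h6] at this
          exact lt_irrefl _ this
    · intro y hy
      show f y = ((Additive.toMul (Φ y) : ℂˣ) : ℂ)
      rw [show Φ y = φ ⟨y, hy⟩ from hΦ ⟨y, hy⟩]
      rfl
  obtain ⟨χ₁, hχ₁, hag₁⟩ := build f₁ hpd₁ hn₁ (fun y hy => (hmod y hy).1)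
  obtain ⟨χ₂, hχ₂, hag₂⟩ := build f₂ hpd₂ hn₂ (fun y hy => (hmod y hy).2.1)
  obtain ⟨χ₃, hχ₃, hag₃⟩ := build f₃ hpd₃ hn₃ (fun y hy => (hmod y hy).2.2)
  refine ⟨H, χ₁, χ₂, χ₃, hχ₁, hχ₂, hχ₃, ?_, ?_⟩
  · intro y hy
    exact ⟨hag₁ y hy, hag₂ y hy, hag₃ y hy⟩
  · intro y hy
    refine ⟨?_, ?_, ?_⟩
    · by_contra h0
      exact hy (hsupp y (Or.inl h0))
    · by_contra h0
      exact hy (hsupp y (Or.inr (Or.inl h0)))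
    · by_contra h0
      exact hy (hsupp y (Or.inr (Or.inr h0)))
end

section
/- Let Y be a subgroup of ℚ with 2Y ≠ Y, and let f_1, f_2, f_3 be normalized positive definite functions on Y satisfying equation (S-D T): f_1(u_1+u_2+u_3)·f_2(u_1−u_2−u_3)·f_3(u_1+u_2−u_3) = f_1(u_1)f_1(u_2)f_1(u_3)·f_2(u_1)f_2(−u_2)f_2(−u_3)·f_3(u_1)f_3(u_2)f_3(−u_3) for all u_1, u_2, u_3 ∈ Y. If for every y ∈ Y with y ≠ 0 at least one of f_1(y), f_2(y), f_3(y) is zero (i.e. N = {y : f_1(y)f_2(y)f_3(y) ≠ 0} = {0}), then there exists an index i ∈ {1,2,3} such that f_i(y) = 0 for all y ≠ 0 (that is, f_i is the characteristic function of the Haar distribution of the full compact character group of Y). -/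
lemma posdef_conj {Y : Type*} [AddCommGroup Y] {f : Y → ℂ} (hf : IsPosDefFn f) (y : Y) :
    f (-y) = (starRingEnd ℂ) (f y) := by
  have h0 := (hf 1 ![0] ![1]).2
  have h1 := (hf 2 ![0, y] ![1, 1]).2
  have h2 := (hf 2 ![0, y] ![1, Complex.I]).2
  simp [Fin.sum_univ_two, Fin.sum_univ_one, zero_sub, Complex.ext_iff,
    Complex.add_im, Complex.mul_im, Complex.mul_re, Complex.conj_re, Complex.conj_im,
    Complex.I_re, Complex.I_im] at h0 h1 h2 ⊢
  constructor <;> linarith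


lemma half_add_mem (Y : AddSubgroup ℚ) {a b : ℚ} (ha : a ∈ Y) (hb : b ∈ Y)
    (ha2 : a / 2 ∉ Y) (hb2 : b / 2 ∉ Y) : (a + b) / 2 ∈ Y := by
  have ha0 : a ≠ 0 := by rintro rfl; simp at ha2
  have hb0 : b ≠ 0 := by rintro rfl; simp at hb2
  set A : ℤ := a.num * b.den with hAdef
  set B : ℤ := b.num * a.den with hBdef
  set D : ℤ := (a.den : ℤ) * b.den with hDdef
  have hD0 : (D : ℚ) ≠ 0 := by
    push_cast
    positivity
  have haD : (A : ℚ) = a * D := by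
    rw [hAdef, hDdef]
    push_cast
    rw [show a * ((a.den : ℚ) * b.den) = (a * a.den) * b.den by ring, Rat.mul_den_eq_num]
  have hbD : (B : ℚ) = b * D := by
    rw [hBdef, hDdef]
    push_cast
    rw [show b * ((a.den : ℚ) * b.den) = (b * b.den) * a.den by ring, Rat.mul_den_eq_num]
  have hA0 : A ≠ 0 := by
    intro h
    apply ha0
    have := haD
    rw [h] at this
    have h' : a * (D : ℚ) = 0 := by rw [← this]; simp
    exact (mul_eq_zero.1 h').resolve_right hD0
  set K : ℤ := (Int.gcd A B : ℤ) with hKdef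
  have hK0 : K ≠ 0 := by
    simp [hKdef, Int.gcd_eq_zero_iff]
    intro h; exact absurd h hA0
  have hKA : K ∣ A := Int.gcd_dvd_left A B
  have hKB : K ∣ B := Int.gcd_dvd_right A B
  set g : ℚ := (K : ℚ) / D with hgdef
  have hgY : g ∈ Y := by
    have hbez : (K : ℚ) = (Int.gcdA A B : ℚ) * A + (Int.gcdB A B : ℚ) * B := by
      have h := Int.gcd_eq_gcd_ab A B
      have := congrArg (Int.cast : ℤ → ℚ) h
      push_cast [hKdef] at this ⊢
      rw [this]; ring
    have : g = (Int.gcdA A B) • a + (Int.gcdB A B) • b := by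
      rw [hgdef, hbez, haD, hbD]
      push_cast [zsmul_eq_mul]
      field_simp
    rw [this]
    exact Y.add_mem (zsmul_mem ha _) (zsmul_mem hb _)
  obtain ⟨m, hm⟩ := hKA
  obtain ⟨n, hn⟩ := hKB
  have hag : a = m • g := by
    rw [zsmul_eq_mul, hgdef]
    rw [eq_div_iff hD0] at *
    have : (A : ℚ) = K * m := by exact_mod_cast congrArg (Int.cast : ℤ → ℚ) hm
    field_simp
    rw [← haD, this]
    ring
  have hbg : b = n • g := by
    rw [zsmul_eq_mul, hgdef]
    have : (B : ℚ) = K * n := by exact_mod_cast congrArg (Int.cast : ℤ → ℚ) hn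
    field_simp
    rw [← hbD, this]
    ring
  have hmodd : Odd m := by
    rw [← Int.not_even_iff_odd]
    intro ⟨m', hm'⟩
    apply ha2
    have : a / 2 = (m' + m') • g / 2 := by rw [← hm', ← hag]
    rw [this]
    have : (m' + m') • g / 2 = m' • g := by
      push_cast [zsmul_eq_mul]; ring
    rw [this]
    exact zsmul_mem hgY _
  have hnodd : Odd n := by
    rw [← Int.not_even_iff_odd]
    intro ⟨n', hn'⟩
    apply hb2
    have : b / 2 = (n' + n') • g / 2 := by rw [← hn', ← hbg]
    rw [this]
    have : (n' + n') • g / 2 = n' • g := by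
      push_cast [zsmul_eq_mul]; ring
    rw [this]
    exact zsmul_mem hgY _
  obtain ⟨k, hk⟩ : Even (m + n) := hmodd.add_odd hnodd
  have : (a + b) / 2 = k • g := by
    rw [hag, hbg, ← add_zsmul]
    rw [hk]
    push_cast [zsmul_eq_mul]
    ring
  rw [this]
  exact zsmul_mem hgY _


section Main
variable {Y : AddSubgroup ℚ}
    {f₁ f₂ f₃ : ↥Y → ℂ}
    (hn₁ : f₁ 0 = 1) (hn₂ : f₂ 0 = 1) (hn₃ : f₃ 0 = 1)
    (heq : SDTEq f₁ f₂ f₃)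
    (hN : ∀ y : ↥Y, y ≠ 0 → f₁ y * f₂ y * f₃ y = 0)

include hn₁ hn₂ hn₃ heq hN in
lemma key_vanish (v : ↥Y) (hv : v ≠ 0) :
    f₁ (v + v) = 0 ∧ f₂ (v + v) = 0 ∧ f₃ (v + v) = 0 := by
  have hP := hN v hv
  refine ⟨?_, ?_, ?_⟩
  · have h := heq v 0 v
    simp only [add_zero, sub_zero, zero_sub, neg_zero, add_sub_cancel_right,
      sub_self, hn₁, hn₂, hn₃] at h
    linear_combination h + (f₁ v * f₂ (-v) * f₃ (-v)) * hP
  · have h := heq v (-v) 0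
    simp only [add_zero, sub_zero, neg_zero, neg_neg, add_neg_cancel, sub_neg_eq_add,
      hn₁, hn₂, hn₃] at h
    linear_combination h + (f₁ (-v) * f₂ v * f₃ (-v)) * hP
  · have h := heq 0 v (-v)
    simp only [zero_add, zero_sub, neg_neg, sub_neg_eq_add, neg_add_cancel, add_neg_cancel,
      hn₁, hn₂, hn₃] at h
    linear_combination h + (f₁ (-v) * f₂ (-v) * f₃ v) * hP


include hn₁ hn₂ hn₃ heq hN in
lemma half_not_mem (a : ↥Y) (ha : a ≠ 0)
    (hf : f₁ a ≠ 0 ∨ f₂ a ≠ 0 ∨ f₃ a ≠ 0) : ((a : ℚ) / 2) ∉ Y := by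
  intro hmem
  set v : ↥Y := ⟨(a : ℚ) / 2, hmem⟩ with hvdef
  have hvv : v + v = a := by
    ext; push_cast; ring
  have hv0 : v ≠ 0 := by
    intro h
    apply ha
    rw [← hvv, h, add_zero]
  have := key_vanish hn₁ hn₂ hn₃ heq hN v hv0
  rw [hvv] at this
  rcases hf with h | h | h
  · exact h this.1
  · exact h this.2.1
  · exact h this.2.2

end Main

/-- Let `Y` be a subgroup of `ℚ` with `2Y ≠ Y`, and let `f₁, f₂, f₃` be normalized
positive definite functions on `Y` satisfying equation (S-D T). If for every
nonzero `y` at least one of `f₁(y), f₂(y), f₃(y)` vanishes (i.e. `N = {0}`), then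
one of the functions vanishes at every nonzero point, i.e. it is the characteristic
function of the Haar distribution of the full compact character group of `Y`. -/
theorem skitovich_darmois_SDT_haar_of_N_eq_zero
    (Y : AddSubgroup ℚ)
    (h2Y : Y.map (AddMonoidHom.mulLeft (2 : ℚ)) ≠ Y)
    (f₁ f₂ f₃ : ↥Y → ℂ)
    (hpd₁ : IsPosDefFn f₁) (hpd₂ : IsPosDefFn f₂) (hpd₃ : IsPosDefFn f₃)
    (hn₁ : f₁ 0 = 1) (hn₂ : f₂ 0 = 1) (hn₃ : f₃ 0 = 1)
    (heq : SDTEq f₁ f₂ f₃)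
    (hN : ∀ y : ↥Y, y ≠ 0 → f₁ y * f₂ y * f₃ y = 0) :
    (∀ y : ↥Y, y ≠ 0 → f₁ y = 0) ∨ (∀ y : ↥Y, y ≠ 0 → f₂ y = 0) ∨
      (∀ y : ↥Y, y ≠ 0 → f₃ y = 0) := by
  by_contra hcon
  push_neg at hcon
  obtain ⟨⟨a₁, ha₁0, hfa₁⟩, ⟨a₂, ha₂0, hfa₂⟩, ⟨a₃, ha₃0, hfa₃⟩⟩ := hcon
  have h₁ := half_not_mem hn₁ hn₂ hn₃ heq hN a₁ ha₁0 (Or.inl hfa₁)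
  have h₂ := half_not_mem hn₁ hn₂ hn₃ heq hN a₂ ha₂0 (Or.inr (Or.inl hfa₂))
  have h₃ := half_not_mem hn₁ hn₂ hn₃ heq hN a₃ ha₃0 (Or.inr (Or.inr hfa₃))
  have h₃' : (((-a₃ : ↥Y) : ℚ)) / 2 ∉ Y := by
    intro h
    apply h₃
    have := Y.neg_mem h
    push_cast at this ⊢
    simpa [neg_div] using this
  have h₂' : (((-a₂ : ↥Y) : ℚ)) / 2 ∉ Y := by
    intro h
    apply h₂
    have := Y.neg_mem h
    push_cast at this ⊢
    simpa [neg_div] using this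
  -- u₁ = (a₁+a₂)/2, u₂ = (a₃-a₂)/2, u₃ = (a₁-a₃)/2
  have hu₁ : ((a₁ : ℚ) + a₂) / 2 ∈ Y := half_add_mem Y a₁.2 a₂.2 h₁ h₂
  have hu₂ : ((a₃ : ℚ) + ((-a₂ : ↥Y) : ℚ)) / 2 ∈ Y := half_add_mem Y a₃.2 (-a₂).2 h₃ h₂'
  have hu₃ : ((a₁ : ℚ) + ((-a₃ : ↥Y) : ℚ)) / 2 ∈ Y := half_add_mem Y a₁.2 (-a₃).2 h₁ h₃'
  set u₁ : ↥Y := ⟨_, hu₁⟩ with hu₁def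
  set u₂ : ↥Y := ⟨_, hu₂⟩ with hu₂def
  set u₃ : ↥Y := ⟨_, hu₃⟩ with hu₃def
  have e₁ : u₁ + u₂ + u₃ = a₁ := by ext; simp only [AddSubgroup.coe_add, AddSubgroup.coe_sub, AddSubgroup.coe_neg, hu₁def, hu₂def, hu₃def]; ring
  have e₂ : u₁ - u₂ - u₃ = a₂ := by ext; simp only [AddSubgroup.coe_add, AddSubgroup.coe_sub, AddSubgroup.coe_neg, hu₁def, hu₂def, hu₃def]; ring
  have e₃ : u₁ + u₂ - u₃ = a₃ := by ext; simp only [AddSubgroup.coe_add, AddSubgroup.coe_sub, AddSubgroup.coe_neg, hu₁def, hu₂def, hu₃def]; ring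
  have h := heq u₁ u₂ u₃
  rw [e₁, e₂, e₃] at h
  have hne : f₁ a₁ * f₂ a₂ * f₃ a₃ ≠ 0 :=
    mul_ne_zero (mul_ne_zero hfa₁ hfa₂) hfa₃
  rw [h] at hne
  -- extract nonvanishing of each factor
  have c2 := fun (y : ↥Y) => posdef_conj hpd₂ y
  have c3 := fun (y : ↥Y) => posdef_conj hpd₃ y
  have hu₁0 : u₁ = 0 := by
    by_contra hu
    apply hne
    have := hN u₁ hu
    calc f₁ u₁ * f₁ u₂ * f₁ u₃ * (f₂ u₁ * f₂ (-u₂) * f₂ (-u₃)) * (f₃ u₁ * f₃ u₂ * f₃ (-u₃))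
        = (f₁ u₁ * f₂ u₁ * f₃ u₁) * (f₁ u₂ * f₁ u₃ * (f₂ (-u₂) * f₂ (-u₃)) * (f₃ u₂ * f₃ (-u₃))) := by ring
      _ = 0 := by rw [this]; ring
  have hu₂0 : u₂ = 0 := by
    by_contra hu
    apply hne
    have hz := hN u₂ hu
    have : f₂ (-u₂) = (starRingEnd ℂ) (f₂ u₂) := c2 u₂
    rw [this]
    rcases mul_eq_zero.1 hz with hz' | hz'
    · rcases mul_eq_zero.1 hz' with hz'' | hz''
      · rw [hz'']; ring
      · rw [hz'', map_zero]; ring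
    · rw [hz']; ring
  have hu₃0 : u₃ = 0 := by
    by_contra hu
    apply hne
    have hz := hN u₃ hu
    rw [c2 u₃, c3 u₃]
    rcases mul_eq_zero.1 hz with hz' | hz'
    · rcases mul_eq_zero.1 hz' with hz'' | hz''
      · rw [hz'']; ring
      · rw [hz'', map_zero]; ring
    · rw [hz', map_zero]; ring
  -- u₁ = u₂ = u₃ = 0 forces a₁ = 0
  apply ha₁0
  have z₁ : (a₁ : ℚ) + a₂ = 0 := by
    have := congrArg (Subtype.val) hu₁0
    simp [hu₁def] at this
    linarith [this]
  have z₂ : (a₃ : ℚ) - a₂ = 0 := by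
    have := congrArg (Subtype.val) hu₂0
    simp [hu₂def] at this
    push_cast at this
    linarith [this]
  have z₃ : (a₁ : ℚ) - a₃ = 0 := by
    have := congrArg (Subtype.val) hu₃0
    simp [hu₃def] at this
    push_cast at this
    linarith [this]
  ext
  push_cast
  linarith
end

section
/- Let Y be a subgroup of ℚ, let p be a prime with p ≡ 1 (mod 4), and let y_0 ∈ Y with y_0 ∉ 2Y. Define f : Y → ℂ by f(0) = 1, f(y_0) = f(−y_0) = 1/2, and f(y) = 0 for all other y. Then f satisfies the equation f(u+v+t)·f(u+pv+t)·f(u+v+pt) = f(u)^3·f(v)^2·f(t)^2·f(pv)·f(pt) for all u, v, t ∈ Y. -/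
/-- Let `Y` be a subgroup of `ℚ`, `p` a prime with `p ≡ 1 (mod 4)`, and `y₀ ∈ Y`
with `y₀ ∉ 2Y`. The function `f` with `f(0) = 1`, `f(±y₀) = 1/2` and `f = 0`
elsewhere satisfies the Skitovich–Darmois equation corresponding to the linear
forms `L₁ = ξ₁+ξ₂+ξ₃`, `L₂ = ξ₁+pξ₂+ξ₃`, `L₃ = ξ₁+ξ₂+pξ₃`. -/
theorem SD_equation_for_density_distribution_p_one_mod_four
    (Y : AddSubgroup ℚ) (p : ℕ) (hp : p.Prime) (hp4 : p % 4 = 1)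
    (y₀ : ↥Y) (hy₀ : ¬ ∃ z : ↥Y, y₀ = z + z)
    (f : ↥Y → ℂ)
    (hf0 : f 0 = 1) (hfy : f y₀ = 1/2) (hfy' : f (-y₀) = 1/2)
    (hfz : ∀ y : ↥Y, y ≠ 0 → y ≠ y₀ → y ≠ -y₀ → f y = 0) :
    ∀ u v t : ↥Y,
      f (u + v + t) * f (u + p • v + t) * f (u + v + p • t) =
        f u ^ 3 * f v ^ 2 * f t ^ 2 * f (p • v) * f (p • t) := by
  have hc0 : (y₀ : ℚ) ≠ 0 := by
    intro h
    exact hy₀ ⟨0, by ext; simpa using h⟩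
  have hy2 : ∀ z : ↥Y, (y₀ : ℚ) ≠ 2 * (z : ℚ) := by
    intro z h
    exact hy₀ ⟨z, by ext; push_cast; linarith⟩
  have hs : ∀ x : ↥Y, f x ≠ 0 →
      (x : ℚ) = 0 ∨ (x : ℚ) = (y₀ : ℚ) ∨ (x : ℚ) = -(y₀ : ℚ) := by
    intro x hx
    by_contra h
    push_neg at h
    obtain ⟨h1, h2, h3⟩ := h
    refine hx (hfz x ?_ ?_ ?_)
    · intro hh; exact h1 (by rw [hh]; simp)
    · intro hh; exact h2 (by rw [hh])
    · intro hh; exact h3 (by rw [hh]; push_cast; ring)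
  set m : ℕ := p / 4 with hmdef
  have hpm : p = 4 * m + 1 := by
    have := Nat.div_add_mod p 4
    omega
  have hm0 : m ≠ 0 := by
    have := hp.one_lt
    omega
  have h4 : (4 * (m : ℚ)) ≠ 0 := by
    have : (m : ℚ) ≠ 0 := Nat.cast_ne_zero.mpr hm0
    positivity
  have keyLHS : ∀ w a b : ↥Y, w ≠ 0 →
      ((b : ℚ) - (a : ℚ) = (p : ℚ) * (w : ℚ) - (w : ℚ)) → f a = 0 ∨ f b = 0 := by
    intro w a b hw hab
    by_contra h
    push_neg at h
    have ha := hs a h.1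
    have hb := hs b h.2
    have hw' : (w : ℚ) ≠ 0 := fun hh => hw (by ext; simpa using hh)
    have hd : (b : ℚ) - (a : ℚ) = 4 * (m : ℚ) * (w : ℚ) := by
      rw [hab, hpm]; push_cast; ring
    have hz : ∀ _ : (4 * (m : ℚ) * (w : ℚ) = 0), False := by
      intro hh
      exact hw' ((mul_eq_zero.mp hh).resolve_left h4)
    rcases ha with ha | ha | ha <;> rcases hb with hb | hb | hb <;>
        rw [ha, hb] at hd
    · exact hz (by linarith)
    · exact hy2 ((2 * m) • w) (by push_cast [nsmul_eq_mul]; linarith)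
    · exact hy2 (-((2 * m) • w)) (by push_cast [nsmul_eq_mul]; linarith)
    · exact hy2 (-((2 * m) • w)) (by push_cast [nsmul_eq_mul]; linarith)
    · exact hz (by linarith)
    · exact hy2 (-(m • w)) (by push_cast [nsmul_eq_mul]; linarith)
    · exact hy2 ((2 * m) • w) (by push_cast [nsmul_eq_mul]; linarith)
    · exact hy2 (m • w) (by push_cast [nsmul_eq_mul]; linarith)
    · exact hz (by linarith)
  have keyRHS : ∀ w : ↥Y, w ≠ 0 → f w = 0 ∨ f (p • w) = 0 := by
    intro w hw
    by_contra h
    push_neg at h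
    have h1 := hs w h.1
    have h2 := hs (p • w) h.2
    have hpw : ((p • w : ↥Y) : ℚ) = (p : ℚ) * (w : ℚ) := by push_cast; ring
    have hw0 : (w : ℚ) ≠ 0 := fun hh => hw (by ext; simpa using hh)
    have hw' : (w : ℚ) = (y₀ : ℚ) ∨ (w : ℚ) = -(y₀ : ℚ) :=
      h1.resolve_left hw0
    have hp1 : (1 : ℚ) < (p : ℚ) := by exact_mod_cast hp.one_lt
    rcases hw' with hw' | hw' <;> rcases h2 with h2 | h2 | h2 <;>
        rw [hpw, hw'] at h2
    · exact hc0 ((mul_eq_zero.mp h2).resolve_left (by linarith))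
    · exact hc0 ((mul_eq_zero.mp
        (by linarith : ((p : ℚ) - 1) * (y₀ : ℚ) = 0)).resolve_left (by linarith))
    · exact hc0 ((mul_eq_zero.mp
        (by linarith : ((p : ℚ) + 1) * (y₀ : ℚ) = 0)).resolve_left (by linarith))
    · exact hc0 ((mul_eq_zero.mp
        (by linarith : (p : ℚ) * (y₀ : ℚ) = 0)).resolve_left (by linarith))
    · exact hc0 ((mul_eq_zero.mp
        (by linarith : ((p : ℚ) + 1) * (y₀ : ℚ) = 0)).resolve_left (by linarith))
    · exact hc0 ((mul_eq_zero.mp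
        (by linarith : ((p : ℚ) - 1) * (y₀ : ℚ) = 0)).resolve_left (by linarith))
  intro u v t
  by_cases hv : v = 0
  · by_cases ht : t = 0
    · subst hv ht
      simp [hf0]
      ring
    · subst hv
      have hL := keyLHS t (u + 0 + t) (u + 0 + p • t) ht (by push_cast; ring)
      have hR := keyRHS t ht
      rcases hL with h | h <;> rcases hR with h' | h' <;> rw [h, h'] <;> ring
  · have hL := keyLHS v (u + v + t) (u + p • v + t) hv (by push_cast; ring)
    have hR := keyRHS v hv
    rcases hL with h | h <;> rcases hR with h' | h' <;> rw [h, h'] <;> ring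
end

section
/- Let Y be a subgroup of ℚ, let p be a prime with p ≡ 3 (mod 4), and let y_0 ∈ Y with y_0 ∉ 2Y. Define f : Y → ℂ by f(0) = 1, f(y_0) = f(−y_0) = 1/2, and f(y) = 0 for all other y. Then f satisfies the equation f(u+v+t)·f(u−pv+t)·f(u+v−pt) = f(u)^3·f(v)^2·f(t)^2·f(−pv)·f(−pt) for all u, v, t ∈ Y. -/
/-- Let `Y` be a subgroup of `ℚ`, `p` a prime with `p ≡ 3 (mod 4)`, and `y₀ ∈ Y`
with `y₀ ∉ 2Y`. The function `f` with `f(0) = 1`, `f(±y₀) = 1/2` and `f = 0`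
elsewhere satisfies the Skitovich–Darmois equation corresponding to the linear
forms `L₁ = ξ₁+ξ₂+ξ₃`, `L₂ = ξ₁−pξ₂+ξ₃`, `L₃ = ξ₁+ξ₂−pξ₃`. -/
theorem SD_equation_for_density_distribution_p_three_mod_four
    (Y : AddSubgroup ℚ) (p : ℕ) (hp : p.Prime) (hp4 : p % 4 = 3)
    (y₀ : ↥Y) (hy₀ : ¬ ∃ z : ↥Y, y₀ = z + z)
    (f : ↥Y → ℂ)
    (hf0 : f 0 = 1) (hfy : f y₀ = 1/2) (hfy' : f (-y₀) = 1/2)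
    (hfz : ∀ y : ↥Y, y ≠ 0 → y ≠ y₀ → y ≠ -y₀ → f y = 0) :
    ∀ u v t : ↥Y,
      f (u + v + t) * f (u - p • v + t) * f (u + v - p • t) =
        f u ^ 3 * f v ^ 2 * f t ^ 2 * f (-(p • v)) * f (-(p • t)) := by
  have hp2 : (2:ℚ) ≤ (p:ℚ) := by exact_mod_cast hp.two_le
  have hy0ne : y₀ ≠ 0 := fun h => hy₀ ⟨0, by rw [h, add_zero]⟩
  have hy0Q : (y₀:ℚ) ≠ 0 := fun h => hy0ne (Subtype.ext (by simpa using h))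
  -- y₀ ∉ 2Y, in rational form
  have hz2 : ∀ (n : ℕ) (w : ↥Y), (y₀:ℚ) = 2 * (n:ℚ) * (w:ℚ) → False := by
    intro n w h
    refine hy₀ ⟨n • w, Subtype.ext ?_⟩
    push_cast [nsmul_eq_mul]
    linear_combination h
  -- support of f
  have supp : ∀ y : ↥Y, f y ≠ 0 → y = 0 ∨ y = y₀ ∨ y = -y₀ := by
    intro y hy
    by_contra h
    push_neg at h
    exact hy (hfz y h.1 h.2.1 h.2.2)
  -- arithmetic about p
  have hq : p + 1 = 4 * (p / 4) + 4 := by omega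
  have hqQ : (p:ℚ) + 1 = 4 * ((p / 4 : ℕ) : ℚ) + 4 := by exact_mod_cast hq
  -- key divisibility lemma
  have key : ∀ w s₁ s₂ : ↥Y, (s₁ = 0 ∨ s₁ = y₀ ∨ s₁ = -y₀) →
      (s₂ = 0 ∨ s₂ = y₀ ∨ s₂ = -y₀) →
      (s₁:ℚ) - (s₂:ℚ) = ((p:ℚ) + 1) * (w:ℚ) → w = 0 := by
    intro w s₁ s₂ h1 h2 he
    have hpne : ((p:ℚ) + 1) ≠ 0 := by positivity
    have hdiag : ((p:ℚ) + 1) * (w:ℚ) = 0 → w = 0 := by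
      intro h0
      rcases mul_eq_zero.mp h0 with h | h
      · exact absurd h hpne
      · exact Subtype.ext (by simpa using h)
    rcases h1 with h1 | h1 | h1 <;> rcases h2 with h2 | h2 | h2 <;>
      rw [h1, h2] at he <;> push_cast at he
    · exact hdiag (by linear_combination -he)
    · exfalso; exact hz2 (2 * (p / 4 + 1)) (-w)
        (by push_cast; linear_combination -he - (w:ℚ) * hqQ)
    · exfalso; exact hz2 (2 * (p / 4 + 1)) w
        (by push_cast; linear_combination he + (w:ℚ) * hqQ)
    · exfalso; exact hz2 (2 * (p / 4 + 1)) w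
        (by push_cast; linear_combination he + (w:ℚ) * hqQ)
    · exact hdiag (by linear_combination -he)
    · exfalso; exact hz2 (p / 4 + 1) w
        (by push_cast; linear_combination he / 2 + (w:ℚ) / 2 * hqQ)
    · exfalso; exact hz2 (2 * (p / 4 + 1)) (-w)
        (by push_cast; linear_combination -he - (w:ℚ) * hqQ)
    · exfalso; exact hz2 (p / 4 + 1) (-w)
        (by push_cast; linear_combination -he / 2 - (w:ℚ) / 2 * hqQ)
    · exact hdiag (by linear_combination -he)
  -- if w ≠ 0 then f w * f (-(p • w)) = 0
  have hRzero : ∀ w : ↥Y, w ≠ 0 → f w * f (-(p • w)) = 0 := by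
    intro w hw
    by_cases h : f w = 0
    · rw [h]; ring
    · suffices hs : f (-(p • w)) = 0 by rw [hs]; ring
      rcases supp w h with hc | hc | hc
      · exact absurd hc hw
      · rw [hc]
        apply hfz
        · intro heq
          have := congrArg (Subtype.val) heq
          push_cast [nsmul_eq_mul] at this
          have h0 : (p:ℚ) * (y₀:ℚ) = 0 := by linear_combination -this
          rcases mul_eq_zero.mp h0 with h' | h'
          · linarith
          · exact hy0Q h'
        · intro heq
          have := congrArg (Subtype.val) heq
          push_cast [nsmul_eq_mul] at this
          have h0 : ((p:ℚ) + 1) * (y₀:ℚ) = 0 := by linear_combination -this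
          rcases mul_eq_zero.mp h0 with h' | h'
          · linarith
          · exact hy0Q h'
        · intro heq
          have := congrArg (Subtype.val) heq
          push_cast [nsmul_eq_mul] at this
          have h0 : ((p:ℚ) - 1) * (y₀:ℚ) = 0 := by linear_combination -this
          rcases mul_eq_zero.mp h0 with h' | h'
          · linarith
          · exact hy0Q h'
      · rw [hc]
        apply hfz
        · intro heq
          have := congrArg (Subtype.val) heq
          push_cast [nsmul_eq_mul] at this
          have h0 : (p:ℚ) * (y₀:ℚ) = 0 := by linear_combination this
          rcases mul_eq_zero.mp h0 with h' | h'
          · linarith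
          · exact hy0Q h'
        · intro heq
          have := congrArg (Subtype.val) heq
          push_cast [nsmul_eq_mul] at this
          have h0 : ((p:ℚ) - 1) * (y₀:ℚ) = 0 := by linear_combination this
          rcases mul_eq_zero.mp h0 with h' | h'
          · linarith
          · exact hy0Q h'
        · intro heq
          have := congrArg (Subtype.val) heq
          push_cast [nsmul_eq_mul] at this
          have h0 : ((p:ℚ) + 1) * (y₀:ℚ) = 0 := by linear_combination this
          rcases mul_eq_zero.mp h0 with h' | h'
          · linarith
          · exact hy0Q h'
  intro u v t
  by_cases hv : v = 0
  · by_cases ht : t = 0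
    · subst hv; subst ht
      simp only [add_zero, smul_zero, sub_zero, neg_zero, hf0]
      ring
    · -- v = 0, t ≠ 0 : both sides vanish
      have hR : f u ^ 3 * f v ^ 2 * f t ^ 2 * f (-(p • v)) * f (-(p • t)) = 0 := by
        rcases mul_eq_zero.mp (hRzero t ht) with h | h <;> rw [h] <;> ring
      have hL : f (u + v + t) * f (u - p • v + t) * f (u + v - p • t) = 0 := by
        by_contra hne
        have h1 : f (u + v + t) ≠ 0 := fun h => hne (by rw [h]; ring)
        have h3 : f (u + v - p • t) ≠ 0 := fun h => hne (by rw [h]; ring)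
        exact ht (key t _ _ (supp _ h1) (supp _ h3) (by push_cast; ring))
      rw [hL, hR]
  · -- v ≠ 0 : both sides vanish
    have hR : f u ^ 3 * f v ^ 2 * f t ^ 2 * f (-(p • v)) * f (-(p • t)) = 0 := by
      rcases mul_eq_zero.mp (hRzero v hv) with h | h <;> rw [h] <;> ring
    have hL : f (u + v + t) * f (u - p • v + t) * f (u + v - p • t) = 0 := by
      by_contra hne
      have h1 : f (u + v + t) ≠ 0 := fun h => hne (by rw [h]; ring)
      have h2 : f (u - p • v + t) ≠ 0 := fun h => hne (by rw [h]; ring)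
      exact hv (key v _ _ (supp _ h1) (supp _ h2) (by push_cast; ring))
    rw [hL, hR]
end

section
/- Let p and q be distinct primes, let H = {m/q^k : m ∈ ℤ, k ≥ 0} be the subgroup of ℚ generated by the fractions with denominators powers of q, let 0 < c < 1, and put s = p² + q. Define g : ℚ → ℂ by g(y) = 1 if y ∈ pH, g(y) = c if y ∈ H but y ∉ pH, and g(y) = 0 if y ∉ H. Then for every n ≥ 2 and all u_1,…,u_n ∈ ℚ the following equation holds: g(u_1 + p(u_2 + ⋯ + u_n)) · Π_{i=2}^n g(pu_1 + su_i + p²Σ_{j≥2, j≠i} u_j) = g(u_1)·Π_{j=2}^n g(pu_j) · Π_{i=2}^n [ g(pu_1)·g(su_i)·Π_{j≥2, j≠i} g(p²u_j) ]. -/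
/-- Let `p ≠ q` be primes, `H = {m/q^k : m ∈ ℤ, k ≥ 0} ⊆ ℚ`, `0 < c < 1` and
`s = p² + q`. The function `g` equal to `1` on `pH`, to `c` on `H \ pH`, and to `0`
off `H`, satisfies the Skitovich–Darmois equation corresponding to the linear forms
`L₁ = ξ₁ + pξ₂ + ⋯ + pξₙ` and `Lᵢ = pξ₁ + p²ξ₂ + ⋯ + sξᵢ + ⋯ + p²ξₙ`
(`i = 2, …, n`) of `n ≥ 2` i.i.d. random variables with characteristic function `g`. -/
theorem SD_equation_for_solenoid_construction
    (p q : ℕ) (hp : p.Prime) (hq : q.Prime) (hpq : p ≠ q)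
    (H : AddSubgroup ℚ)
    (hH : ∀ y : ℚ, y ∈ H ↔ ∃ (m : ℤ) (k : ℕ), y = (m : ℚ) / (q : ℚ) ^ k)
    (c : ℝ) (hc0 : 0 < c) (hc1 : c < 1)
    (g : ℚ → ℂ)
    (hg1 : ∀ y ∈ H.map (AddMonoidHom.mulLeft (p : ℚ)), g y = 1)
    (hgc : ∀ y ∈ H, y ∉ H.map (AddMonoidHom.mulLeft (p : ℚ)) → g y = (c : ℂ))
    (hg0 : ∀ y ∉ H, g y = 0)
    (n : ℕ) (hn : 2 ≤ n) :
    ∀ u : Fin n → ℚ,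
      g (u ⟨0, by omega⟩ + (p : ℚ) * ∑ j ∈ Finset.univ.erase ⟨0, by omega⟩, u j) *
        ∏ i ∈ Finset.univ.erase ⟨0, by omega⟩,
          g ((p : ℚ) * u ⟨0, by omega⟩ + ((p : ℚ) ^ 2 + (q : ℚ)) * u i +
            (p : ℚ) ^ 2 * ∑ j ∈ (Finset.univ.erase ⟨0, by omega⟩).erase i, u j) =
      (g (u ⟨0, by omega⟩) * ∏ j ∈ Finset.univ.erase ⟨0, by omega⟩, g ((p : ℚ) * u j)) *
        ∏ i ∈ Finset.univ.erase ⟨0, by omega⟩,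
          (g ((p : ℚ) * u ⟨0, by omega⟩) * g (((p : ℚ) ^ 2 + (q : ℚ)) * u i) *
            ∏ j ∈ (Finset.univ.erase ⟨0, by omega⟩).erase i, g ((p : ℚ) ^ 2 * u j)) := by
  intro u
  set e0 : Fin n := ⟨0, by omega⟩ with he0
  set T : Finset (Fin n) := Finset.univ.erase e0 with hT
  have hp0 : (p : ℚ) ≠ 0 := Nat.cast_ne_zero.mpr hp.pos.ne'
  have hq0 : (q : ℚ) ≠ 0 := Nat.cast_ne_zero.mpr hq.pos.ne'
  set P := H.map (AddMonoidHom.mulLeft (p : ℚ)) with hPdef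
  have hPmem : ∀ y : ℚ, y ∈ P ↔ ∃ z ∈ H, (p : ℚ) * z = y := by
    intro y
    rw [hPdef, AddSubgroup.mem_map]
    simp [AddMonoidHom.mulLeft]
  have hqH : ∀ y : ℚ, (q : ℚ) * y ∈ H ↔ y ∈ H := by
    intro y
    constructor
    · intro h
      rw [hH] at h ⊢
      obtain ⟨m, k, hmk⟩ := h
      refine ⟨m, k + 1, ?_⟩
      have : y = (m : ℚ) / (q : ℚ) ^ k / q := by
        field_simp at hmk ⊢
        linarith [hmk]
      rw [this, pow_succ, div_div]
    · intro h
      have := H.zsmul_mem h (q : ℤ)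
      simpa [zsmul_eq_mul] using this
  have hmulH : ∀ (a : ℕ) (y : ℚ), y ∈ H → (a : ℚ) * y ∈ H := by
    intro a y hy
    have := H.nsmul_mem hy a
    simpa [nsmul_eq_mul] using this
  have hHP : ∀ y ∈ P, y ∈ H := by
    intro y hy
    obtain ⟨z, hz, rfl⟩ := (hPmem y).1 hy
    exact hmulH p z hz
  have hPdiv : ∀ y : ℚ, y ∈ P ↔ y / (p : ℚ) ∈ H := by
    intro y
    rw [hPmem]
    constructor
    · rintro ⟨z, hz, rfl⟩
      rwa [mul_div_cancel_left₀ _ hp0]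
    · intro h
      exact ⟨y / p, h, by field_simp⟩
  have hpP : ∀ y ∈ H, (p : ℚ) * y ∈ P := fun y hy => (hPmem _).2 ⟨y, hy, rfl⟩
  have hqP : ∀ y : ℚ, (q : ℚ) * y ∈ P ↔ y ∈ P := by
    intro y
    rw [hPdiv, hPdiv, mul_div_assoc, hqH]
  have gcongr : ∀ y z : ℚ, y ∈ H → z ∈ H → (y ∈ P ↔ z ∈ P) → g y = g z := by
    intro y z hy hz hiff
    by_cases hyP : y ∈ P
    · rw [hg1 _ hyP, hg1 _ (hiff.1 hyP)]
    · rw [hgc _ hy hyP, hgc _ hz (fun h => hyP (hiff.2 h))]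
  -- splitting of the i-th argument of the left-hand side
  have Aeq : ∀ i ∈ T, (p : ℚ) * u e0 + ((p : ℚ) ^ 2 + (q : ℚ)) * u i +
      (p : ℚ) ^ 2 * ∑ j ∈ T.erase i, u j =
      (p : ℚ) * (u e0 + (p : ℚ) * ∑ j ∈ T, u j) + (q : ℚ) * u i := by
    intro i hi
    rw [← Finset.add_sum_erase T u hi]
    ring
  by_cases hall : ∀ j, u j ∈ H
  · -- all arguments lie in H : compare values via membership in P
    have hS : ∑ j ∈ T, u j ∈ H := AddSubgroup.sum_mem _ (fun i _ => hall i)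
    have haH : u e0 + (p : ℚ) * ∑ j ∈ T, u j ∈ H := H.add_mem (hall e0) (hmulH p _ hS)
    have haP : u e0 + (p : ℚ) * ∑ j ∈ T, u j ∈ P ↔ u e0 ∈ P :=
      add_mem_cancel_right (hpP _ hS)
    have hAH : ∀ i ∈ T, (p : ℚ) * u e0 + ((p : ℚ) ^ 2 + (q : ℚ)) * u i +
        (p : ℚ) ^ 2 * ∑ j ∈ T.erase i, u j ∈ H := by
      intro i hi
      rw [Aeq i hi]
      exact H.add_mem (hmulH p _ haH) (hmulH q _ (hall i))
    have hAP : ∀ i ∈ T, ((p : ℚ) * u e0 + ((p : ℚ) ^ 2 + (q : ℚ)) * u i +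
        (p : ℚ) ^ 2 * ∑ j ∈ T.erase i, u j ∈ P) ↔ u i ∈ P := by
      intro i hi
      rw [Aeq i hi, add_mem_cancel_left (hpP _ haH), hqP]
    have hsH : ∀ i, ((p : ℚ) ^ 2 + (q : ℚ)) * u i ∈ H := by
      intro i
      have h1 : ((p : ℚ) ^ 2 + (q : ℚ)) * u i =
          (p : ℚ) * ((p : ℚ) * u i) + (q : ℚ) * u i := by ring
      rw [h1]
      exact H.add_mem (hmulH p _ (hmulH p _ (hall i))) (hmulH q _ (hall i))
    have hsP : ∀ i, (((p : ℚ) ^ 2 + (q : ℚ)) * u i ∈ P) ↔ u i ∈ P := by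
      intro i
      have h1 : ((p : ℚ) ^ 2 + (q : ℚ)) * u i =
          (q : ℚ) * u i + (p : ℚ) * ((p : ℚ) * u i) := by ring
      rw [h1, add_mem_cancel_right (hpP _ (hmulH p _ (hall i))), hqP]
    have hsqP : ∀ j, (p : ℚ) ^ 2 * u j ∈ P := by
      intro j
      have h1 : (p : ℚ) ^ 2 * u j = (p : ℚ) * ((p : ℚ) * u j) := by ring
      rw [h1]
      exact hpP _ (hmulH p _ (hall j))
    trans (g (u e0) * ∏ i ∈ T, g (u i))
    · congr 1
      · exact gcongr _ _ haH (hall e0) haP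
      · exact Finset.prod_congr rfl (fun i hi => gcongr _ _ (hAH i hi) (hall i) (hAP i hi))
    · have h1 : ∏ j ∈ T, g ((p : ℚ) * u j) = 1 :=
        Finset.prod_eq_one (fun j _ => hg1 _ (hpP _ (hall j)))
      have h2 : ∀ i ∈ T, g ((p : ℚ) * u e0) * g (((p : ℚ) ^ 2 + (q : ℚ)) * u i) *
          ∏ j ∈ T.erase i, g ((p : ℚ) ^ 2 * u j) = g (u i) := by
        intro i hi
        rw [hg1 _ (hpP _ (hall e0)), gcongr _ _ (hsH i) (hall i) (hsP i),
          Finset.prod_eq_one (fun j _ => hg1 _ (hsqP j)), one_mul, mul_one]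
      rw [h1, Finset.prod_congr rfl h2, mul_one]
  · -- some argument is outside H : both sides vanish
    push_neg at hall
    obtain ⟨j, hj⟩ := hall
    trans (0 : ℂ)
    · -- left-hand side is zero
      by_cases haH : u e0 + (p : ℚ) * ∑ j ∈ T, u j ∈ H
      · have hex : ∃ i ∈ T, u i ∉ H := by
          by_contra hc
          push_neg at hc
          have hS : ∑ j ∈ T, u j ∈ H := AddSubgroup.sum_mem _ (fun i hi => hc i hi)
          have h0 : u e0 ∈ H := by
            have h1 := H.sub_mem haH (hmulH p _ hS)
            simpa using h1
          rcases eq_or_ne j e0 with rfl | hne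
          · exact hj h0
          · exact hj (hc j (Finset.mem_erase.mpr ⟨hne, Finset.mem_univ j⟩))
        obtain ⟨i, hi, hui⟩ := hex
        have hA0 : g ((p : ℚ) * u e0 + ((p : ℚ) ^ 2 + (q : ℚ)) * u i +
            (p : ℚ) ^ 2 * ∑ j ∈ T.erase i, u j) = 0 := by
          apply hg0
          intro hmem
          rw [Aeq i hi] at hmem
          apply hui
          have h1 := H.sub_mem hmem (hmulH p _ haH)
          have h2 : (p : ℚ) * (u e0 + (p : ℚ) * ∑ j ∈ T, u j) + (q : ℚ) * u i -
              (p : ℚ) * (u e0 + (p : ℚ) * ∑ j ∈ T, u j) = (q : ℚ) * u i := by ring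
          rw [h2] at h1
          exact (hqH _).1 h1
        exact mul_eq_zero_of_right _ (Finset.prod_eq_zero hi hA0)
      · exact mul_eq_zero_of_left (hg0 _ haH) _
    · -- right-hand side is zero
      symm
      by_cases hj0 : j = e0
      · subst hj0
        exact mul_eq_zero_of_left (mul_eq_zero_of_left (hg0 _ hj) _) _
      · have hjT : j ∈ T := Finset.mem_erase.mpr ⟨hj0, Finset.mem_univ j⟩
        by_cases hpj : (p : ℚ) * u j ∈ H
        · have hsj : ((p : ℚ) ^ 2 + (q : ℚ)) * u j ∉ H := by
            intro hs
            apply hj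
            have h1 := H.sub_mem hs (hmulH p _ hpj)
            have h2 : ((p : ℚ) ^ 2 + (q : ℚ)) * u j - (p : ℚ) * ((p : ℚ) * u j) =
                (q : ℚ) * u j := by ring
            rw [h2] at h1
            exact (hqH _).1 h1
          refine mul_eq_zero_of_right _ (Finset.prod_eq_zero hjT ?_)
          rw [hg0 _ hsj, mul_zero, zero_mul]
        · exact mul_eq_zero_of_left
            (mul_eq_zero_of_right _ (Finset.prod_eq_zero hjT (hg0 _ hpj))) _
end

section
/- Let Y be a subgroup of ℚ and let f_1, f_2, f_3 be normalized positive definite functions on Y satisfying equation (S-D T): f_1(u_1+u_2+u_3)·f_2(u_1−u_2−u_3)·f_3(u_1+u_2−u_3) = f_1(u_1)f_1(u_2)f_1(u_3)·f_2(u_1)f_2(−u_2)f_2(−u_3)·f_3(u_1)f_3(u_2)f_3(−u_3) for all u_1, u_2, u_3 ∈ Y. If t_1, t_2 ∈ Y belong to the same coset of the subgroup 2Y = {2y : y ∈ Y} (i.e. t_1 − t_2 ∈ 2Y), then for every permutation (i_1, i_2, i_3) of (1,2,3) one has |f_{i_1}(t_1)|·|f_{i_2}(t_2)|·|f_{i_3}(t_2)|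 = |f_{i_1}(t_2)|·|f_{i_2}(t_1)|·|f_{i_3}(t_1)|. -/
lemma posdef_conj_neg {Y : Type*} [AddCommGroup Y] {f : Y → ℂ}
    (h : IsPosDefFn f) (u : Y) : f (-u) = (starRingEnd ℂ) (f u) := by
  have h0 : (f 0).im = 0 := by
    have := (h 1 ![0] ![1]).2
    simpa using this
  have key : ∀ t : ℂ,
      (f (-u)).im * t.re - (f (-u)).re * t.im + ((f u).im * t.re + (f u).re * t.im) = 0 := by
    intro t
    have := (h 2 ![0, u] ![1, t]).2
    simp [Fin.sum_univ_two, zero_sub, Complex.add_im, Complex.mul_im, Complex.mul_re,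
      Complex.conj_re, Complex.conj_im, h0] at this
    linarith
  have k1 := key 1
  have kI := key Complex.I
  simp at k1 kI
  apply Complex.ext
  · simp [Complex.conj_re]; linarith
  · simp [Complex.conj_im]; linarith

lemma six_perm_cases {a b : Fin 3 → ℝ}
    (h1 : a 0 * b 1 * b 2 = b 0 * a 1 * a 2)
    (h2 : a 1 * b 0 * b 2 = b 1 * a 0 * a 2)
    (h3 : a 2 * b 0 * b 1 = b 2 * a 0 * a 1) :
    ∀ i j k : Fin 3, i ≠ j → i ≠ k → j ≠ k →
      a i * b j * b k = b i * a j * a k := by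
  intro i j k hij hik hjk
  fin_cases i <;> fin_cases j <;> fin_cases k <;> simp_all <;>
    ring_nf at h1 h2 h3 ⊢ <;> linarith

/-- Let `Y` be a subgroup of `ℚ` and `f₁, f₂, f₃` normalized positive definite
functions on `Y` satisfying (S-D T). If `t₁, t₂ ∈ Y` lie in the same coset of
`2Y`, then for every permutation `(i₁, i₂, i₃)` of `(1, 2, 3)`:
`|f_{i₁}(t₁)|·|f_{i₂}(t₂)|·|f_{i₃}(t₂)| = |f_{i₁}(t₂)|·|f_{i₂}(t₁)|·|f_{i₃}(t₁)|`. -/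
theorem SDT_coset_modulus_identity
    (Y : AddSubgroup ℚ)
    (f : Fin 3 → ↥Y → ℂ)
    (hpd : ∀ i, IsPosDefFn (f i)) (hnorm : ∀ i, f i 0 = 1)
    (heq : SDTEq (f 0) (f 1) (f 2))
    (t₁ t₂ : ↥Y) (ht : ∃ z : ↥Y, t₁ - t₂ = z + z) :
    ∀ σ : Equiv.Perm (Fin 3),
      ‖f (σ 0) t₁‖ * ‖f (σ 1) t₂‖ * ‖f (σ 2) t₂‖ =
        ‖f (σ 0) t₂‖ * ‖f (σ 1) t₁‖ * ‖f (σ 2) t₁‖ := by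
  obtain ⟨z, hz⟩ := ht
  have ht1 : t₁ = t₂ + z + z := by
    have := sub_eq_iff_eq_add.mp hz
    rw [this]; abel
  subst ht1
  have habs : ∀ (i : Fin 3) (u : ↥Y), ‖f i (-u)‖ = ‖f i u‖ := by
    intro i u
    rw [posdef_conj_neg (hpd i) u, Complex.norm_conj]
  set V : ↥Y → ℝ := fun u =>
    ‖f 0 u‖ * ‖f 1 u‖ * ‖f 2 u‖ with hV
  have hVneg : ∀ u : ↥Y, V (-u) = V u := by
    intro u; simp [hV, habs]
  have hV0 : V 0 = 1 := by simp [hV, hnorm]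
  have M : ∀ u₁ u₂ u₃ : ↥Y,
      ‖f 0 (u₁ + u₂ + u₃)‖ * ‖f 1 (u₁ - u₂ - u₃)‖ *
        ‖f 2 (u₁ + u₂ - u₃)‖ = V u₁ * V u₂ * V u₃ := by
    intro u₁ u₂ u₃
    have h := congrArg (‖·‖) (heq u₁ u₂ u₃)
    simp only [norm_mul] at h
    rw [habs 1 u₂, habs 1 u₃, habs 2 u₃] at h
    rw [h, hV]; ring
  set a : Fin 3 → ℝ := fun i => ‖f i (t₂ + z + z)‖ with ha
  set b : Fin 3 → ℝ := fun i => ‖f i t₂‖ with hb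
  have hE1 := M (t₂ + z) 0 z
  rw [show t₂ + z + 0 + z = t₂ + z + z by abel, show t₂ + z - 0 - z = t₂ by abel,
    show t₂ + z + 0 - z = t₂ by abel, hV0] at hE1
  have hE2 := M (t₂ + z) (-z) 0
  rw [show t₂ + z + -z + 0 = t₂ by abel, show t₂ + z - -z - 0 = t₂ + z + z by abel,
    show t₂ + z + -z - 0 = t₂ by abel, hVneg, hV0] at hE2
  have hE3 := M (t₂ + z) z 0
  rw [show t₂ + z + z + 0 = t₂ + z + z by abel, show t₂ + z - z - 0 = t₂ by abel,
    show t₂ + z + z - 0 = t₂ + z + z by abel, hV0] at hE3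
  have hE4 := M (t₂ + z) 0 (-z)
  rw [show t₂ + z + 0 + -z = t₂ by abel, show t₂ + z - 0 - -z = t₂ + z + z by abel,
    show t₂ + z + 0 - -z = t₂ + z + z by abel, hVneg, hV0] at hE4
  have hF1 := M t₂ z (-z)
  rw [show t₂ + z + -z = t₂ by abel, show t₂ - z - -z = t₂ by abel,
    show t₂ + z - -z = t₂ + z + z by abel, hVneg] at hF1
  have hF2 := M (t₂ + z + z) (-z) z
  rw [show t₂ + z + z + -z + z = t₂ + z + z by abel,
    show t₂ + z + z - -z - z = t₂ + z + z by abel,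
    show t₂ + z + z + -z - z = t₂ by abel, hVneg] at hF2
  have hR1 := M z t₂ z
  rw [show z + t₂ + z = t₂ + z + z by abel, show z - t₂ - z = -t₂ by abel,
    show z + t₂ - z = t₂ by abel, habs 1 t₂] at hR1
  have hR2 := M z (-z) (t₂ + z + z)
  rw [show z + -z + (t₂ + z + z) = t₂ + z + z by abel,
    show z - -z - (t₂ + z + z) = -t₂ by abel,
    show z + -z - (t₂ + z + z) = -(t₂ + z + z) by abel,
    habs 1 t₂, habs 2 (t₂ + z + z), hVneg] at hR2
  have G1 : a 0 * b 1 * b 2 = b 0 * a 1 * a 2 := by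
    simp only [ha, hb]; ring_nf at hE1 hE4 ⊢; linarith
  have G2 : a 1 * b 0 * b 2 = b 1 * a 0 * a 2 := by
    simp only [ha, hb]; ring_nf at hE2 hE3 ⊢; linarith
  have G3 : a 2 * b 0 * b 1 = b 2 * a 0 * a 1 := by
    simp only [ha, hb]; ring_nf at hF1 hF2 hR1 hR2 hE1 hE3 ⊢; linarith
  intro σ
  have hinj := σ.injective
  exact six_perm_cases G1 G2 G3 (σ 0) (σ 1) (σ 2)
    (fun h => by simpa using hinj h) (fun h => by simpa using hinj h)
    (fun h => by simpa using hinj h)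
end

section
/- Let Y be a subgroup of ℚ with 2Y ≠ Y, and let f_1, f_2, f_3 be normalized positive definite functions on Y satisfying equation (S-D T): f_1(u_1+u_2+u_3)·f_2(u_1−u_2−u_3)·f_3(u_1+u_2−u_3) = f_1(u_1)f_1(u_2)f_1(u_3)·f_2(u_1)f_2(−u_2)f_2(−u_3)·f_3(u_1)f_3(u_2)f_3(−u_3) for all u_1, u_2, u_3 ∈ Y. Put N_i = {y ∈ Y : f_i(y) ≠ 0} and N = N_1 ∩ N_2 ∩ N_3. If N ≠ {0}, then N_1 = N_2 = N_3 = N. -/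
lemma pd_conj {Y : Type*} [AddCommGroup Y] {f : Y → ℂ} (hpd : IsPosDefFn f)
    (hn : f 0 = 1) (u : Y) : f (-u) = (starRingEnd ℂ) (f u) := by
  have h1 := (hpd 2 ![u, 0] ![1, 1]).2
  have h2 := (hpd 2 ![u, 0] ![Complex.I, 1]).2
  simp [Fin.sum_univ_two, hn, sub_self, sub_zero, zero_sub] at h1 h2
  rw [Complex.ext_iff]
  constructor
  · simpa using by linarith
  · simpa using by linarith

lemma pd_normSq_le {Y : Type*} [AddCommGroup Y] {f : Y → ℂ} (hpd : IsPosDefFn f)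
    (hn : f 0 = 1) (u : Y) : Complex.normSq (f u) ≤ 1 := by
  have h1 := (hpd 2 ![u, 0] ![1, -(f u)]).1
  simp [Fin.sum_univ_two, hn, sub_self, sub_zero, zero_sub, pd_conj hpd hn] at h1
  rw [Complex.normSq_apply]
  linarith

lemma pd_mul {Y : Type*} [AddCommGroup Y] {f : Y → ℂ} (hpd : IsPosDefFn f)
    (hn : f 0 = 1) {x : Y} (hx : f x * (starRingEnd ℂ) (f x) = 1) (y : Y) :
    f (x + y) = f x * f y := by
  set A : ℂ := f (x + y) - f x * f y with hA
  have h := (hpd 3 ![0, x, x + y] ![1, -(starRingEnd ℂ) (f x), -(starRingEnd ℂ) A]).1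
  have e1 : (0:Y) - x = -x := by abel
  have e2 : (0:Y) - (x + y) = -(x+y) := by abel
  have e3 : x - (x + y) = -y := by abel
  have e4 : (x + y) - x = y := by abel
  have e5 : (x + y) - 0 = x + y := by abel
  have hS : (∑ i, ∑ j, f ((![0, x, x + y]) i - (![0, x, x + y]) j) *
      (![1, -(starRingEnd ℂ) (f x), -(starRingEnd ℂ) A]) i *
      (starRingEnd ℂ) ((![1, -(starRingEnd ℂ) (f x), -(starRingEnd ℂ) A]) j))
      = -(A * (starRingEnd ℂ) A) := by
    simp only [Fin.sum_univ_three, Matrix.cons_val_zero, Matrix.cons_val_one,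
      Matrix.head_cons, Matrix.cons_val_two, Matrix.tail_cons, sub_self, sub_zero,
      e1, e2, e3, e4, e5, hn, pd_conj hpd hn, hA, map_sub, map_mul, map_one,
      map_neg, Complex.conj_conj]
    ring_nf
    linear_combination (-(1:ℂ)) * hx
  rw [hS] at h
  have : A = 0 := by
    have := Complex.mul_conj A
    rw [this] at h
    simp at h
    exact Complex.normSq_eq_zero.mp (le_antisymm h (Complex.normSq_nonneg A))
  exact sub_eq_zero.mp this

lemma triple_eq_one {a b c : ℝ} (ha0 : 0 ≤ a) (hb0 : 0 ≤ b) (hc0 : 0 ≤ c)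
    (ha : a ≤ 1) (hb : b ≤ 1) (hc : c ≤ 1) (h : a * b * c = 1) :
    a = 1 ∧ b = 1 ∧ c = 1 := by
  refine ⟨?_, ?_, ?_⟩ <;>
    nlinarith [mul_nonneg ha0 hb0, mul_nonneg hb0 hc0, mul_nonneg ha0 hc0,
      mul_le_one₀ ha hb0 hb, mul_le_one₀ hb hc0 hc, mul_le_one₀ ha hc0 hc]

lemma rat_den_mul (a : ℚ) : (a.den : ℚ) * a = a.num := by
  have hd : (a.den : ℚ) ≠ 0 := Nat.cast_ne_zero.mpr a.den_nz
  have h := Rat.num_div_den a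
  rw [div_eq_iff hd] at h
  linear_combination -h

lemma rat_commens (a b : ℚ) :
    ((a.den * b.num : ℤ) : ℚ) * a = ((a.num * b.den : ℤ) : ℚ) * b := by
  push_cast
  calc (a.den : ℚ) * b.num * a = ((a.den:ℚ) * a) * b.num := by ring
    _ = (a.num : ℚ) * b.num := by rw [rat_den_mul]
    _ = (a.num : ℚ) * ((b.den:ℚ) * b) := by rw [rat_den_mul]
    _ = (a.num : ℚ) * b.den * b := by ring

/-- Let `Y` be a subgroup of `ℚ` with `2Y ≠ Y` and `f₁, f₂, f₃` normalized positive
definite functions on `Y` satisfying (S-D T). If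
`N = N₁ ∩ N₂ ∩ N₃ ≠ {0}`, where `Nᵢ = {y : fᵢ(y) ≠ 0}`, then `N₁ = N₂ = N₃ = N`. -/
theorem SDT_supports_coincide_of_N_ne_zero
    (Y : AddSubgroup ℚ)
    (h2Y : Y.map (AddMonoidHom.mulLeft (2 : ℚ)) ≠ Y)
    (f₁ f₂ f₃ : ↥Y → ℂ)
    (hpd₁ : IsPosDefFn f₁) (hpd₂ : IsPosDefFn f₂) (hpd₃ : IsPosDefFn f₃)
    (hn₁ : f₁ 0 = 1) (hn₂ : f₂ 0 = 1) (hn₃ : f₃ 0 = 1)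
    (heq : SDTEq f₁ f₂ f₃)
    (hN : {y : ↥Y | f₁ y ≠ 0} ∩ {y : ↥Y | f₂ y ≠ 0} ∩ {y : ↥Y | f₃ y ≠ 0} ≠ {0}) :
    {y : ↥Y | f₁ y ≠ 0} =
        {y : ↥Y | f₁ y ≠ 0} ∩ {y : ↥Y | f₂ y ≠ 0} ∩ {y : ↥Y | f₃ y ≠ 0} ∧
      {y : ↥Y | f₂ y ≠ 0} =
        {y : ↥Y | f₁ y ≠ 0} ∩ {y : ↥Y | f₂ y ≠ 0} ∩ {y : ↥Y | f₃ y ≠ 0} ∧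
      {y : ↥Y | f₃ y ≠ 0} =
        {y : ↥Y | f₁ y ≠ 0} ∩ {y : ↥Y | f₂ y ≠ 0} ∩ {y : ↥Y | f₃ y ≠ 0} := by
  classical
  set Nmem : ↥Y → Prop := fun u => f₁ u ≠ 0 ∧ f₂ u ≠ 0 ∧ f₃ u ≠ 0 with hNmem
  have conj_ne : ∀ z : ℂ, z ≠ 0 → (starRingEnd ℂ) z ≠ 0 := by
    intro z hz h
    apply hz
    simpa using congrArg (starRingEnd ℂ) h
  have hc₁ := pd_conj hpd₁ hn₁
  have hc₂ := pd_conj hpd₂ hn₂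
  have hc₃ := pd_conj hpd₃ hn₃
  have hNneg : ∀ u, Nmem u → Nmem (-u) := by
    rintro u ⟨h1, h2, h3⟩
    exact ⟨by rw [hc₁]; exact conj_ne _ h1, by rw [hc₂]; exact conj_ne _ h2,
      by rw [hc₃]; exact conj_ne _ h3⟩
  have hN0 : Nmem 0 := ⟨by rw [hn₁]; norm_num, by rw [hn₂]; norm_num, by rw [hn₃]; norm_num⟩
  -- equation instances
  have hA : ∀ u, f₁ (u+u) = f₁ u * f₁ u * (f₂ u * f₂ (-u)) * (f₃ u * f₃ (-u)) := by
    intro u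
    have h := heq u 0 u
    simp only [add_zero, sub_zero, sub_self, neg_zero, hn₁, hn₂, hn₃, one_mul, mul_one] at h
    linear_combination h
  have hB : ∀ u, f₂ (u+u) = f₁ u * f₁ (-u) * (f₂ u * f₂ u) * (f₃ u * f₃ (-u)) := by
    intro u
    have h := heq u (-u) 0
    have e1 : u + -u + 0 = (0 : ↥Y) := by abel
    have e2 : u - -u - 0 = u + u := by abel
    have e3 : u + -u - 0 = (0 : ↥Y) := by abel
    rw [e1, e2, e3, neg_neg, neg_zero, hn₁, hn₂, hn₃] at h
    linear_combination h
  have hC : ∀ u, f₃ (u+u) = f₁ u * f₁ (-u) * (f₂ u * f₂ (-u)) * (f₃ u * f₃ u) := by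
    intro u
    have h := heq 0 u (-u)
    have e1 : (0 : ↥Y) + u + -u = (0 : ↥Y) := by abel
    have e2 : (0 : ↥Y) - u - -u = (0 : ↥Y) := by abel
    have e3 : (0 : ↥Y) + u - -u = u + u := by abel
    rw [e1, e2, e3, neg_neg, hn₁, hn₂, hn₃] at h
    linear_combination h
  have hAdd : ∀ a b, f₁ (a+b) * f₂ (a-b) * f₃ (a+b)
      = f₁ a * f₁ b * (f₂ a * f₂ (-b)) * (f₃ a * f₃ b) := by
    intro a b
    have h := heq a b 0
    simp only [add_zero, sub_zero, neg_zero, hn₁, hn₂, hn₃, one_mul, mul_one] at h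
    linear_combination h
  have hUeq : ∀ u, f₁ u * f₂ u * f₃ (-u) =
      f₁ u * f₁ (-u) * f₁ u * (f₂ u * f₂ u * f₂ (-u)) * (f₃ u * f₃ (-u) * f₃ (-u)) := by
    intro u
    have h := heq u (-u) u
    have e1 : u + -u + u = u := by abel
    have e2 : u - -u - u = u := by abel
    have e3 : u + -u - u = -u := by abel
    rw [e1, e2, e3, neg_neg] at h
    linear_combination h
  -- unimodularity on N
  have hunit : ∀ u, Nmem u → Complex.normSq (f₁ u) = 1 ∧ Complex.normSq (f₂ u) = 1 ∧
      Complex.normSq (f₃ u) = 1 := by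
    rintro u ⟨h1, h2, h3⟩
    have h := hUeq u
    rw [hc₁ u, hc₂ u, hc₃ u] at h
    have h' : (f₁ u * f₂ u * (starRingEnd ℂ) (f₃ u)) *
        (f₁ u * (starRingEnd ℂ) (f₁ u) * (f₂ u * (starRingEnd ℂ) (f₂ u)) *
          (f₃ u * (starRingEnd ℂ) (f₃ u)))
        = (f₁ u * f₂ u * (starRingEnd ℂ) (f₃ u)) * 1 := by
      rw [mul_one]
      linear_combination -h
    have hP : f₁ u * f₂ u * (starRingEnd ℂ) (f₃ u) ≠ 0 :=
      mul_ne_zero (mul_ne_zero h1 h2) (conj_ne _ h3)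
    have hcm := mul_left_cancel₀ hP h'
    rw [Complex.mul_conj, Complex.mul_conj, Complex.mul_conj] at hcm
    have hr : Complex.normSq (f₁ u) * Complex.normSq (f₂ u) * Complex.normSq (f₃ u) = 1 := by
      exact_mod_cast hcm
    exact triple_eq_one (Complex.normSq_nonneg _) (Complex.normSq_nonneg _)
      (Complex.normSq_nonneg _) (pd_normSq_le hpd₁ hn₁ u) (pd_normSq_le hpd₂ hn₂ u)
      (pd_normSq_le hpd₃ hn₃ u) hr
  have hmul₁ : ∀ n, Nmem n → ∀ v, f₁ (n + v) = f₁ n * f₁ v := by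
    intro n hn v
    refine pd_mul hpd₁ hn₁ ?_ v
    rw [Complex.mul_conj, (hunit n hn).1, Complex.ofReal_one]
  have hmul₂ : ∀ n, Nmem n → ∀ v, f₂ (n + v) = f₂ n * f₂ v := by
    intro n hn v
    refine pd_mul hpd₂ hn₂ ?_ v
    rw [Complex.mul_conj, (hunit n hn).2.1, Complex.ofReal_one]
  have hmul₃ : ∀ n, Nmem n → ∀ v, f₃ (n + v) = f₃ n * f₃ v := by
    intro n hn v
    refine pd_mul hpd₃ hn₃ ?_ v
    rw [Complex.mul_conj, (hunit n hn).2.2, Complex.ofReal_one]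
  -- doubling descent
  have hdouble₁ : ∀ u, f₁ (u+u) ≠ 0 → Nmem u := by
    intro u h
    rw [hA u] at h
    simp only [mul_ne_zero_iff] at h
    exact ⟨h.1.1.1, h.1.2.1, h.2.1⟩
  have hdouble₂ : ∀ u, f₂ (u+u) ≠ 0 → Nmem u := by
    intro u h
    rw [hB u] at h
    simp only [mul_ne_zero_iff] at h
    exact ⟨h.1.1.1, h.1.2.1, h.2.1⟩
  have hdouble₃ : ∀ u, f₃ (u+u) ≠ 0 → Nmem u := by
    intro u h
    rw [hC u] at h
    simp only [mul_ne_zero_iff] at h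
    exact ⟨h.1.1.1, h.1.2.1, h.2.1⟩
  -- N is closed under addition
  have hNadd : ∀ a b, Nmem a → Nmem b → Nmem (a + b) := by
    intro a b ha hb
    have hnb := hNneg b hb
    have h1 : f₁ (a+b) * f₂ (a-b) * f₃ (a+b) ≠ 0 := by
      rw [hAdd a b]
      exact mul_ne_zero (mul_ne_zero (mul_ne_zero ha.1 hb.1)
        (mul_ne_zero ha.2.1 hnb.2.1)) (mul_ne_zero ha.2.2 hb.2.2)
    have h2 : f₁ (a + -b) * f₂ (a - -b) * f₃ (a + -b) ≠ 0 := by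
      rw [hAdd a (-b), neg_neg]
      exact mul_ne_zero (mul_ne_zero (mul_ne_zero ha.1 hnb.1)
        (mul_ne_zero ha.2.1 hb.2.1)) (mul_ne_zero ha.2.2 hnb.2.2)
    have e : a - -b = a + b := by abel
    rw [e] at h2
    simp only [mul_ne_zero_iff] at h1 h2
    exact ⟨h1.1.1, h2.1.2, h1.2⟩
  -- closed under integer multiples
  have hNzsmul : ∀ (k : ℤ) (n : ↥Y), Nmem n → Nmem (k • n) := by
    intro k n hn
    induction k using Int.induction_on with
    | zero => simpa using hN0
    | succ i ih =>
        have e : ((i : ℤ) + 1) • n = (i : ℤ) • n + n := by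
          rw [add_zsmul, one_zsmul]
        rw [e]
        exact hNadd _ _ ih hn
    | pred i ih =>
        have e : (-(i : ℤ) - 1) • n = (-(i:ℤ)) • n + (-n) := by
          rw [sub_zsmul, one_zsmul]
        rw [e]
        exact hNadd _ _ ih (hNneg _ hn)
  -- key descent step for each component
  have step : ∀ (g : ↥Y → ℂ), (∀ n, Nmem n → ∀ v, g (n + v) = g n * g v) →
      (∀ n, Nmem n → g n ≠ 0) → (∀ u, g (u+u) ≠ 0 → Nmem u) →
      ∀ (y : ↥Y) (r : ℕ), Nmem (((2*r+1 : ℕ) : ℤ) • y) → g y ≠ 0 → Nmem y := by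
    intro g gmul gne gdbl y r hqy hgy
    set z : ↥Y := ((r : ℤ) + 1) • y with hz
    have hzz : z + z = ((2*r+1 : ℕ) : ℤ) • y + y := by
      rw [hz]
      have : ((2*r+1 : ℕ) : ℤ) • y + y = ((2*r+1 : ℕ) : ℤ) • y + (1:ℤ) • y := by
        rw [one_zsmul]
      rw [this, ← add_zsmul, ← add_zsmul]
      congr 1
      push_cast
      ring
    have hg2 : g (z + z) ≠ 0 := by
      rw [hzz, gmul _ hqy y]
      exact mul_ne_zero (gne _ hqy) hgy
    have hzN : Nmem z := gdbl z hg2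
    have hz2N : Nmem (z + z) := hNadd _ _ hzN hzN
    have hyN : Nmem ((z + z) + -(((2*r+1 : ℕ) : ℤ) • y)) :=
      hNadd _ _ hz2N (hNneg _ hqy)
    have e : (z + z) + -(((2*r+1 : ℕ) : ℤ) • y) = y := by
      rw [hzz]; abel
    rwa [e] at hyN
  -- extract nonzero element of N
  have hex : ∃ n₀ : ↥Y, Nmem n₀ ∧ n₀ ≠ 0 := by
    by_contra hcon
    push_neg at hcon
    apply hN
    ext x
    simp only [Set.mem_inter_iff, Set.mem_setOf_eq, Set.mem_singleton_iff]
    constructor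
    · rintro ⟨⟨hx1, hx2⟩, hx3⟩
      exact hcon x ⟨hx1, hx2, hx3⟩
    · rintro rfl
      exact ⟨⟨hN0.1, hN0.2.1⟩, hN0.2.2⟩
  obtain ⟨n₀, hn₀N, hn₀ne⟩ := hex
  -- every nonzero y has a positive multiple in N
  have hmult : ∀ y : ↥Y, y ≠ 0 → ∃ m : ℕ, 0 < m ∧ Nmem (((m : ℕ) : ℤ) • y) := by
    intro y hy0
    have hb0 : ((n₀ : ℚ)) ≠ 0 := by
      intro h
      exact hn₀ne (by ext; simpa using h)
    set M : ℤ := ((y : ℚ).den : ℤ) * (n₀ : ℚ).num with hM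
    set K : ℤ := (y : ℚ).num * ((n₀ : ℚ).den : ℤ) with hK
    have hMK : M • y = K • n₀ := by
      have := rat_commens (y : ℚ) (n₀ : ℚ)
      ext
      push_cast
      rw [zsmul_eq_mul, zsmul_eq_mul, hM, hK]
      push_cast at this ⊢
      linear_combination this
    have hM0 : M ≠ 0 := by
      simp only [hM, mul_ne_zero_iff]
      exact ⟨Int.natCast_ne_zero.mpr (y : ℚ).den_nz, Rat.num_ne_zero.mpr hb0⟩
    refine ⟨M.natAbs, Int.natAbs_pos.mpr hM0, ?_⟩
    rcases Int.natAbs_eq M with he | he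
    · rw [← he, hMK]; exact hNzsmul _ _ hn₀N
    · have : ((M.natAbs : ℤ)) • y = -(M • y) := by
        rw [← neg_zsmul]
        congr 1
        omega
      rw [this, hMK]
      exact hNneg _ (hNzsmul _ _ hn₀N)
  -- reduce to odd multiple
  have hoddred : ∀ (y : ↥Y) (m : ℕ), 0 < m → Nmem (((m : ℕ) : ℤ) • y) →
      ∃ r : ℕ, Nmem (((2*r+1 : ℕ) : ℤ) • y) := by
    intro y m
    induction m using Nat.strong_induction_on with
    | _ m ih =>
      intro hm hNm
      rcases Nat.even_or_odd m with ⟨t, ht⟩ | ⟨r, hr⟩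
      · have ht0 : 0 < t := by omega
        have e : ((m : ℕ) : ℤ) • y = ((t : ℕ) : ℤ) • y + ((t : ℕ) : ℤ) • y := by
          rw [← add_zsmul]
          congr 1
          omega
        rw [e] at hNm
        have := hdouble₁ _ hNm.1
        exact ih t (by omega) ht0 this
      · exact ⟨r, by rw [← hr] at *; exact hNm⟩
  -- the key claim
  have key : ∀ y : ↥Y, (f₁ y ≠ 0 ∨ f₂ y ≠ 0 ∨ f₃ y ≠ 0) → Nmem y := by
    intro y hy
    by_cases hy0 : y = 0
    · rw [hy0]; exact hN0
    obtain ⟨m, hm0, hmN⟩ := hmult y hy0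
    obtain ⟨r, hrN⟩ := hoddred y m hm0 hmN
    rcases hy with h | h | h
    · exact step f₁ hmul₁ (fun n hn => hn.1) hdouble₁ y r hrN h
    · exact step f₂ hmul₂ (fun n hn => hn.2.1) hdouble₂ y r hrN h
    · exact step f₃ hmul₃ (fun n hn => hn.2.2) hdouble₃ y r hrN h
  -- conclude
  have memiff : ∀ x : ↥Y, x ∈ ({y : ↥Y | f₁ y ≠ 0} ∩ {y : ↥Y | f₂ y ≠ 0} ∩ {y : ↥Y | f₃ y ≠ 0})
      ↔ Nmem x := by
    intro x
    simp only [Set.mem_inter_iff, Set.mem_setOf_eq, hNmem]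
    tauto
  refine ⟨?_, ?_, ?_⟩ <;> ext x <;> rw [memiff x] <;>
    simp only [Set.mem_setOf_eq] <;>
    exact ⟨fun h => key x (by tauto), fun h => by tauto⟩
end
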